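/- arXiv:1308.5459 — 7 statements merged into one kernel-verified Lean document; each statement's English description precedes it below -/
import Mathlib

section
/- For a uniformly random permutation Π of [n], the random set S_n = {k ∈ [n-1] : Π(k+1) = Π(k) + 1} has the same distribution as the random set T_n = {k ∈ [n-1] : Π(k) = k} of fixed points of Π lying in [n-1]. -/
/-- The successor `k+1 mod n`, taking values in `Fin n`. -/
def cyclicSucc {n : ℕ} (j : Fin n) : Fin n := ⟨((j : ℕ) + 1) % n, Nat.mod_lt _ j.pos⟩

open Finset Equiv

set_option linter.unusedSectionVars false

namespace SuccAux

variable {n : ℕ} {A : Finset (Fin n)}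

theorem hmE (A : Finset (Fin n)) : (Aᶜ : Finset (Fin n)).card = n - A.card := by
  rw [Finset.card_compl]; simp

section
variable (hA : ∀ k ∈ A, (k : ℕ) + 1 < n)
include hA

theorem lastmem (p : Fin n) : (⟨n - 1, by have := p.pos; omega⟩ : Fin n) ∈ Aᶜ := by
  rw [Finset.mem_compl]
  intro h
  have := hA _ h
  simp at this
  omega

theorem filter_ne (p : Fin n) : (Aᶜ.filter (fun q => p ≤ q)).Nonempty :=
  ⟨⟨n - 1, by have := p.pos; omega⟩, Finset.mem_filter.mpr ⟨lastmem hA p,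
    by rw [Fin.le_def]; exact Nat.le_sub_one_of_lt p.2⟩⟩

def eps (p : Fin n) : Fin n := (Aᶜ.filter (fun q => p ≤ q)).min' (filter_ne hA p)

theorem eps_mem (p : Fin n) : eps hA p ∈ Aᶜ :=
  (Finset.mem_filter.mp ((Aᶜ.filter (fun q => p ≤ q)).min'_mem (filter_ne hA p))).1

theorem le_eps (p : Fin n) : p ≤ eps hA p :=
  (Finset.mem_filter.mp ((Aᶜ.filter (fun q => p ≤ q)).min'_mem (filter_ne hA p))).2

theorem eps_le {p q : Fin n} (hq : q ∈ Aᶜ) (hpq : p ≤ q) : eps hA p ≤ q :=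
  Finset.min'_le _ _ (Finset.mem_filter.mpr ⟨hq, hpq⟩)

theorem eps_eq_self {p : Fin n} (hp : p ∈ Aᶜ) : eps hA p = p :=
  le_antisymm (eps_le hA hp le_rfl) (le_eps hA p)

theorem eps_mono {p q : Fin n} (h : p ≤ q) : eps hA p ≤ eps hA q :=
  eps_le hA (eps_mem hA q) (le_trans h (le_eps hA q))

theorem eps_between {p q : Fin n} (h1 : p ≤ q) (h2 : q ≤ eps hA p) :
    eps hA q = eps hA p :=
  le_antisymm (eps_le hA (eps_mem hA p) h2) (eps_mono hA h1)

theorem eps_succ {k : Fin n} (hk : k ∈ A) :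
    eps hA ⟨(k : ℕ) + 1, hA k hk⟩ = eps hA k := by
  apply eps_between hA
  · rw [Fin.le_def]; simp
  · have h1 := le_eps hA k
    have h2 : eps hA k ≠ k := by
      intro h
      have := eps_mem hA k
      rw [h, Finset.mem_compl] at this
      exact this hk
    rw [Fin.le_def]
    rw [Fin.le_def] at h1
    have : (k : ℕ) ≠ (eps hA k : ℕ) := fun h => h2 (Fin.ext h.symm)
    simp; omega

def eb (A : Finset (Fin n)) (i : Fin (n - A.card)) : Fin n := Aᶜ.orderEmbOfFin (hmE A) i

theorem eb_mem (i : Fin (n - A.card)) : eb A i ∈ Aᶜ := Finset.orderEmbOfFin_mem _ _ _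

theorem eb_inj : Function.Injective (eb A) := (Aᶜ.orderEmbOfFin (hmE A)).injective

theorem eb_le_iff {i j : Fin (n - A.card)} : eb A i ≤ eb A j ↔ i ≤ j :=
  (Aᶜ.orderEmbOfFin (hmE A)).le_iff_le

def idx (p : Fin n) : Fin (n - A.card) :=
  (Aᶜ.orderIsoOfFin (hmE A)).symm ⟨eps hA p, eps_mem hA p⟩

theorem eb_idx (p : Fin n) : eb A (idx hA p) = eps hA p := by
  have := (Aᶜ.orderIsoOfFin (hmE A)).apply_symm_apply ⟨eps hA p, eps_mem hA p⟩
  have := congrArg Subtype.val this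
  exact this

theorem idx_eq_iff {p : Fin n} {j : Fin (n - A.card)} :
    idx hA p = j ↔ eps hA p = eb A j := by
  constructor
  · rintro rfl; exact (eb_idx hA p).symm
  · intro h
    apply (Aᶜ.orderIsoOfFin (hmE A)).injective
    simp only [idx, OrderIso.apply_symm_apply]
    exact Subtype.ext h

theorem idx_eb (i : Fin (n - A.card)) : idx hA (eb A i) = i :=
  (idx_eq_iff hA).mpr (by rw [eps_eq_self hA (eb_mem hA i)])

def Bl (j : Fin (n - A.card)) : Finset (Fin n) := univ.filter (fun p => idx hA p = j)

def Lb (j : Fin (n - A.card)) : ℕ := (Bl hA j).card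

theorem eb_mem_Bl (j : Fin (n - A.card)) : eb A j ∈ Bl hA j :=
  Finset.mem_filter.mpr ⟨mem_univ _, idx_eb hA j⟩

theorem Lb_pos (j : Fin (n - A.card)) : 1 ≤ Lb hA j :=
  Finset.card_pos.mpr ⟨eb A j, eb_mem_Bl hA j⟩

theorem sum_Lb : ∑ j, Lb hA j = n := by
  have : (univ : Finset (Fin n)).card = ∑ j, Lb hA j := by
    apply Finset.card_eq_sum_card_fiberwise (f := idx hA) (t := univ)
    intro x _; exact mem_univ _
  rw [← this]; simp

theorem mem_Bl_of_between {p q : Fin n} {j : Fin (n - A.card)} (hp : idx hA p = j)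
    (h1 : p ≤ q) (h2 : q ≤ eb A j) : idx hA q = j := by
  rw [idx_eq_iff] at hp ⊢
  rw [← hp]
  apply eps_between hA h1
  rw [hp]; exact h2

theorem blocklen {p : Fin n} : ((eps hA p : ℕ) - (p : ℕ)) + 1 ≤ Lb hA (idx hA p) := by
  have hsub : Finset.Icc p (eps hA p) ⊆ Bl hA (idx hA p) := by
    intro q hq
    rw [Finset.mem_Icc] at hq
    apply Finset.mem_filter.mpr
    refine ⟨mem_univ _, mem_Bl_of_between hA rfl hq.1 ?_⟩
    rw [eb_idx]; exact hq.2
  have := Finset.card_le_card hsub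
  rw [Fin.card_Icc] at this
  have hle := le_eps hA p
  rw [Fin.le_def] at hle
  unfold Lb
  omega

theorem pi_eps (π : Perm (Fin n))
    (hs : ∀ k ∈ A, ((π (cyclicSucc k) : ℕ) = (π k : ℕ) + 1)) (p : Fin n) :
    (π (eps hA p) : ℕ) = (π p : ℕ) + ((eps hA p : ℕ) - (p : ℕ)) := by
  have H : ∀ d : ℕ, ∀ p : Fin n, (eps hA p : ℕ) - (p : ℕ) = d →
      (π (eps hA p) : ℕ) = (π p : ℕ) + ((eps hA p : ℕ) - (p : ℕ)) := by
    intro d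
    induction d with
    | zero =>
      intro p hp
      have h1 := le_eps hA p
      rw [Fin.le_def] at h1
      have : eps hA p = p := Fin.ext (by omega)
      rw [this]; omega
    | succ d ihd =>
      intro p hp
      have hpA : p ∈ A := by
        by_contra h
        rw [eps_eq_self hA (Finset.mem_compl.mpr h)] at hp
        omega
      have hp1 : (p : ℕ) + 1 < n := hA p hpA
      set p' : Fin n := ⟨(p : ℕ) + 1, hp1⟩ with hp'
      have hcyc : cyclicSucc p = p' := by
        apply Fin.ext
        simp [cyclicSucc, Nat.mod_eq_of_lt hp1, hp']
      have hsucc : (π p' : ℕ) = (π p : ℕ) + 1 := by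
        rw [← hcyc]; exact hs p hpA
      have hE : eps hA p' = eps hA p := eps_succ hA hpA
      have h1 := le_eps hA p
      rw [Fin.le_def] at h1
      have hd : (eps hA p' : ℕ) - (p' : ℕ) = d := by
        rw [hE]; simp only [hp']; omega
      have := ihd p' hd
      rw [hE] at this
      omega
  exact H _ p rfl

def Wf (τ : Perm (Fin (n - A.card))) (s : Fin (n - A.card)) : ℕ :=
  ∑ j ∈ univ.filter (fun j => τ j ≤ s), Lb hA j

theorem Wf_le (τ : Perm (Fin (n - A.card))) (s : Fin (n - A.card)) : Wf hA τ s ≤ n := by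
  exact le_trans (Finset.sum_le_sum_of_subset (Finset.subset_univ _)) (le_of_eq (sum_Lb hA))

theorem Lb_le_Wf (τ : Perm (Fin (n - A.card))) (i : Fin (n - A.card)) :
    Lb hA i ≤ Wf hA τ (τ i) :=
  Finset.single_le_sum (fun j _ => Nat.zero_le _)
    (Finset.mem_filter.mpr ⟨mem_univ _, le_rfl⟩)

theorem Wf_add_le (τ : Perm (Fin (n - A.card))) {s : Fin (n - A.card)}
    {i' : Fin (n - A.card)} (h : s < τ i') :
    Wf hA τ s + Lb hA i' ≤ Wf hA τ (τ i') := by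
  have hni : i' ∉ univ.filter (fun j => τ j ≤ s) := by
    simp only [Finset.mem_filter, mem_univ, true_and]
    exact fun hc => absurd h (not_lt.mpr hc)
  have hsub : insert i' (univ.filter (fun j => τ j ≤ s)) ⊆
      univ.filter (fun j => τ j ≤ τ i') := by
    intro j hj
    rcases Finset.mem_insert.mp hj with rfl | hj
    · exact Finset.mem_filter.mpr ⟨mem_univ _, le_rfl⟩
    · exact Finset.mem_filter.mpr ⟨mem_univ _, le_trans (Finset.mem_filter.mp hj).2 h.le⟩
  calc Wf hA τ s + Lb hA i' = ∑ j ∈ insert i' (univ.filter (fun j => τ j ≤ s)), Lb hA j := by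
        rw [Finset.sum_insert hni, Wf, Nat.add_comm]
    _ ≤ Wf hA τ (τ i') := Finset.sum_le_sum_of_subset hsub

theorem Wf_lt (τ : Perm (Fin (n - A.card))) {s s' : Fin (n - A.card)} (h : s < s') :
    Wf hA τ s < Wf hA τ s' := by
  have h2 : s < τ (τ.symm s') := by rwa [Equiv.apply_symm_apply]
  have h3 := Wf_add_le hA τ h2
  have h4 := Lb_pos hA (τ.symm s')
  rw [Equiv.apply_symm_apply] at h3
  omega

def PsiFun (τ : Perm (Fin (n - A.card))) (p : Fin n) : Fin n :=
  ⟨Wf hA τ (τ (idx hA p)) - 1 - ((eps hA p : ℕ) - (p : ℕ)), by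
    have h1 := Wf_le hA τ (τ (idx hA p))
    have h2 := Lb_pos hA (idx hA p)
    have h3 := Lb_le_Wf hA τ (idx hA p)
    have := p.pos
    omega⟩

theorem psiFun_val (τ : Perm (Fin (n - A.card))) (p : Fin n) :
    (PsiFun hA τ p : ℕ) = Wf hA τ (τ (idx hA p)) - 1 - ((eps hA p : ℕ) - (p : ℕ)) := rfl

theorem dist_le {p : Fin n} : ((eps hA p : ℕ) - (p : ℕ)) + 1 ≤ Lb hA (idx hA p) := by
  have := blocklen hA (p := p)
  omega

theorem psi_inj (τ : Perm (Fin (n - A.card))) : Function.Injective (PsiFun hA τ) := by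
  intro p q h
  have hv : (Wf hA τ (τ (idx hA p)) - 1 - ((eps hA p : ℕ) - (p : ℕ)))
      = (Wf hA τ (τ (idx hA q)) - 1 - ((eps hA q : ℕ) - (q : ℕ))) := by
    have := congrArg Fin.val h
    rwa [psiFun_val, psiFun_val] at this
  have hdp := dist_le hA (p := p)
  have hdq := dist_le hA (p := q)
  have hLWp := Lb_le_Wf hA τ (idx hA p)
  have hLWq := Lb_le_Wf hA τ (idx hA q)
  have hLp := Lb_pos hA (idx hA p)
  have hLq := Lb_pos hA (idx hA q)
  have heq : τ (idx hA p) = τ (idx hA q) := by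
    rcases lt_trichotomy (τ (idx hA p)) (τ (idx hA q)) with hlt | heq | hgt
    · have := Wf_add_le hA τ hlt
      omega
    · exact heq
    · have := Wf_add_le hA τ hgt
      omega
  have hidx : idx hA p = idx hA q := τ.injective heq
  have hepseq : (eps hA p : ℕ) = (eps hA q : ℕ) := by
    have h1 : eb A (idx hA p) = eps hA p := eb_idx hA p
    have h2 : eb A (idx hA q) = eps hA q := eb_idx hA q
    rw [← h1, ← h2, hidx]
  have hlp := le_eps hA p
  have hlq := le_eps hA q
  rw [Fin.le_def] at hlp hlq
  rw [hidx] at hv hdp hLWp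
  apply Fin.ext
  omega

noncomputable def Psi (τ : Perm (Fin (n - A.card))) : Perm (Fin n) :=
  Equiv.ofBijective _ ((Finite.injective_iff_bijective).mp (psi_inj hA τ))

theorem psi_apply (τ : Perm (Fin (n - A.card))) (p : Fin n) :
    Psi hA τ p = PsiFun hA τ p := rfl

theorem psi_succ (τ : Perm (Fin (n - A.card))) {k : Fin n} (hk : k ∈ A) :
    ((Psi hA τ (cyclicSucc k) : ℕ) = (Psi hA τ k : ℕ) + 1) := by
  have hk1 : (k : ℕ) + 1 < n := hA k hk
  set k' : Fin n := ⟨(k : ℕ) + 1, hk1⟩ with hk'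
  have hcyc : cyclicSucc k = k' := Fin.ext (by simp [cyclicSucc, Nat.mod_eq_of_lt hk1, hk'])
  have hE : eps hA k' = eps hA k := eps_succ hA hk
  have hidx : idx hA k' = idx hA k := by
    rw [idx_eq_iff hA, hE, eb_idx]
  have hne : (eps hA k : ℕ) ≠ (k : ℕ) := by
    intro hc
    have := eps_mem hA k
    rw [Finset.mem_compl, show eps hA k = k from Fin.ext hc] at this
    exact this hk
  have hlk := le_eps hA k
  rw [Fin.le_def] at hlk
  have hd := dist_le hA (p := k)
  have hLW := Lb_le_Wf hA τ (idx hA k)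
  rw [hcyc]
  show (PsiFun hA τ k' : ℕ) = (PsiFun hA τ k : ℕ) + 1
  rw [psiFun_val, psiFun_val, hidx, hE]
  simp only [hk']
  omega

theorem psi_eb (τ : Perm (Fin (n - A.card))) (i : Fin (n - A.card)) :
    (Psi hA τ (eb A i) : ℕ) = Wf hA τ (τ i) - 1 := by
  show (PsiFun hA τ (eb A i) : ℕ) = _
  rw [psiFun_val, eps_eq_self hA (eb_mem hA i), idx_eb hA]
  omega

theorem cardV (π : Perm (Fin n)) : (Aᶜ.image ⇑π).card = n - A.card := by
  rw [Finset.card_image_of_injective _ π.injective, hmE]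

def rk (π : Perm (Fin n)) (i : Fin (n - A.card)) : Fin (n - A.card) :=
  ((Aᶜ.image ⇑π).orderIsoOfFin (cardV hA π)).symm
    ⟨π (eb A i), Finset.mem_image_of_mem _ (eb_mem hA i)⟩

theorem rk_le_iff (π : Perm (Fin n)) {i j : Fin (n - A.card)} :
    rk hA π i ≤ rk hA π j ↔ π (eb A i) ≤ π (eb A j) := by
  unfold rk
  rw [OrderIso.le_iff_le]
  exact Subtype.mk_le_mk

theorem rk_inj (π : Perm (Fin n)) : Function.Injective (rk hA π) := by
  intro i j h
  unfold rk at h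
  have := ((Aᶜ.image ⇑π).orderIsoOfFin (cardV hA π)).symm.injective h
  have := congrArg Subtype.val this
  exact eb_inj hA (π.injective (by exact this))

noncomputable def rkPerm (π : Perm (Fin n)) : Perm (Fin (n - A.card)) :=
  Equiv.ofBijective _ ((Finite.injective_iff_bijective).mp (rk_inj hA π))

theorem rkPerm_apply (π : Perm (Fin n)) (i : Fin (n - A.card)) :
    rkPerm hA π i = rk hA π i := rfl

theorem Bl_disj {j j' : Fin (n - A.card)} (h : j ≠ j') :
    Disjoint (Bl hA j) (Bl hA j') := by
  rw [Finset.disjoint_left]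
  intro p hp hp'
  exact h (((Finset.mem_filter.mp hp).2).symm.trans ((Finset.mem_filter.mp hp').2))

theorem keyW (π : Perm (Fin n))
    (hs : ∀ k ∈ A, ((π (cyclicSucc k) : ℕ) = (π k : ℕ) + 1)) (i : Fin (n - A.card)) :
    (π (eb A i) : ℕ) + 1
      = ∑ j ∈ univ.filter (fun j => π (eb A j) ≤ π (eb A i)), Lb hA j := by
  have hset : Finset.Iic (π (eb A i)) =
      (univ.filter (fun j => π (eb A j) ≤ π (eb A i))).biUnion
        (fun j => (Bl hA j).image ⇑π) := by
    ext v
    simp only [Finset.mem_Iic, Finset.mem_biUnion, Finset.mem_filter, mem_univ, true_and]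
    constructor
    · intro hv
      set p := π.symm v with hpdef
      have hπp : π p = v := π.apply_symm_apply v
      set j := idx hA p with hjdef
      have heps : eps hA p = eb A j := (eb_idx hA p).symm
      have hpe := pi_eps hA π hs p
      rw [heps] at hpe
      have hple : (p : ℕ) ≤ (eb A j : ℕ) := by
        have := le_eps hA p
        rw [heps] at this
        exact this
      have hvv : (v : ℕ) ≤ (π (eb A i) : ℕ) := hv
      have hπpv : (π p : ℕ) = (v : ℕ) := congrArg Fin.val hπp
      refine ⟨j, ?_, Finset.mem_image.mpr ⟨p, Finset.mem_filter.mpr ⟨mem_univ _, rfl⟩, hπp⟩⟩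
      by_contra hji
      rw [Fin.le_def, not_le] at hji
      have hq : (p : ℕ) + ((π (eb A i) : ℕ) - (π p : ℕ)) < n := by
        have := (eb A j).isLt
        omega
      set q : Fin n := ⟨(p : ℕ) + ((π (eb A i) : ℕ) - (π p : ℕ)), hq⟩ with hqdef
      have hq_le : q ≤ eb A j := by
        rw [Fin.le_def]
        show (p : ℕ) + ((π (eb A i) : ℕ) - (π p : ℕ)) ≤ (eb A j : ℕ)
        omega
      have hp_le_q : p ≤ q := by
        rw [Fin.le_def]
        exact Nat.le_add_right _ _
      have hidxq : idx hA q = j := mem_Bl_of_between hA rfl hp_le_q hq_le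
      have hepsq : eps hA q = eb A j := by
        have := eb_idx hA q
        rw [hidxq] at this
        exact this.symm
      have hpeq := pi_eps hA π hs q
      rw [hepsq] at hpeq
      have hqval : (q : ℕ) = (p : ℕ) + ((π (eb A i) : ℕ) - (π p : ℕ)) := rfl
      have hπq : (π q : ℕ) = (π (eb A i) : ℕ) := by omega
      have hqeb : q = eb A i := π.injective (Fin.ext hπq)
      rw [hqeb, idx_eb hA] at hidxq
      rw [← hidxq] at hji
      omega
    · rintro ⟨j, hj, hv⟩
      obtain ⟨p, hp, rfl⟩ := Finset.mem_image.mp hv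
      have hidxp : idx hA p = j := (Finset.mem_filter.mp hp).2
      have heps : eps hA p = eb A j := by
        have := eb_idx hA p
        rw [hidxp] at this
        exact this.symm
      have hpe := pi_eps hA π hs p
      rw [heps] at hpe
      have hj' : (π (eb A j) : ℕ) ≤ (π (eb A i) : ℕ) := hj
      show (π p : ℕ) ≤ (π (eb A i) : ℕ)
      omega
  have hcard := congrArg Finset.card hset
  rw [Fin.card_Iic, Finset.card_biUnion (fun j _ j' _ h =>
    (Finset.disjoint_image π.injective).mpr (Bl_disj hA h))] at hcard
  · rw [hcard]
    exact Finset.sum_congr rfl (fun j _ => Finset.card_image_of_injective _ π.injective)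

theorem keyW2 (π : Perm (Fin n))
    (hs : ∀ k ∈ A, ((π (cyclicSucc k) : ℕ) = (π k : ℕ) + 1)) (i : Fin (n - A.card)) :
    (π (eb A i) : ℕ) + 1 = Wf hA (rkPerm hA π) (rkPerm hA π i) := by
  rw [keyW hA π hs i, Wf]
  apply Finset.sum_congr _ (fun _ _ => rfl)
  apply Finset.filter_congr
  intro j _
  simp only [rkPerm_apply, eq_iff_iff]
  exact (rk_le_iff hA π).symm

theorem psi_surj (π : Perm (Fin n))
    (hs : ∀ k ∈ A, ((π (cyclicSucc k) : ℕ) = (π k : ℕ) + 1)) :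
    Psi hA (rkPerm hA π) = π := by
  apply Equiv.ext
  intro p
  apply Fin.ext
  rw [psi_apply, psiFun_val]
  have h1 := pi_eps hA π hs p
  have h2 := keyW2 hA π hs (idx hA p)
  have heps : eps hA p = eb A (idx hA p) := (eb_idx hA p).symm
  rw [← heps] at h2
  have h3 := le_eps hA p
  rw [Fin.le_def] at h3
  omega

theorem rk_psi (τ : Perm (Fin (n - A.card))) (i : Fin (n - A.card)) :
    rk hA (Psi hA τ) i = τ i := by
  have hval : ∀ s : Fin (n - A.card),
      ((Psi hA τ (eb A (τ.symm s)) : ℕ)) = Wf hA τ s - 1 := by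
    intro s
    have := psi_eb hA τ (τ.symm s)
    rwa [Equiv.apply_symm_apply] at this
  have hWpos : ∀ s : Fin (n - A.card), 1 ≤ Wf hA τ s := by
    intro s
    have h1 := Lb_le_Wf hA τ (τ.symm s)
    have h2 := Lb_pos hA (τ.symm s)
    rw [Equiv.apply_symm_apply] at h1
    omega
  have hmono : StrictMono (fun s : Fin (n - A.card) => Psi hA τ (eb A (τ.symm s))) := by
    intro s s' h
    have hw := Wf_lt hA τ h
    rw [Fin.lt_def, hval s, hval s']
    have := hWpos s
    omega
  have hfs : ∀ s, (fun s : Fin (n - A.card) => Psi hA τ (eb A (τ.symm s))) s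
      ∈ Aᶜ.image ⇑(Psi hA τ) :=
    fun s => Finset.mem_image_of_mem _ (eb_mem hA _)
  have huniq := Finset.orderEmbOfFin_unique (cardV hA (Psi hA τ)) hfs hmono
  unfold rk
  apply ((Aᶜ.image ⇑(Psi hA τ)).orderIsoOfFin (cardV hA (Psi hA τ))).injective
  rw [OrderIso.apply_symm_apply]
  apply Subtype.ext
  have : ((Aᶜ.image ⇑(Psi hA τ)).orderIsoOfFin (cardV hA (Psi hA τ)) (τ i) : Fin n)
      = (Aᶜ.image ⇑(Psi hA τ)).orderEmbOfFin (cardV hA (Psi hA τ)) (τ i) := rfl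
  rw [this, ← huniq]
  simp only [Equiv.symm_apply_apply]

theorem psi_injective : Function.Injective (Psi hA) := by
  intro τ τ' h
  apply Equiv.ext
  intro i
  rw [← rk_psi hA τ i, ← rk_psi hA τ' i, h]

theorem scount_aux :
    (univ.filter (fun π : Perm (Fin n) =>
      ∀ k ∈ A, ((π (cyclicSucc k) : ℕ) = (π k : ℕ) + 1))).card
      = Nat.factorial (n - A.card) := by
  have himg : univ.filter (fun π : Perm (Fin n) =>
      ∀ k ∈ A, ((π (cyclicSucc k) : ℕ) = (π k : ℕ) + 1))
      = Finset.image (Psi hA) univ := by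
    ext π
    simp only [Finset.mem_filter, mem_univ, true_and, Finset.mem_image]
    constructor
    · intro hs
      exact ⟨rkPerm hA π, psi_surj hA π hs⟩
    · rintro ⟨τ, _, rfl⟩
      intro k hk
      exact psi_succ hA τ hk
  rw [himg, Finset.card_image_of_injective _ (psi_injective hA), card_univ,
    Fintype.card_perm, Fintype.card_fin]

end

end SuccAux


namespace Skel

variable {n : ℕ}

def Sset (π : Perm (Fin n)) : Finset (Fin n) :=
  univ.filter (fun k : Fin n => (k : ℕ) + 1 < n ∧ ((π (cyclicSucc k) : ℕ) = (π k : ℕ) + 1))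

def Tset (π : Perm (Fin n)) : Finset (Fin n) :=
  univ.filter (fun k : Fin n => (k : ℕ) + 1 < n ∧ π k = k)

theorem scount (A : Finset (Fin n)) (hA : ∀ k ∈ A, (k : ℕ) + 1 < n) :
    (univ.filter (fun π : Perm (Fin n) =>
      ∀ k ∈ A, ((π (cyclicSucc k) : ℕ) = (π k : ℕ) + 1))).card
      = Nat.factorial (n - A.card) := SuccAux.scount_aux hA

theorem tcount (A : Finset (Fin n)) :
    (univ.filter (fun π : Perm (Fin n) => ∀ k ∈ A, π k = k)).card
      = Nat.factorial (n - A.card) := by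
  rw [← Fintype.card_subtype]
  have e : Perm {x : Fin n // x ∉ A} ≃ {π : Perm (Fin n) // ∀ k ∈ A, π k = k} :=
    (Equiv.Perm.subtypeEquivSubtypePerm (fun x => x ∉ A)).trans
      (Equiv.subtypeEquiv (Equiv.refl _) (by
        intro f
        simp only [Equiv.refl_apply]
        constructor
        · intro h k hk; exact h k (by simpa using hk)
        · intro h a ha; exact h a (by simpa using ha)))
  rw [← Fintype.card_congr e, Fintype.card_perm]
  congr 1
  rw [Fintype.card_subtype_compl]
  simp

theorem superS (A : Finset (Fin n)) :
    (univ.filter (fun π : Perm (Fin n) => A ⊆ Sset π)).card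
      = (univ.filter (fun π : Perm (Fin n) => A ⊆ Tset π)).card := by
  by_cases hA : ∀ k ∈ A, (k : ℕ) + 1 < n
  · have h1 : (univ.filter (fun π : Perm (Fin n) => A ⊆ Sset π)) =
        (univ.filter (fun π : Perm (Fin n) =>
          ∀ k ∈ A, ((π (cyclicSucc k) : ℕ) = (π k : ℕ) + 1))) := by
      apply filter_congr
      intro π _
      constructor
      · intro h k hk; exact ((mem_filter.mp (h hk)).2).2
      · intro h k hk
        exact mem_filter.mpr ⟨mem_univ _, hA k hk, h k hk⟩
    have h2 : (univ.filter (fun π : Perm (Fin n) => A ⊆ Tset π)) =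
        (univ.filter (fun π : Perm (Fin n) => ∀ k ∈ A, π k = k)) := by
      apply filter_congr
      intro π _
      constructor
      · intro h k hk; exact ((mem_filter.mp (h hk)).2).2
      · intro h k hk
        exact mem_filter.mpr ⟨mem_univ _, hA k hk, h k hk⟩
    rw [h1, h2, scount A hA, tcount A]
  · push_neg at hA
    obtain ⟨k, hk, hk2⟩ := hA
    have h1 : ∀ (U : Perm (Fin n) → Finset (Fin n)),
        (∀ π j, j ∈ U π → (j : ℕ) + 1 < n) →
        (univ.filter (fun π : Perm (Fin n) => A ⊆ U π)) = ∅ := by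
      intro U hU
      apply filter_eq_empty_iff.mpr
      intro π _ h
      have := hU π k (h hk); omega
    rw [h1 _ (fun π j hj => (mem_filter.mp hj).2.1),
        h1 _ (fun π j hj => (mem_filter.mp hj).2.1)]

theorem fiber (U : Perm (Fin n) → Finset (Fin n)) (A : Finset (Fin n)) :
    (univ.filter (fun π : Perm (Fin n) => A ⊆ U π)).card
      = ∑ B ∈ univ.filter (fun B => A ⊆ B), (univ.filter (fun π => U π = B)).card := by
  rw [Finset.card_eq_sum_card_fiberwise (f := U)
    (t := univ.filter (fun B => A ⊆ B))
    (fun π hπ => mem_filter.mpr ⟨mem_univ _, (mem_filter.mp hπ).2⟩)]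
  apply Finset.sum_congr rfl
  intro B hB
  congr 1
  ext π
  simp only [mem_filter, mem_univ, true_and]
  exact ⟨fun h => h.2, fun h => ⟨h ▸ (mem_filter.mp hB).2, h⟩⟩

theorem mainEq (A : Finset (Fin n)) :
    (univ.filter (fun π : Perm (Fin n) => Sset π = A)).card
      = (univ.filter (fun π : Perm (Fin n) => Tset π = A)).card := by
  -- strong induction on complement
  have key : ∀ C : Finset (Fin n),
      (univ.filter (fun π : Perm (Fin n) => Sset π = Cᶜ)).card
        = (univ.filter (fun π : Perm (Fin n) => Tset π = Cᶜ)).card := by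
    intro C
    induction C using Finset.strongInduction with
    | _ C ih =>
      have hsplit : ∀ (U : Perm (Fin n) → Finset (Fin n)),
          (univ.filter (fun π : Perm (Fin n) => Cᶜ ⊆ U π)).card
          = (univ.filter (fun π => U π = Cᶜ)).card
            + ∑ B ∈ univ.filter (fun B => Cᶜ ⊂ B), (univ.filter (fun π => U π = B)).card := by
        intro U
        rw [fiber]
        have : univ.filter (fun B : Finset (Fin n) => Cᶜ ⊆ B)
            = insert Cᶜ (univ.filter (fun B => Cᶜ ⊂ B)) := by
          ext B
          simp only [mem_filter, mem_univ, true_and, mem_insert]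
          constructor
          · intro h
            rcases eq_or_ne B Cᶜ with h' | h'
            · exact Or.inl h'
            · exact Or.inr (lt_of_le_of_ne h (Ne.symm h'))
          · rintro (rfl | h)
            · exact Subset.rfl
            · exact h.1
        rw [this, Finset.sum_insert (by simp only [mem_filter, mem_univ, true_and]; exact fun h => h.2 h.1)]
      have hsum : ∑ B ∈ univ.filter (fun B => Cᶜ ⊂ B), (univ.filter (fun π => Sset π = B)).card
          = ∑ B ∈ univ.filter (fun B => Cᶜ ⊂ B), (univ.filter (fun π => Tset π = B)).card := by
        apply Finset.sum_congr rfl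
        intro B hB
        have hB' : Cᶜ ⊂ B := (mem_filter.mp hB).2
        have : Bᶜ ⊂ C := by
          have := compl_lt_compl_iff_lt.mpr hB'
          simpa using this
        have := ih Bᶜ this
        simpa using this
      have h1 := hsplit Sset
      have h2 := hsplit Tset
      have h3 := superS Cᶜ
      omega
  have := key Aᶜ
  simpa using this

end Skel

/-- For a uniformly random permutation `Π` of `[n]`, the random set
`S = {k ∈ [n-1] : Π(k+1) = Π(k)+1}` has the same distribution as the random set
`T = {k ∈ [n-1] : Π(k) = k}`: equivalently, for every subset `A ⊆ [n-1]`, the number of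
permutations `π` with `S(π) = A` equals the number with `T(π) = A`.
(Here `Fin n` represents `[n] = {1,…,n}`, `0`-indexed, so `[n-1]` is the set of
`k : Fin n` with `(k : ℕ) + 1 < n`, and conditions like `π(k+1) = π(k)+1` are on
genuine natural-number values, no reduction mod `n`.) -/
theorem stmt0 (n : ℕ) (A : Finset (Fin n)) :
    (Finset.univ.filter (fun π : Equiv.Perm (Fin n) =>
      Finset.univ.filter (fun k : Fin n =>
        (k : ℕ) + 1 < n ∧ ((π (cyclicSucc k) : ℕ) = (π k : ℕ) + 1)) = A)).card
    =
    (Finset.univ.filter (fun π : Equiv.Perm (Fin n) =>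
      Finset.univ.filter (fun k : Fin n =>
        (k : ℕ) + 1 < n ∧ π k = k) = A)).card := Skel.mainEq A
end

section
/- For a uniformly random permutation Π of [n] and 0 ≤ m ≤ n-1, the probability that exactly m elements k ∈ [n-1] satisfy Π(k+1) = Π(k)+1 equals ((1/m!) · Σ_{k=0}^{n-m} (-1)^k/k!) · (n-m)/n + ((1/(m+1)!) · Σ_{k=0}^{n-m-1} (-1)^k/k!) · (m+1)/n. -/
open Finset Equiv
open Fin.NatCast


lemma succAbove_val {M : ℕ} (p : Fin (M+1)) (j : Fin M) :
    ((p.succAbove j : Fin (M+1)) : ℕ) = if (j:ℕ) < (p:ℕ) then (j:ℕ) else (j:ℕ)+1 := by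
  rw [Fin.succAbove]
  split_ifs with h1 h2 h2
  · rfl
  · exact absurd (by simpa [Fin.lt_def] using h1) h2
  · exact absurd (by simpa [Fin.lt_def] using h2) h1
  · rfl

/-- delete position `i` and value `π i` from a permutation. -/
noncomputable def dmap {M : ℕ} (i : Fin (M+2)) (π : Equiv.Perm (Fin (M+2))) :
    Equiv.Perm (Fin (M+1)) :=
  Equiv.removeNone ((finSuccEquiv' i).symm.trans (π.trans (finSuccEquiv' (π i))))

lemma dmap_spec {M : ℕ} (i : Fin (M+2)) (π : Equiv.Perm (Fin (M+2))) (j : Fin (M+1)) :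
    (π i).succAbove (dmap i π j) = π (i.succAbove j) := by
  set ρ := (finSuccEquiv' i).symm.trans (π.trans (finSuccEquiv' (π i))) with hρ
  have h1 : ρ (some j) = finSuccEquiv' (π i) (π (i.succAbove j)) := by
    simp [hρ]
  have hne : π (i.succAbove j) ≠ π i := by
    simp [EmbeddingLike.apply_eq_iff_eq, Fin.succAbove_ne]
  have h2 : ∃ x', ρ (some j) = some x' := by
    rw [h1]
    rcases Fin.exists_succAbove_eq hne with ⟨z, hz⟩
    exact ⟨z, by rw [← hz, finSuccEquiv'_succAbove]⟩
  have h3 := Equiv.removeNone_some ρ h2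
  have h4 : (some ((dmap i π) j) : Option (Fin (M+1))) = finSuccEquiv' (π i) (π (i.succAbove j)) := by
    rw [← h1, ← h3]; rfl
  have := congrArg (finSuccEquiv' (π i)).symm h4
  simpa using this

/-- insert position `i` with value `v` into a permutation. -/
def umap {M : ℕ} (i v : Fin (M+2)) (π' : Equiv.Perm (Fin (M+1))) : Equiv.Perm (Fin (M+2)) :=
  (finSuccEquiv' i).trans ((Equiv.optionCongr π').trans (finSuccEquiv' v).symm)

@[simp] lemma umap_at {M : ℕ} (i v : Fin (M+2)) (π' : Equiv.Perm (Fin (M+1))) :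
    umap i v π' i = v := by
  simp [umap, finSuccEquiv'_at]

@[simp] lemma umap_succAbove {M : ℕ} (i v : Fin (M+2)) (π' : Equiv.Perm (Fin (M+1)))
    (j : Fin (M+1)) : umap i v π' (i.succAbove j) = v.succAbove (π' j) := by
  simp [umap]

lemma cast_succAbove {M k j : ℕ} (h : j ≤ k) (hk : k + 1 < M + 2) :
    (⟨k+1, hk⟩ : Fin (M+2)).succAbove ((j : ℕ) : Fin (M+1)) = ((j : ℕ) : Fin (M+2)) := by
  have hj1 : j < M + 1 := by omega
  apply Fin.ext
  rw [succAbove_val]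
  simp [Fin.val_cast_of_lt, hj1, Nat.mod_eq_of_lt, Nat.mod_eq_of_lt (show j < M+2 by omega)]
  omega

lemma count_constrained : ∀ (t N : ℕ) (T : Finset ℕ), T.card = t → (∀ k ∈ T, k + 1 < N + 1) →
    (Finset.univ.filter (fun π : Equiv.Perm (Fin (N+1)) =>
      ∀ k ∈ T, (π ((k+1 : ℕ) : Fin (N+1)) : ℕ) = (π ((k : ℕ) : Fin (N+1)) : ℕ) + 1)).card
      = (N + 1 - t).factorial := by
  intro t
  induction t with
  | zero =>
    intro N T hcard _
    rw [Finset.card_eq_zero] at hcard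
    subst hcard
    simp [Finset.filter_true_of_mem, Fintype.card_perm]
  | succ t IH =>
    intro N T hcard hT
    have hne : T.Nonempty := Finset.card_pos.mp (by omega)
    set k := T.max' hne with hk
    have hkT : k ∈ T := T.max'_mem hne
    have hk1 : k + 1 < N + 1 := hT k hkT
    obtain ⟨M, rfl⟩ : ∃ M, N = M + 1 := by
      cases N with
      | zero => omega
      | succ M => exact ⟨M, rfl⟩
    have hkM : k < M + 1 := by omega
    -- erase
    have hT' : ∀ j ∈ T.erase k, j + 1 < M + 1 := by
      intro j hj
      have hjk : j < k := lt_of_le_of_ne (T.le_max' j (Finset.mem_of_mem_erase hj))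
        (Finset.ne_of_mem_erase hj)
      omega
    have hcard' : (T.erase k).card = t := by
      rw [Finset.card_erase_of_mem hkT]; omega
    have key := IH (M) (T.erase k) hcard' (by intro j hj; have := hT' j hj; omega)
    have hgoal : (M + 1 + 1 - (t+1)) = (M + 1 - t) := by omega
    rw [hgoal, ← key]
    -- the bijection
    set ifin : Fin (M+2) := ⟨k+1, by omega⟩ with hifin
    have hival : (ifin : ℕ) = k + 1 := rfl
    apply Finset.card_bij'
      (i := fun π _ => dmap ifin π)
      (j := fun π' _ => umap ifin ((π' ((k : ℕ) : Fin (M+1))).succ) π')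
    -- hi : membership forward
    · intro π hπ
      rw [Finset.mem_filter] at hπ ⊢
      obtain ⟨-, hπ⟩ := hπ
      refine ⟨Finset.mem_univ _, ?_⟩
      intro j hj
      have hjk : j < k := lt_of_le_of_ne (T.le_max' j (Finset.mem_of_mem_erase hj))
        (Finset.ne_of_mem_erase hj)
      have hjT : j ∈ T := Finset.mem_of_mem_erase hj
      set v := π ifin with hv
      have hvk : (v : ℕ) = (π ((k:ℕ) : Fin (M+2)) : ℕ) + 1 := by
        have := hπ k hkT
        have hcast : ((k+1 : ℕ) : Fin (M+2)) = ifin := by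
          apply Fin.ext
          rw [Fin.val_cast_of_lt (show k+1 < M+2 by omega)]
        rw [hcast] at this
        exact this
      -- spec at j and j+1
      have spec : ∀ a : ℕ, a ≤ k → v.succAbove (dmap ifin π ((a : ℕ) : Fin (M+1)))
          = π ((a : ℕ) : Fin (M+2)) := by
        intro a ha
        rw [← cast_succAbove ha (by omega)]
        exact dmap_spec ifin π _
      have s1 := congrArg Fin.val (spec j (by omega))
      have s2 := congrArg Fin.val (spec (j+1) (by omega))
      rw [succAbove_val] at s1 s2
      have hπj := hπ j hjT
      -- values distinct from v
      have hne1 : (π ((j:ℕ) : Fin (M+2)) : ℕ) ≠ (v : ℕ) := by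
        intro hcon
        have h1 : π ((j:ℕ) : Fin (M+2)) = π ifin := Fin.ext hcon
        have h2 := congrArg Fin.val (π.injective h1)
        rw [Fin.val_cast_of_lt (show j < M+2 by omega)] at h2
        simp only [hival] at h2
        omega
      have hne2 : (π (((j:ℕ)+1 : ℕ) : Fin (M+2)) : ℕ) ≠ (v : ℕ) := by
        intro hcon
        have h1 : π (((j:ℕ)+1 : ℕ) : Fin (M+2)) = π ifin := Fin.ext hcon
        have h2 := congrArg Fin.val (π.injective h1)
        rw [Fin.val_cast_of_lt (show j+1 < M+2 by omega)] at h2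
        simp only [hival] at h2
        omega
      rw [hπj] at s2
      split_ifs at s1 s2 <;> omega
    -- hj : membership backward
    · intro π' hπ'
      rw [Finset.mem_filter] at hπ' ⊢
      obtain ⟨-, hπ'⟩ := hπ'
      refine ⟨Finset.mem_univ _, ?_⟩
      set w : Fin (M+1) := π' ((k : ℕ) : Fin (M+1)) with hw
      set U := umap ifin w.succ π' with hU
      have hcastk1 : ((k+1 : ℕ) : Fin (M+2)) = ifin := by
        apply Fin.ext
        rw [Fin.val_cast_of_lt (show k+1 < M+2 by omega)]
      have hUval : ∀ a : ℕ, a ≤ k → (U ((a:ℕ) : Fin (M+2)) : ℕ)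
          = if (π' ((a:ℕ) : Fin (M+1)) : ℕ) < (w:ℕ)+1 then (π' ((a:ℕ) : Fin (M+1)) : ℕ)
            else (π' ((a:ℕ) : Fin (M+1)) : ℕ)+1 := by
        intro a ha
        rw [← cast_succAbove ha (by omega), hU, umap_succAbove, succAbove_val, Fin.val_succ]
      intro j hjT
      rcases eq_or_ne j k with rfl | hjk'
      · rw [hcastk1, hU, umap_at, Fin.val_succ, hUval k le_rfl, if_pos (by omega)]
      · have hjk : j < k := lt_of_le_of_ne (T.le_max' j hjT) hjk'
        have hbj := hπ' j (Finset.mem_erase.mpr ⟨hjk', hjT⟩)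
        have hbw : (π' ((j:ℕ) : Fin (M+1)) : ℕ) ≠ (w : ℕ) := by
          intro hcon
          have h1 : π' ((j:ℕ) : Fin (M+1)) = π' ((k:ℕ) : Fin (M+1)) := Fin.ext hcon
          have h2 := congrArg Fin.val (π'.injective h1)
          rw [Fin.val_cast_of_lt (show j < M+1 by omega),
            Fin.val_cast_of_lt (show k < M+1 by omega)] at h2
          omega
        rw [hUval j (by omega), hUval (j+1) (by omega), hbj]
        split_ifs <;> omega
    -- left inverse
    · intro π hπ
      rw [Finset.mem_filter] at hπ
      obtain ⟨-, hπ⟩ := hπ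
      set v := π ifin with hv
      set D := dmap ifin π with hD
      have hcastk1 : ((k+1 : ℕ) : Fin (M+2)) = ifin := by
        apply Fin.ext
        rw [Fin.val_cast_of_lt (show k+1 < M+2 by omega)]
      have hvk : (v : ℕ) = (π ((k:ℕ) : Fin (M+2)) : ℕ) + 1 := by
        have := hπ k hkT
        rw [hcastk1] at this
        exact this
      have spec : ∀ a : ℕ, a ≤ k → v.succAbove (D ((a : ℕ) : Fin (M+1)))
          = π ((a : ℕ) : Fin (M+2)) := by
        intro a ha
        rw [← cast_succAbove ha (by omega)]
        exact dmap_spec ifin π _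
      have hveq : (D ((k:ℕ) : Fin (M+1))).succ = v := by
        have s1 := congrArg Fin.val (spec k le_rfl)
        rw [succAbove_val] at s1
        apply Fin.ext
        rw [Fin.val_succ]
        split_ifs at s1 <;> omega
      rw [hveq]
      apply Equiv.ext
      intro x
      rcases eq_or_ne x ifin with rfl | hx
      · rw [umap_at]
      · obtain ⟨j, hj⟩ := Fin.exists_succAbove_eq hx
        rw [← hj, umap_succAbove]
        exact dmap_spec ifin π j
    -- right inverse
    · intro π' hπ'
      set w : Fin (M+1) := π' ((k : ℕ) : Fin (M+1)) with hw
      set U := umap ifin w.succ π' with hU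
      have hUi : U ifin = w.succ := by rw [hU, umap_at]
      have hDU : ∀ j : Fin (M+1), dmap ifin U j = π' j := by
        intro j
        have h1 := dmap_spec ifin U j
        rw [hUi, hU, umap_succAbove, ← hU] at h1
        exact Fin.succAbove_right_injective h1
      exact Equiv.ext hDU

lemma binom_alt (s m : ℕ) :
    ∑ j ∈ Finset.range (s+1), (-1:ℤ)^(j+m) * (s.choose j) * (j.choose m)
      = if s = m then 1 else 0 := by
  rcases lt_or_ge s m with hlt | hle
  · rw [if_neg (by omega)]
    apply Finset.sum_eq_zero
    intro j hj
    rw [Finset.mem_range] at hj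
    rw [Nat.choose_eq_zero_of_lt (show j < m by omega)]
    simp
  · have hsplit : Finset.range (s+1) = Finset.Ico 0 m ∪ Finset.Ico m (s+1) := by
      rw [Finset.range_eq_Ico]
      exact (Finset.Ico_union_Ico_eq_Ico (Nat.zero_le m) (by omega)).symm
    rw [hsplit, Finset.sum_union (by
      simp only [Finset.disjoint_left, Finset.mem_Ico]
      intro a ha1 ha2
      omega)]
    have h1 : ∑ j ∈ Finset.Ico 0 m, (-1:ℤ)^(j+m) * (s.choose j) * (j.choose m) = 0 := by
      apply Finset.sum_eq_zero
      intro j hj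
      rw [Finset.mem_Ico] at hj
      rw [Nat.choose_eq_zero_of_lt (show j < m by omega)]
      simp
    rw [h1, zero_add, Finset.sum_Ico_eq_sum_range]
    have h2 : ∀ i ∈ Finset.range (s+1-m), (-1:ℤ)^(m+i+m) * (s.choose (m+i)) * ((m+i).choose m)
        = (s.choose m : ℤ) * ((-1:ℤ)^i * ((s-m).choose i)) := by
      intro i hi
      rw [Finset.mem_range] at hi
      have hc : (s.choose (m+i)) * ((m+i).choose m) = s.choose m * ((s-m).choose i) := by
        have := Nat.choose_mul (n := s) (show m ≤ m + i by omega)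
        simpa using this
      have hsign : (-1:ℤ)^(m+i+m) = (-1:ℤ)^i := by
        rw [show m+i+m = i + 2*m by omega, pow_add, pow_mul]
        simp
      have hcz : ((s.choose (m+i)) : ℤ) * ((m+i).choose m) = (s.choose m) * ((s-m).choose i) := by
        exact_mod_cast hc
      rw [hsign, mul_assoc, hcz]
      ring
    rw [Finset.sum_congr rfl h2, ← Finset.mul_sum]
    rw [show s+1-m = s-m+1 by omega, Int.alternating_sum_range_choose]
    rcases eq_or_ne s m with rfl | hne
    · simp
    · rw [if_neg (by omega), if_neg hne, mul_zero]

lemma bridge (N : ℕ) (T : Finset (Fin (N+1))) (hT : ∀ k ∈ T, (k:ℕ)+1 < N+1) :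
    (Finset.univ.filter (fun π : Equiv.Perm (Fin (N+1)) =>
      ∀ k ∈ T, (π (cyclicSucc k) : ℕ) = (π k : ℕ) + 1)).card = (N + 1 - T.card).factorial := by
  have hcard : (T.image Fin.val).card = T.card :=
    Finset.card_image_of_injective _ Fin.val_injective
  rw [← hcard]
  rw [← count_constrained (T.image Fin.val).card N (T.image Fin.val) rfl
    (by intro j hj; rw [Finset.mem_image] at hj; obtain ⟨k, hk, rfl⟩ := hj; exact hT k hk)]
  congr 1
  apply Finset.filter_congr
  intro π _
  have key : ∀ k : Fin (N+1), ((π (((k:ℕ)+1 : ℕ) : Fin (N+1)) : ℕ) = (π (((k:ℕ) : ℕ) : Fin (N+1)) : ℕ) + 1)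
      ↔ ((π (cyclicSucc k) : ℕ) = (π k : ℕ) + 1) := by
    intro k
    have e1 : (((k:ℕ)+1 : ℕ) : Fin (N+1)) = cyclicSucc k := by
      apply Fin.ext
      rw [Fin.val_natCast]
      rfl
    have e2 : (((k:ℕ) : ℕ) : Fin (N+1)) = k := Fin.cast_val_eq_self k
    rw [e1, e2]
  constructor
  · intro h j hj
    obtain ⟨k, hk, rfl⟩ := Finset.mem_image.mp hj
    exact (key k).mpr (h k hk)
  · intro h k hk
    exact (key k).mp (h (k : ℕ) (Finset.mem_image_of_mem _ hk))

lemma exact_count (N m : ℕ) :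
    ((Finset.univ.filter (fun π : Equiv.Perm (Fin (N+1)) =>
        (Finset.univ.filter (fun k : Fin (N+1) =>
          (k : ℕ) + 1 < N+1 ∧ ((π (cyclicSucc k) : ℕ) = (π k : ℕ) + 1))).card = m)).card : ℤ)
    = ∑ T ∈ (Finset.univ.filter (fun k : Fin (N+1) => (k:ℕ)+1 < N+1)).powerset,
        (-1:ℤ)^(T.card+m) * (T.card.choose m) * ((N+1 - T.card).factorial : ℤ) := by
  classical
  symm
  set U : Finset (Fin (N+1)) := Finset.univ.filter (fun k : Fin (N+1) => (k:ℕ)+1 < N+1) with hU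
  set S : Equiv.Perm (Fin (N+1)) → Finset (Fin (N+1)) := fun π =>
    Finset.univ.filter (fun k : Fin (N+1) =>
      (k : ℕ) + 1 < N+1 ∧ ((π (cyclicSucc k) : ℕ) = (π k : ℕ) + 1)) with hS
  have hSU : ∀ π, S π ⊆ U := by
    intro π k hk
    rw [hS, Finset.mem_filter] at hk
    rw [hU, Finset.mem_filter]
    exact ⟨hk.1, hk.2.1⟩
  calc
    ∑ T ∈ U.powerset, (-1:ℤ)^(T.card+m) * (T.card.choose m) * ((N+1 - T.card).factorial : ℤ)
      = ∑ T ∈ U.powerset, ∑ π : Equiv.Perm (Fin (N+1)),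
          (-1:ℤ)^(T.card+m) * (T.card.choose m) *
          (if (∀ k ∈ T, (π (cyclicSucc k) : ℕ) = (π k : ℕ) + 1) then 1 else 0) := by
        apply Finset.sum_congr rfl
        intro T hT
        have hfact : ((N+1 - T.card).factorial : ℤ)
            = ∑ π : Equiv.Perm (Fin (N+1)),
              (if (∀ k ∈ T, (π (cyclicSucc k) : ℕ) = (π k : ℕ) + 1) then (1:ℤ) else 0) := by
          rw [Finset.sum_boole]
          rw [bridge N T (fun k hk => (Finset.mem_filter.mp (Finset.mem_powerset.mp hT hk)).2)]
        rw [hfact, Finset.mul_sum]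
    _ = ∑ π : Equiv.Perm (Fin (N+1)), ∑ T ∈ U.powerset,
          (-1:ℤ)^(T.card+m) * (T.card.choose m) *
          (if (∀ k ∈ T, (π (cyclicSucc k) : ℕ) = (π k : ℕ) + 1) then 1 else 0) :=
        Finset.sum_comm
    _ = ∑ π : Equiv.Perm (Fin (N+1)), (if (S π).card = m then (1:ℤ) else 0) := by
        apply Finset.sum_congr rfl
        intro π _
        have hiff : ∀ T ∈ U.powerset,
            (∀ k ∈ T, (π (cyclicSucc k) : ℕ) = (π k : ℕ) + 1) ↔ T ⊆ S π := by
          intro T hT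
          rw [Finset.mem_powerset] at hT
          constructor
          · intro h k hk
            rw [hS, Finset.mem_filter]
            have := hT hk
            rw [hU, Finset.mem_filter] at this
            exact ⟨Finset.mem_univ _, this.2, h k hk⟩
          · intro h k hk
            have := h hk
            rw [hS, Finset.mem_filter] at this
            exact this.2.2
        calc
          ∑ T ∈ U.powerset, (-1:ℤ)^(T.card+m) * (T.card.choose m) *
              (if (∀ k ∈ T, (π (cyclicSucc k) : ℕ) = (π k : ℕ) + 1) then 1 else 0)
            = ∑ T ∈ U.powerset, (if T ⊆ S π then (-1:ℤ)^(T.card+m) * (T.card.choose m) else 0) := by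
              apply Finset.sum_congr rfl
              intro T hT
              rw [if_congr (hiff T hT) rfl rfl, mul_ite, mul_one, mul_zero]
          _ = ∑ T ∈ (U.powerset.filter (fun T => T ⊆ S π)),
                (-1:ℤ)^(T.card+m) * (T.card.choose m) := (Finset.sum_filter _ _).symm
          _ = ∑ T ∈ (S π).powerset, (-1:ℤ)^(T.card+m) * (T.card.choose m) := by
              apply Finset.sum_congr _ (fun _ _ => rfl)
              ext A
              simp only [Finset.mem_filter, Finset.mem_powerset]
              exact ⟨fun h => h.2, fun h => ⟨h.trans (hSU π), h⟩⟩
          _ = ∑ j ∈ Finset.range ((S π).card + 1), ∑ T ∈ Finset.powersetCard j (S π),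
                (-1:ℤ)^(T.card+m) * (T.card.choose m) := Finset.sum_powerset _ _
          _ = ∑ j ∈ Finset.range ((S π).card + 1),
                (-1:ℤ)^(j+m) * ((S π).card.choose j) * (j.choose m) := by
              apply Finset.sum_congr rfl
              intro j hj
              rw [Finset.sum_powersetCard j (S π) (fun c => (-1:ℤ)^(c+m) * (c.choose m))]
              rw [nsmul_eq_mul]
              ring
          _ = if (S π).card = m then 1 else 0 := binom_alt _ _
    _ = ((Finset.univ.filter (fun π : Equiv.Perm (Fin (N+1)) => (S π).card = m)).card : ℤ) := by
        rw [Finset.sum_boole]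

noncomputable def Ed (r : ℕ) : ℚ := ∑ i ∈ Finset.range (r+1),
  (-1:ℚ)^i * (r.choose i) * ((r-i).factorial : ℚ)

lemma Ed_eq (r : ℕ) : Ed r = (r.factorial : ℚ) *
    ∑ k ∈ Finset.range (r+1), (-1:ℚ)^k / (k.factorial : ℚ) := by
  rw [Ed, Finset.mul_sum]
  apply Finset.sum_congr rfl
  intro j hj
  rw [Finset.mem_range] at hj
  have hfac : (r.choose j : ℚ) * ((r-j).factorial : ℚ) = (r.factorial : ℚ) / (j.factorial : ℚ) := by
    rw [eq_div_iff (by exact_mod_cast (Nat.factorial_pos j).ne')]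
    have h := Nat.choose_mul_factorial_mul_factorial (show j ≤ r by omega)
    have h2 : (r.choose j : ℚ) * (j.factorial : ℚ) * ((r-j).factorial : ℚ) = (r.factorial : ℚ) := by
      exact_mod_cast h
    rw [← h2]; ring
  rw [mul_assoc, hfac]
  ring

lemma Fsum_eq (s' : ℕ) :
    ∑ i ∈ Finset.range (s'+1), (-1:ℚ)^i * (s'.choose i) * ((s'+1-i).factorial : ℚ)
      = Ed (s'+1) + Ed s' := by
  set F := ∑ i ∈ Finset.range (s'+1), (-1:ℚ)^i * (s'.choose i) * ((s'+1-i).factorial : ℚ) with hF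
  set T3 := ∑ i ∈ Finset.range (s'+1), (-1:ℚ)^i * (s'.choose (i+1)) * ((s'-i).factorial : ℚ)
    with hT3def
  have hFs : F = (∑ i ∈ Finset.range s', (-1:ℚ)^(i+1) * (s'.choose (i+1)) * ((s'-i).factorial : ℚ))
      + ((s'+1).factorial : ℚ) := by
    rw [hF, Finset.sum_range_succ']
    congr 1
    · apply Finset.sum_congr rfl
      intro i hi
      have : s' + 1 - (i+1) = s' - i := by omega
      rw [this]
    · simp
  have hT3 : T3 = ((s'+1).factorial : ℚ) - F := by
    have hT3' : T3 = ∑ i ∈ Finset.range s', (-1:ℚ)^i * (s'.choose (i+1)) * ((s'-i).factorial : ℚ) := by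
      rw [hT3def, Finset.sum_range_succ, Nat.choose_succ_self]
      simp
    have hzero : (∑ i ∈ Finset.range s', (-1:ℚ)^i * (s'.choose (i+1)) * ((s'-i).factorial : ℚ))
        + (∑ i ∈ Finset.range s', (-1:ℚ)^(i+1) * (s'.choose (i+1)) * ((s'-i).factorial : ℚ)) = 0 := by
      rw [← Finset.sum_add_distrib]
      apply Finset.sum_eq_zero
      intro i hi
      ring
    rw [hT3']
    linarith [hFs, hzero]
  have hE1 : Ed (s'+1) = (∑ i ∈ Finset.range (s'+1),
      (-1:ℚ)^(i+1) * ((s'+1).choose (i+1)) * ((s'-i).factorial : ℚ)) + ((s'+1).factorial : ℚ) := by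
    rw [Ed, Finset.sum_range_succ']
    congr 1
    · apply Finset.sum_congr rfl
      intro i hi
      have : s' + 1 - (i+1) = s' - i := by omega
      rw [this]
    · simp
  have hsplit : (∑ i ∈ Finset.range (s'+1),
      (-1:ℚ)^(i+1) * ((s'+1).choose (i+1)) * ((s'-i).factorial : ℚ))
      = (∑ i ∈ Finset.range (s'+1), -((-1:ℚ)^i * (s'.choose i) * ((s'-i).factorial : ℚ)))
      + (∑ i ∈ Finset.range (s'+1), -((-1:ℚ)^i * (s'.choose (i+1)) * ((s'-i).factorial : ℚ))) := by
    rw [← Finset.sum_add_distrib]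
    apply Finset.sum_congr rfl
    intro i hi
    rw [Nat.choose_succ_succ]
    push_cast
    ring
  have hEd' : Ed s' = ∑ i ∈ Finset.range (s'+1), (-1:ℚ)^i * (s'.choose i) * ((s'-i).factorial : ℚ) := rfl
  rw [Finset.sum_neg_distrib, Finset.sum_neg_distrib] at hsplit
  rw [hsplit, ← hEd', ← hT3def] at hE1
  linarith [hE1, hT3]

lemma cardU (N : ℕ) :
    (Finset.univ.filter (fun k : Fin (N+1) => (k:ℕ)+1 < N+1)).card = N := by
  have h : (Finset.univ.filter (fun k : Fin (N+1) => (k:ℕ)+1 < N+1))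
      = Finset.univ.erase (Fin.last N) := by
    ext k
    simp only [Finset.mem_filter, Finset.mem_erase, Finset.mem_univ, true_and, and_true]
    constructor
    · intro hk hcon
      rw [hcon] at hk
      simp [Fin.last] at hk
    · intro hk
      have : (k : ℕ) ≠ N := fun hc => hk (Fin.ext hc)
      have := k.isLt
      omega
  rw [h, Finset.card_erase_of_mem (Finset.mem_univ _), Finset.card_univ, Fintype.card_fin]
  omega

lemma grouped (N m : ℕ) :
    ∑ T ∈ (Finset.univ.filter (fun k : Fin (N+1) => (k:ℕ)+1 < N+1)).powerset,
        (-1:ℤ)^(T.card+m) * (T.card.choose m) * ((N+1 - T.card).factorial : ℤ)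
      = ∑ j ∈ Finset.range (N+1),
          (-1:ℤ)^(j+m) * (N.choose j) * (j.choose m) * ((N+1 - j).factorial : ℤ) := by
  rw [Finset.sum_powerset _ (fun T =>
    (-1:ℤ)^(T.card+m) * (T.card.choose m) * ((N+1 - T.card).factorial : ℤ))]
  rw [cardU]
  apply Finset.sum_congr rfl
  intro j hj
  rw [Finset.sum_powersetCard j _ (fun c => (-1:ℤ)^(c+m) * (c.choose m) * ((N+1 - c).factorial : ℤ))]
  rw [cardU, nsmul_eq_mul]
  ring

lemma qsum (N m : ℕ) (hm : m ≤ N) :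
    ∑ j ∈ Finset.range (N+1),
        (-1:ℚ)^(j+m) * (N.choose j) * (j.choose m) * ((N+1 - j).factorial : ℚ)
      = (N.choose m : ℚ) * (Ed (N-m+1) + Ed (N-m)) := by
  have hsplit : Finset.range (N+1) = Finset.Ico 0 m ∪ Finset.Ico m (N+1) := by
    rw [Finset.range_eq_Ico]
    exact (Finset.Ico_union_Ico_eq_Ico (Nat.zero_le m) (by omega)).symm
  rw [hsplit, Finset.sum_union (by
    simp only [Finset.disjoint_left, Finset.mem_Ico]
    intro a ha1 ha2
    omega)]
  have h1 : ∑ j ∈ Finset.Ico 0 m, (-1:ℚ)^(j+m) * (N.choose j) * (j.choose m) * ((N+1-j).factorial : ℚ) = 0 := by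
    apply Finset.sum_eq_zero
    intro j hj
    rw [Finset.mem_Ico] at hj
    rw [Nat.choose_eq_zero_of_lt (show j < m by omega)]
    simp
  rw [h1, zero_add, Finset.sum_Ico_eq_sum_range]
  have hrange : N + 1 - m = (N - m) + 1 := by omega
  rw [hrange]
  have h2 : ∀ i ∈ Finset.range ((N-m)+1),
      (-1:ℚ)^(m+i+m) * (N.choose (m+i)) * ((m+i).choose m) * ((N+1-(m+i)).factorial : ℚ)
      = (N.choose m : ℚ) * ((-1:ℚ)^i * ((N-m).choose i) * (((N-m)+1-i).factorial : ℚ)) := by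
    intro i hi
    rw [Finset.mem_range] at hi
    have hc : (N.choose (m+i)) * ((m+i).choose m) = N.choose m * ((N-m).choose i) := by
      have := Nat.choose_mul (n := N) (show m ≤ m + i by omega)
      simpa using this
    have hcz : ((N.choose (m+i)) : ℚ) * ((m+i).choose m) = (N.choose m) * ((N-m).choose i) := by
      exact_mod_cast hc
    have hsign : (-1:ℚ)^(m+i+m) = (-1:ℚ)^i := by
      rw [show m+i+m = i + 2*m by omega, pow_add, pow_mul]
      simp
    have hfa : N+1-(m+i) = (N-m)+1-i := by omega
    rw [hsign, hfa, mul_assoc ((-1:ℚ)^i), hcz]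
    ring
  rw [Finset.sum_congr rfl h2, ← Finset.mul_sum, Fsum_eq]

/-- For a uniformly random permutation `Π` of `[n]` and `0 ≤ m ≤ n-1`, the probability
that exactly `m` elements `k ∈ [n-1]` satisfy `Π(k+1) = Π(k)+1` equals
`((1/m!)·Σ_{k=0}^{n-m} (-1)^k/k!)·(n-m)/n + ((1/(m+1)!)·Σ_{k=0}^{n-m-1} (-1)^k/k!)·(m+1)/n`. -/
theorem stmt4 (n m : ℕ) (hn : 1 ≤ n) (hm : m ≤ n - 1) :
    ((Finset.univ.filter (fun π : Equiv.Perm (Fin n) =>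
        (Finset.univ.filter (fun k : Fin n =>
          (k : ℕ) + 1 < n ∧ ((π (cyclicSucc k) : ℕ) = (π k : ℕ) + 1))).card = m)).card : ℚ)
      / (Nat.factorial n : ℚ)
    =
    ((1 / (Nat.factorial m : ℚ)) * ∑ k ∈ Finset.range (n - m + 1), (-1 : ℚ) ^ k / (Nat.factorial k : ℚ))
        * (((n : ℚ) - m) / n)
      +
      ((1 / (Nat.factorial (m+1) : ℚ)) * ∑ k ∈ Finset.range (n - m), (-1 : ℚ) ^ k / (Nat.factorial k : ℚ))
        * (((m : ℚ) + 1) / n) := by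
  obtain ⟨N, rfl⟩ : ∃ N, n = N + 1 := ⟨n - 1, by omega⟩
  have hmN : m ≤ N := by omega
  -- the count as a rational sum
  have h1 := exact_count N m
  have h2 : ((Finset.univ.filter (fun π : Equiv.Perm (Fin (N+1)) =>
        (Finset.univ.filter (fun k : Fin (N+1) =>
          (k : ℕ) + 1 < N+1 ∧ ((π (cyclicSucc k) : ℕ) = (π k : ℕ) + 1))).card = m)).card : ℚ)
      = ∑ j ∈ Finset.range (N+1),
          (-1:ℚ)^(j+m) * (N.choose j) * (j.choose m) * ((N+1 - j).factorial : ℚ) := by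
    have h3 := h1.trans (grouped N m)
    have h4 := congrArg (fun z : ℤ => (z : ℚ)) h3
    push_cast at h4
    exact h4
  rw [h2, qsum N m hmN]
  -- replace the range subtractions
  have hr1 : N + 1 - m = (N - m) + 1 := by omega
  rw [hr1]
  -- rewrite the sums via Ed
  have e1 : ∑ k ∈ Finset.range ((N-m)+1+1), (-1:ℚ)^k / (k.factorial : ℚ)
      = Ed ((N-m)+1) / (((N-m)+1).factorial : ℚ) := by
    rw [eq_div_iff (by exact_mod_cast (Nat.factorial_pos _).ne')]
    rw [Ed_eq]
    ring
  have e2 : ∑ k ∈ Finset.range ((N-m)+1), (-1:ℚ)^k / (k.factorial : ℚ)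
      = Ed (N-m) / ((N-m).factorial : ℚ) := by
    rw [eq_div_iff (by exact_mod_cast (Nat.factorial_pos _).ne')]
    rw [Ed_eq]
    ring
  rw [e1, e2]
  -- cast facts
  have hC : (N.choose m : ℚ) = (N.factorial : ℚ) / ((m.factorial : ℚ) * ((N-m).factorial : ℚ)) := by
    rw [eq_div_iff (by positivity)]
    have := Nat.choose_mul_factorial_mul_factorial hmN
    have h5 : (N.choose m : ℚ) * (m.factorial : ℚ) * ((N-m).factorial : ℚ) = (N.factorial : ℚ) := by
      exact_mod_cast this
    rw [← h5]; ring
  have f1 : (((N:ℕ)+1).factorial : ℚ) = ((N:ℚ)+1) * (N.factorial : ℚ) := by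
    rw [Nat.factorial_succ]; push_cast; ring
  have f2 : ((((N:ℕ)-m)+1).factorial : ℚ) = (((N-m:ℕ):ℚ)+1) * ((N-m).factorial : ℚ) := by
    rw [Nat.factorial_succ]; push_cast; ring
  have f3 : ((m+1).factorial : ℚ) = ((m:ℚ)+1) * (m.factorial : ℚ) := by
    rw [Nat.factorial_succ]; push_cast; ring
  have hsub : ((N:ℚ)+1) - (m:ℚ) = ((N-m : ℕ) : ℚ) + 1 := by
    have : ((N-m : ℕ) : ℚ) = (N:ℚ) - (m:ℚ) := by
      rw [Nat.cast_sub hmN]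
    rw [this]; ring
  have hfm : (m.factorial : ℚ) ≠ 0 := by exact_mod_cast (Nat.factorial_pos m).ne'
  have hfNm : ((N-m).factorial : ℚ) ≠ 0 := by exact_mod_cast (Nat.factorial_pos _).ne'
  have hfN : (N.factorial : ℚ) ≠ 0 := by exact_mod_cast (Nat.factorial_pos N).ne'
  have hN1 : ((N:ℚ)+1) ≠ 0 := by positivity
  have hNm1 : (((N-m:ℕ)):ℚ)+1 ≠ 0 := by positivity
  have hm1 : ((m:ℚ)+1) ≠ 0 := by positivity
  simp only [Nat.cast_add, Nat.cast_one]
  rw [hsub, f1, f2, f3, hC]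
  have main : ∀ (A B a b c x y z : ℚ), a ≠ 0 → b ≠ 0 → c ≠ 0 → x+1 ≠ 0 → y+1 ≠ 0 → z+1 ≠ 0 →
      c/(a*b) * (A + B) / ((x+1)*c) = 1/a * (A / ((z+1)*b)) * ((z+1)/(x+1))
        + 1/((y+1)*a) * (B/b) * ((y+1)/(x+1)) := by
    intro A B a b c x y z ha hb hc hx hy hz
    field_simp
  exact main (Ed (N-m+1)) (Ed (N-m)) (m.factorial : ℚ) ((N-m).factorial : ℚ)
    (N.factorial : ℚ) (N : ℚ) (m : ℚ) ((N-m : ℕ) : ℚ) hfm hfNm hfN hN1 hm1 hNm1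
end

section
/- Let 1 ≤ h < n, let ρ ∈ S_n be the permutation i ↦ i + h mod n, and let π ↦ π̂ be the fundamental bijection (write the cycle decomposition of π with each cycle led by its least element and cycles in decreasing order of leaders, then erase parentheses to get the one-line word of π̂). Then for every π ∈ S_n, {k ∈ [n-h] : (ρπ)̂^{-1}(k+h) = (ρπ)̂^{-1}(k) + 1} = {k ∈ [n-h] : π(k) = k}. -/
/-- Foata's fundamental bijection, as a word: write the cycle decomposition of `π` with
each cycle led by its least element and the cycles listed in decreasing order of their
leaders, then erase parentheses.  The resulting list is the one-line notation of `π̂`,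
i.e. `π̂(j)` is the `j`-th entry of the word (0-indexed). -/
def foataWord (n : ℕ) (π : Equiv.Perm (Fin n)) : List (Fin n) :=
  (((Finset.univ.filter (fun x : Fin n => ∀ i, i < n → x ≤ (π ^ i) x)).sort (· ≤ ·)).reverse).flatMap
    (fun m => (((List.range n).map (fun i => (π ^ i) m)).reverse.dedup).reverse)

namespace Foata

open List Function

variable {n : ℕ}

def IsLeader (σ : Equiv.Perm (Fin n)) (x : Fin n) : Prop := ∀ i, i < n → x ≤ (σ ^ i) x

def block (σ : Equiv.Perm (Fin n)) (m : Fin n) : List (Fin n) :=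
  (((List.range n).map (fun i => (σ ^ i) m)).reverse.dedup).reverse

def lders (σ : Equiv.Perm (Fin n)) : List (Fin n) :=
  ((Finset.univ.filter (fun x : Fin n => ∀ i, i < n → x ≤ (σ ^ i) x)).sort (· ≤ ·)).reverse

lemma foataWord_eq (σ : Equiv.Perm (Fin n)) :
    foataWord n σ = (lders σ).flatMap (block σ) := rfl

variable (σ : Equiv.Perm (Fin n))

lemma mem_periodicPts (x : Fin n) : x ∈ periodicPts ⇑σ :=
  ⟨orderOf σ, orderOf_pos σ, by
    simp [IsPeriodicPt, IsFixedPt, Equiv.Perm.iterate_eq_pow, pow_orderOf_eq_one]⟩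

lemma d_pos (x : Fin n) : 0 < minimalPeriod ⇑σ x :=
  minimalPeriod_pos_of_mem_periodicPts (mem_periodicPts σ x)

lemma d_le (x : Fin n) : minimalPeriod ⇑σ x ≤ n := by
  have h : (Finset.range (minimalPeriod ⇑σ x)).card ≤ Fintype.card (Fin n) := by
    rw [← Finset.card_image_of_injOn
        (f := fun i => σ^[i] x) (fun a ha b hb hab =>
          iterate_injOn_Iio_minimalPeriod (by simpa using ha) (by simpa using hb) hab)]
    exact Finset.card_le_univ _
  simpa using h

lemma pow_mod (x : Fin n) (i : ℕ) :
    (σ ^ (i % minimalPeriod ⇑σ x)) x = (σ ^ i) x :=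
  iterate_mod_minimalPeriod_eq

lemma dedup_prefix {α} [DecidableEq α] {A B : List α} (hA : A.Nodup) (hB : ∀ b ∈ B, b ∈ A) :
    ((A ++ B).reverse.dedup).reverse = A := by
  have key : ∀ (X Y : List α), (∀ x ∈ X, x ∈ Y) → (X ++ Y).dedup = Y.dedup := by
    intro X
    induction X with
    | nil => simp
    | cons a X ih =>
      intro Y h
      rw [cons_append, dedup_cons_of_mem (mem_append_right _ (h a mem_cons_self)),
        ih Y fun x hx => h x (mem_cons_of_mem _ hx)]
  rw [reverse_append,
    key _ _ (by intro x hx; rw [mem_reverse] at hx ⊢; exact hB x hx),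
    (List.nodup_reverse.2 hA).dedup, reverse_reverse]

lemma nodup_range_map (m : Fin n) :
    ((List.range (minimalPeriod ⇑σ m)).map (fun i => (σ ^ i) m)).Nodup := by
  refine (List.nodup_range).map_on ?_
  intro a ha b hb hab
  rw [List.mem_range] at ha hb
  exact iterate_injOn_Iio_minimalPeriod (x := m) (by simpa using ha) (by simpa using hb)
    hab

lemma block_eq (m : Fin n) :
    block σ m = (List.range (minimalPeriod ⇑σ m)).map (fun i => (σ ^ i) m) := by
  have hd : minimalPeriod ⇑σ m ≤ n := d_le σ m
  have hsplit : List.range n =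
      List.range (minimalPeriod ⇑σ m) ++
        (List.range (n - minimalPeriod ⇑σ m)).map (minimalPeriod ⇑σ m + ·) := by
    rw [← List.range_add]; congr 1; omega
  unfold block
  rw [hsplit, List.map_append]
  refine dedup_prefix (nodup_range_map σ m) ?_
  intro b hb
  rw [List.map_map, List.mem_map] at hb
  obtain ⟨j, hj, rfl⟩ := hb
  rw [List.mem_map]
  refine ⟨(minimalPeriod ⇑σ m + j) % minimalPeriod ⇑σ m,
    List.mem_range.2 (Nat.mod_lt _ (d_pos σ m)), pow_mod σ m _⟩

lemma mem_block {m x : Fin n} :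
    x ∈ block σ m ↔ ∃ j, j < minimalPeriod ⇑σ m ∧ (σ ^ j) m = x := by
  rw [block_eq]
  simp [List.mem_map, List.mem_range]

lemma sameCycle_exists {m x : Fin n} (h : σ.SameCycle m x) :
    ∃ j, j < minimalPeriod ⇑σ m ∧ (σ ^ j) m = x := by
  obtain ⟨i, _, rfl⟩ := h.exists_pow_eq'
  exact ⟨i % minimalPeriod ⇑σ m, Nat.mod_lt _ (d_pos σ m), pow_mod σ m i⟩

lemma sameCycle_of_mem_block {m x : Fin n} (h : x ∈ block σ m) : σ.SameCycle m x := by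
  obtain ⟨j, _, rfl⟩ := (mem_block σ).1 h
  exact ⟨(j : ℤ), by simp [zpow_natCast]⟩

lemma leader_le {m x : Fin n} (hm : IsLeader σ m) (h : σ.SameCycle m x) : m ≤ x := by
  obtain ⟨j, hj, rfl⟩ := sameCycle_exists σ h
  exact hm j (lt_of_lt_of_le hj (d_le σ m))

lemma head?_block (m : Fin n) : (block σ m).head? = some m := by
  rw [block_eq]
  obtain ⟨d', hd'⟩ : ∃ d', minimalPeriod ⇑σ m = d' + 1 :=
    ⟨_, (Nat.succ_pred_eq_of_pos (d_pos σ m)).symm⟩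
  rw [hd', List.range_succ_eq_map]
  simp

lemma block_ne_nil (m : Fin n) : block σ m ≠ [] := by
  intro h
  have := head?_block σ m
  rw [h] at this
  simp at this

lemma getLast?_block (m : Fin n) :
    (block σ m).getLast? = some ((σ ^ (minimalPeriod ⇑σ m - 1)) m) := by
  rw [block_eq]
  obtain ⟨d', hd'⟩ : ∃ d', minimalPeriod ⇑σ m = d' + 1 :=
    ⟨_, (Nat.succ_pred_eq_of_pos (d_pos σ m)).symm⟩
  rw [hd', List.range_succ, List.map_append]
  simp

lemma sigma_pow_pred (m : Fin n) : σ ((σ ^ (minimalPeriod ⇑σ m - 1)) m) = m := by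
  have h1 : (σ ^ (minimalPeriod ⇑σ m)) m = m := isPeriodicPt_minimalPeriod ⇑σ m
  have h2 : minimalPeriod ⇑σ m - 1 + 1 = minimalPeriod ⇑σ m :=
    Nat.succ_pred_eq_of_pos (d_pos σ m)
  calc σ ((σ ^ (minimalPeriod ⇑σ m - 1)) m)
      = (σ ^ (minimalPeriod ⇑σ m - 1 + 1)) m := by
        rw [pow_succ', Equiv.Perm.mul_apply]
    _ = m := by rw [h2, h1]

lemma chain'_block (m : Fin n) : IsChain (fun a b => b = σ a) (block σ m) := by
  rw [block_eq, List.isChain_iff_getElem]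
  intro i hi
  simp only [List.length_map, List.length_range] at hi
  simp only [List.get_eq_getElem, List.getElem_map, List.getElem_range]
  rw [pow_succ', Equiv.Perm.mul_apply]

def Rel (σ : Equiv.Perm (Fin n)) (a b : Fin n) : Prop :=
  b = σ a ∨ (IsLeader σ b ∧ b < a ∧ IsLeader σ (σ a))

lemma chain_word : ∀ (L : List (Fin n)), L.Pairwise (· > ·) → (∀ m ∈ L, IsLeader σ m) →
    IsChain (Rel σ) (L.flatMap (block σ)) ∧
      (∀ z, (L.flatMap (block σ)).getLast? = some z → IsLeader σ (σ z))
  | [], _, _ => by simp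
  | m :: L, hP, hLd => by
    have hm : IsLeader σ m := hLd m List.mem_cons_self
    obtain ⟨ih1, ih2⟩ := chain_word L (List.pairwise_cons.1 hP).2
      (fun x hx => hLd x (List.mem_cons_of_mem _ hx))
    rw [List.flatMap_cons]
    have hlast : (block σ m).getLast? = some ((σ ^ (minimalPeriod ⇑σ m - 1)) m) :=
      getLast?_block σ m
    have hσlast : σ ((σ ^ (minimalPeriod ⇑σ m - 1)) m) = m := sigma_pow_pred σ m
    have hmle : m ≤ (σ ^ (minimalPeriod ⇑σ m - 1)) m :=
      hm _ (lt_of_lt_of_le (Nat.sub_lt (d_pos σ m) one_pos) (d_le σ m))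
    constructor
    · refine List.IsChain.append ((chain'_block σ m).imp fun a b h => Or.inl h) ih1 ?_
      intro x hx y hy
      rw [hlast, Option.mem_some_iff] at hx
      subst hx
      cases L with
      | nil => simp at hy
      | cons m' L' =>
        rw [List.flatMap_cons, List.head?_append_of_ne_nil _ (block_ne_nil σ m'),
          head?_block, Option.mem_some_iff] at hy
        subst hy
        refine Or.inr ⟨hLd m' (List.mem_cons_of_mem _ List.mem_cons_self),
          lt_of_lt_of_le ((List.pairwise_cons.1 hP).1 m' List.mem_cons_self) hmle,
          by rw [hσlast]; exact hm⟩
    · intro z hz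
      rcases eq_or_ne (L.flatMap (block σ)) [] with hnil | hnn
      · rw [hnil, List.append_nil, hlast, Option.some_inj] at hz
        rw [← hz, hσlast]
        exact hm
      · rw [List.getLast?_append_of_ne_nil _ hnn] at hz
        exact ih2 z hz

lemma pairwise_lders : (lders σ).Pairwise (· > ·) := by
  unfold lders
  rw [List.pairwise_reverse]
  exact (Finset.sortedLT_sort _).pairwise

lemma lders_isLeader : ∀ m ∈ lders σ, IsLeader σ m := by
  intro m hm
  unfold lders at hm
  rw [List.mem_reverse, Finset.mem_sort] at hm
  exact (Finset.mem_filter.1 hm).2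

variable [NeZero n]

lemma mem_word (x : Fin n) : x ∈ foataWord n σ := by
  rw [foataWord_eq]
  classical
  set S := (Finset.range n).image (fun i => (σ ^ i) x) with hS
  have hxS : x ∈ S := Finset.mem_image.2 ⟨0, Finset.mem_range.2 (NeZero.pos n), by simp⟩
  have hSclosed : ∀ i : ℕ, (σ ^ i) x ∈ S := by
    intro i
    rw [← pow_mod σ x i]
    exact Finset.mem_image.2 ⟨i % minimalPeriod ⇑σ x,
      Finset.mem_range.2 (lt_of_lt_of_le (Nat.mod_lt _ (d_pos σ x)) (d_le σ x)), rfl⟩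
  have hne : S.Nonempty := ⟨x, hxS⟩
  obtain ⟨j0, _, hj0⟩ := Finset.mem_image.1 (S.min'_mem hne)
  have hml : IsLeader σ (S.min' hne) := by
    intro i _
    have hmem : (σ ^ i) (S.min' hne) ∈ S := by
      rw [← hj0, ← Equiv.Perm.mul_apply, ← pow_add]
      exact hSclosed (i + j0)
    exact S.min'_le _ hmem
  have hsc : σ.SameCycle (S.min' hne) x := by
    refine Equiv.Perm.SameCycle.symm ⟨(j0 : ℤ), ?_⟩
    rw [zpow_natCast, hj0]
  refine List.mem_flatMap.2 ⟨S.min' hne, ?_, ?_⟩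
  · unfold lders
    rw [List.mem_reverse, Finset.mem_sort]
    exact Finset.mem_filter.2 ⟨Finset.mem_univ _, hml⟩
  · obtain ⟨j, hj, hjx⟩ := sameCycle_exists σ hsc
    exact (mem_block σ).2 ⟨j, hj, hjx⟩

omit [NeZero n] in
lemma nodup_word : (foataWord n σ).Nodup := by
  rw [foataWord_eq, List.nodup_flatMap]
  constructor
  · intro m _
    rw [block_eq]
    exact nodup_range_map σ m
  · refine (pairwise_lders σ).imp_of_mem ?_
    intro a b ha hb hab
    intro x hxa hxb
    have h1 := sameCycle_of_mem_block σ hxa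
    have h2 := sameCycle_of_mem_block σ hxb
    have hsc : σ.SameCycle a b := h1.trans h2.symm
    exact absurd (leader_le σ (lders_isLeader σ a ha) hsc) (not_le.2 hab)

end Foata

/-- Let `1 ≤ h < n`, let `ρ ∈ S_n` be `i ↦ i + h mod n`, and let `π ↦ π̂` be Foata's
fundamental bijection.  Then for every `π ∈ S_n`,
`{k ∈ [n-h] : (ρπ)̂⁻¹(k+h) = (ρπ)̂⁻¹(k) + 1} = {k ∈ [n-h] : π(k) = k}`.
Since `(ρπ)̂⁻¹(k)` is exactly the position of `k` in the word `foataWord n (ρ * π)`,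
the condition `(ρπ)̂⁻¹(k+h) = (ρπ)̂⁻¹(k) + 1` is expressed via `List.indexOf`. -/
theorem stmt6 (n h : ℕ) [NeZero n] (hh : 1 ≤ h) (hn : h < n) (π : Equiv.Perm (Fin n)) :
    {k : Fin n | (k : ℕ) + h < n ∧
        (foataWord n (Equiv.addRight (⟨h, hn⟩ : Fin n) * π)).idxOf (k + ⟨h, hn⟩)
          = (foataWord n (Equiv.addRight (⟨h, hn⟩ : Fin n) * π)).idxOf k + 1}
    = {k : Fin n | (k : ℕ) + h < n ∧ π k = k} := by
  classical
  open Foata in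
  set h' : Fin n := ⟨h, hn⟩ with hh'
  set σ := Equiv.addRight h' * π with hσdef
  ext k
  simp only [Set.mem_setOf_eq]
  refine and_congr_right fun hk => ?_
  have hval : ((k + h' : Fin n) : ℕ) = (k : ℕ) + h := by
    simp [Fin.add_def, hh', Nat.mod_eq_of_lt hk]
  have hklt : k < k + h' := by
    rw [Fin.lt_def, hval]
    omega
  have hσk : σ k = π k + h' := by
    simp [hσdef, Equiv.Perm.mul_apply]
  have hw := Foata.chain_word σ (Foata.lders σ) (Foata.pairwise_lders σ) (Foata.lders_isLeader σ)
  rw [← Foata.foataWord_eq] at hw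
  set w := foataWord n σ with hwdef
  have hkmem : k ∈ w := Foata.mem_word σ k
  have hkhmem : (k + h') ∈ w := Foata.mem_word σ (k + h')
  have hplt : w.idxOf k < w.length := List.idxOf_lt_length_iff.2 hkmem
  have hgetk : w[w.idxOf k]'hplt = k := List.getElem_idxOf hplt
  constructor
  · intro hidx
    have hplt2 : w.idxOf k + 1 < w.length := by
      rw [← hidx]
      exact List.idxOf_lt_length_iff.2 hkhmem
    have hget2 : w[w.idxOf k + 1]'hplt2 = k + h' := by
      have := List.getElem_idxOf (List.idxOf_lt_length_iff.2 hkhmem) (x := k + h') (xs := w)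
      simp only [hidx] at this ⊢
      exact this
    have hR := (List.isChain_iff_getElem.1 hw.1) (w.idxOf k) (by omega)
    rw [hgetk, hget2] at hR
    rcases hR with h1 | ⟨_, hlt, _⟩
    · have : π k + h' = k + h' := by rw [← hσk, ← h1]
      exact add_right_cancel this
    · exact absurd hklt (not_lt.2 hlt.le)
  · intro hfix
    have hσk' : σ k = k + h' := by rw [hσk, hfix]
    have hnl : ¬ Foata.IsLeader σ (k + h') := by
      intro hl
      have hsc : σ.SameCycle (k + h') k := by
        refine Equiv.Perm.SameCycle.symm ⟨1, ?_⟩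
        simpa using hσk'
      exact absurd hklt (not_lt.2 (Foata.leader_le σ hl hsc))
    have hlast : w.idxOf k + 1 ≠ w.length := by
      intro he
      have hgl : w.getLast? = some k := by
        rw [List.getLast?_eq_getElem?]
        have h3 : w.length - 1 = w.idxOf k := by omega
        rw [h3, List.getElem?_eq_getElem hplt, hgetk]
      have := hw.2 k hgl
      rw [hσk'] at this
      exact hnl this
    have hplt2 : w.idxOf k + 1 < w.length := lt_of_le_of_ne hplt hlast
    have hR := (List.isChain_iff_getElem.1 hw.1) (w.idxOf k) (by omega)
    rw [hgetk] at hR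
    have hget2 : w[w.idxOf k + 1]'hplt2 = k + h' := by
      rcases hR with h1 | ⟨_, _, habs⟩
      · rw [h1, hσk']
      · rw [hσk'] at habs
        exact absurd habs hnl
    have hq : w.idxOf (k + h') < w.length := List.idxOf_lt_length_iff.2 hkhmem
    have heq : w[w.idxOf (k + h')]'hq = w[w.idxOf k + 1]'hplt2 := by
      rw [hget2, List.getElem_idxOf]
    exact ((Foata.nodup_word σ).getElem_inj_iff).1 heq
end

section
/- The map π ↦ (ρπ)̂^{-1}, where ρ(i) = i+1 mod n and ̂ is Foata's fundamental bijection, is a bijection of S_n to itself that maps the set of permutations with fixed-point set (within [n-1]) equal to A onto the set of permutations σ with {k ∈ [n-1] : σ(k+1) = σ(k)+1} = A, for every A ⊆ [n-1]. -/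
/-- The inverse of the permutation whose one-line notation is `foataWord n σ`:
it sends `k` to the position of `k` in the word. -/
def foataHatInv (n : ℕ) [NeZero n] (σ : Equiv.Perm (Fin n)) : Fin n → Fin n :=
  fun k => (Fin.ofNat n ((foataWord n σ).idxOf k : ℕ) : Fin n)

section MinFold
variable {α : Type*} [LinearOrder α]

lemma foldr_min_le (l : List α) (x : α) : l.foldr min x ≤ x := by
  induction l with
  | nil => simp
  | cons a t ih => exact le_trans (min_le_right _ _) ih

lemma foldr_min_le_of_mem {l : List α} {x y : α} (h : y ∈ l) : l.foldr min x ≤ y := by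
  induction l with
  | nil => simp at h
  | cons a t ih =>
    rcases List.mem_cons.mp h with rfl | h
    · exact min_le_left _ _
    · exact le_trans (min_le_right _ _) (ih h)

lemma le_foldr_min {l : List α} {x c : α} (hc : ∀ y ∈ l, c ≤ y) (hx : c ≤ x) :
    c ≤ l.foldr min x := by
  induction l with
  | nil => simpa
  | cons a t ih =>
    exact le_min (hc a (List.mem_cons_self)) (ih fun y hy => hc y (List.mem_cons_of_mem _ hy))

lemma foldr_min_eq_of_le {l : List α} {x : α} (h : ∀ y ∈ l, x ≤ y) : l.foldr min x = x :=
  le_antisymm (foldr_min_le l x) (le_foldr_min h le_rfl)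

lemma prefix_min_eq_head (b rest : List α) (hb : b ≠ [])
    (hmin : ∀ x ∈ b, b.head hb ≤ x) (i : ℕ) (hi : i < b.length)
    (h2 : i < (b ++ rest).length) :
    ((b ++ rest).take i).foldr min ((b ++ rest)[i]'h2) = b.head hb := by
  rw [List.getElem_append_left hi, List.take_append_of_le_length (le_of_lt hi)]
  apply le_antisymm
  · rcases Nat.eq_zero_or_pos i with rfl | hpos
    · simp only [List.take_zero, List.foldr_nil]
      exact (List.getElem_zero (by omega)).le
    · apply foldr_min_le_of_mem
      have : (b.take i)[0]'(by simpa [List.length_take] using by omega) = b[0]'(by omega) :=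
        List.getElem_take
      rw [← List.getElem_zero (l := b) (by omega) , ← this]
      exact List.getElem_mem _
  · exact le_foldr_min (fun y hy => hmin y (List.mem_of_mem_take hy)) (hmin _ (List.getElem_mem hi))

lemma prefix_min_append (b rest : List α) (j : ℕ) (hj : j < rest.length)
    (hle : ∀ x ∈ b, rest[0]'(by omega) ≤ x)
    (h2 : b.length + j < (b ++ rest).length) :
    ((b ++ rest).take (b.length + j)).foldr min ((b ++ rest)[b.length + j]'h2)
      = (rest.take j).foldr min (rest[j]'hj) := by
  have hidx : (b ++ rest)[b.length + j]'h2 = rest[j]'hj := by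
    rw [List.getElem_append_right (by omega)]
    congr 1
    omega
  rw [hidx, List.take_append, List.take_of_length_le (by omega),
    Nat.add_sub_cancel_left, List.foldr_append]
  apply foldr_min_eq_of_le
  intro y hy
  refine le_trans ?_ (hle y hy)
  rcases Nat.eq_zero_or_pos j with rfl | hpos
  · simp
  · apply foldr_min_le_of_mem
    have : (rest.take j)[0]'(by simp [List.length_take]; omega) = rest[0]'(by omega) :=
      List.getElem_take
    rw [← this]
    exact List.getElem_mem _

end MinFold

theorem master_lemma {α : Type*} [LinearOrder α] (σ : α → α) :
    ∀ bs : List (List α),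
      (∀ b ∈ bs, b ≠ []) →
      (∀ b ∈ bs, List.Chain' (fun x y => σ x = y) b) →
      (∀ b ∈ bs, ∀ hb : b ≠ [], σ (b.getLast hb) = b.head hb) →
      (∀ b ∈ bs, ∀ hb : b ≠ [], ∀ x ∈ b, b.head hb ≤ x) →
      List.Pairwise (fun b b' => ∀ hb' : b' ≠ [], ∀ x ∈ b, b'.head hb' < x) bs →
      ∀ w, w = bs.flatten → ∀ i (hi : i < w.length),
        (∀ h : i + 1 < w.length,
            ¬ (w[i+1]'h < (w.take i).foldr min (w[i]'hi)) →
            σ (w[i]'hi) = w[i+1]'h)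
        ∧ ((i + 1 = w.length ∨ ∃ h : i + 1 < w.length,
              w[i+1]'h < (w.take i).foldr min (w[i]'hi)) →
            σ (w[i]'hi) = (w.take i).foldr min (w[i]'hi)) := by
  intro bs
  induction bs with
  | nil =>
    intro _ _ _ _ _ w hw i hi
    subst hw; simp at hi
  | cons b bs ih =>
    intro hne hchain hlast hmin hpair w hw i hi
    subst hw
    simp only [List.flatten_cons] at hi ⊢
    have hb : b ≠ [] := hne b (List.mem_cons_self)
    have hbpos : 0 < b.length := List.length_pos_iff.mpr hb
    have hlen : (b ++ bs.flatten).length = b.length + bs.flatten.length :=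
      List.length_append
    have hminb := hmin b (List.mem_cons_self) hb
    rcases lt_trichotomy (i + 1) b.length with hcase | hcase | hcase
    · -- interior of first block
      have hib : i < b.length := by omega
      have e0 : (b ++ bs.flatten)[i]'hi = b[i]'hib := List.getElem_append_left hib
      have epm := prefix_min_eq_head b bs.flatten hb hminb i hib hi
      constructor
      · intro h _
        rw [e0, List.getElem_append_left hcase]
        have hc := List.isChain_iff_getElem.mp (hchain b (List.mem_cons_self)) i (by omega)
        simpa [List.get_eq_getElem] using hc
      · intro hyp
        exfalso
        rcases hyp with heq | ⟨h, hlt⟩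
        · omega
        · rw [List.getElem_append_left hcase, epm] at hlt
          exact absurd hlt (not_lt.mpr (hminb _ (List.getElem_mem hcase)))
    · -- last element of first block
      have hib : i < b.length := by omega
      have e0 : (b ++ bs.flatten)[i]'hi = b[i]'hib := List.getElem_append_left hib
      have epm := prefix_min_eq_head b bs.flatten hb hminb i hib hi
      constructor
      · intro h hnot
        exfalso
        have hfl : 0 < bs.flatten.length := by omega
        cases bs with
        | nil => simp at hfl
        | cons b1 bs' =>
          have hb1 : b1 ≠ [] := hne b1 (by simp)
          have hb1pos : 0 < b1.length := List.length_pos_iff.mpr hb1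
          have e1 : (b ++ (b1 :: bs').flatten)[i+1]'h = b1.head hb1 := by
            rw [List.getElem_append_right (by omega)]
            simp only [List.flatten_cons]
            simp only [show i + 1 - b.length = 0 from by omega]
            rw [List.getElem_append_left hb1pos]
            exact List.getElem_zero hb1pos
          apply hnot
          rw [e1, epm]
          exact (List.pairwise_cons.mp hpair).1 b1 (by simp) hb1 _ (List.head_mem hb)
      · intro _
        rw [epm, e0]
        have hgl : b[i]'hib = b.getLast hb := by
          rw [List.getLast_eq_getElem]
          congr 1
          omega
        rw [hgl]
        exact hlast b (List.mem_cons_self) hb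
    · -- in a later block
      obtain ⟨j, rfl⟩ : ∃ j, i = b.length + j := ⟨i - b.length, by omega⟩
      have hj : j < bs.flatten.length := by omega
      have hfl : 0 < bs.flatten.length := by omega
      have hflne : bs.flatten ≠ [] := List.length_pos_iff.mp hfl
      -- head of flatten of bs is ≤ everything in b
      have hle : ∀ x ∈ b, bs.flatten[0]'hfl ≤ x := by
        cases bs with
        | nil => simp at hfl
        | cons b1 bs' =>
          intro x hx
          have hb1 : b1 ≠ [] := hne b1 (by simp)
          have hb1pos : 0 < b1.length := List.length_pos_iff.mpr hb1
          have e1 : (b1 :: bs').flatten[0]'hfl = b1.head hb1 := by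
            simp only [List.flatten_cons]
            rw [List.getElem_append_left hb1pos]
            exact List.getElem_zero hb1pos
          rw [e1]
          exact le_of_lt ((List.pairwise_cons.mp hpair).1 b1 (by simp) hb1 x hx)
      have e0 : (b ++ bs.flatten)[b.length + j]'hi = bs.flatten[j]'hj := by
        rw [List.getElem_append_right (by omega)]
        congr 1
        omega
      have e1 : ∀ h : b.length + j + 1 < (b ++ bs.flatten).length,
          (b ++ bs.flatten)[b.length + j + 1]'h = bs.flatten[j+1]'(by omega) := by
        intro h
        rw [List.getElem_append_right (by omega)]
        congr 1
        omega
      have epm := prefix_min_append b bs.flatten j hj hle hi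
      obtain ⟨ih1, ih2⟩ := ih (fun x hx => hne x (List.mem_cons_of_mem _ hx))
        (fun x hx => hchain x (List.mem_cons_of_mem _ hx))
        (fun x hx => hlast x (List.mem_cons_of_mem _ hx))
        (fun x hx => hmin x (List.mem_cons_of_mem _ hx))
        (List.pairwise_cons.mp hpair).2 bs.flatten rfl j hj
      constructor
      · intro h hnot
        rw [e0, e1 h]
        refine ih1 (by omega) ?_
        rw [e1 h, epm] at hnot
        exact hnot
      · intro hyp
        rw [epm, e0]
        apply ih2
        rcases hyp with heq | ⟨h, hlt⟩
        · left; omega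
        · right
          refine ⟨by omega, ?_⟩
          rw [e1 h, epm] at hlt
          exact hlt

set_option linter.unusedSectionVars false

section Foata
variable (n : ℕ) [NeZero n] (σ : Equiv.Perm (Fin n))

/-- The list of cycle leaders (cycle minima), in decreasing order. -/
def fleaders : List (Fin n) :=
  ((Finset.univ.filter (fun x : Fin n => ∀ i, i < n → x ≤ (σ ^ i) x)).sort (· ≤ ·)).reverse

/-- The period of `m` under `σ`. -/
noncomputable def fper (m : Fin n) : ℕ := Function.minimalPeriod (⇑σ) m

/-- The cycle of `m`, starting at `m`. -/
noncomputable def fcl (m : Fin n) : List (Fin n) := (List.range (fper n σ m)).map (fun i => (σ ^ i) m)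

lemma mem_periodic (m : Fin n) : m ∈ Function.periodicPts ⇑σ := by
  refine Function.mk_mem_periodicPts (orderOf_pos σ) ?_
  show (⇑σ)^[orderOf σ] m = m
  show (σ ^ orderOf σ) m = m
  rw [pow_orderOf_eq_one]; rfl

lemma fper_pos (m : Fin n) : 0 < fper n σ m :=
  Function.minimalPeriod_pos_of_mem_periodicPts (mem_periodic n σ m)

lemma pow_apply_mod (m : Fin n) (t : ℕ) : (σ ^ (t % fper n σ m)) m = (σ ^ t) m :=
  Function.iterate_mod_minimalPeriod_eq

lemma pow_fper (m : Fin n) : (σ ^ fper n σ m) m = m :=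
  Function.isPeriodicPt_minimalPeriod (⇑σ) m

lemma fcl_nodup (m : Fin n) : (fcl n σ m).Nodup := by
  refine List.Nodup.map_on ?_ (List.nodup_range)
  intro x hx y hy h
  exact Function.iterate_injOn_Iio_minimalPeriod
    (Set.mem_Iio.mpr (List.mem_range.mp hx)) (Set.mem_Iio.mpr (List.mem_range.mp hy)) h

lemma fcl_length (m : Fin n) : (fcl n σ m).length = fper n σ m := by simp [fcl]

lemma fper_le (m : Fin n) : fper n σ m ≤ n := by
  have := (fcl_nodup n σ m).length_le_card
  rwa [fcl_length, Fintype.card_fin] at this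

lemma fcl_ne (m : Fin n) : fcl n σ m ≠ [] := by
  have : (fcl n σ m).length ≠ 0 := by rw [fcl_length]; exact (fper_pos n σ m).ne'
  exact fun h => this (by rw [h]; rfl)

lemma mem_fcl_iff {m x : Fin n} : x ∈ fcl n σ m ↔ ∃ i, i < fper n σ m ∧ (σ ^ i) m = x := by
  simp [fcl, List.mem_map, List.mem_range]

lemma pow_mem_fcl (m : Fin n) (t : ℕ) : (σ ^ t) m ∈ fcl n σ m :=
  (mem_fcl_iff n σ).mpr ⟨t % fper n σ m, Nat.mod_lt _ (fper_pos n σ m), pow_apply_mod n σ m t⟩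

lemma head_fcl (m : Fin n) (h : fcl n σ m ≠ []) : (fcl n σ m).head h = m := by
  rw [List.head_eq_getElem]
  simp [fcl]

lemma chain_fcl (m : Fin n) : List.Chain' (fun x y => σ x = y) (fcl n σ m) := by
  refine List.isChain_iff_getElem.mpr ?_
  intro i h
  simp only [fcl, List.length_map, List.length_range] at h
  simp only [fcl, List.get_eq_getElem, List.getElem_map, List.getElem_range]
  rw [← Equiv.Perm.mul_apply, ← pow_succ']

lemma last_fcl (m : Fin n) (h : fcl n σ m ≠ []) :
    σ ((fcl n σ m).getLast h) = (fcl n σ m).head h := by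
  rw [head_fcl, List.getLast_eq_getElem]
  simp only [fcl, List.getElem_map, List.getElem_range, List.length_map, List.length_range]
  rw [← Equiv.Perm.mul_apply, ← pow_succ',
    show fper n σ m - 1 + 1 = fper n σ m from by have := fper_pos n σ m; omega]
  exact pow_fper n σ m

lemma mem_fleaders_iff {m : Fin n} : m ∈ fleaders n σ ↔ ∀ i, i < n → m ≤ (σ ^ i) m := by
  simp [fleaders, Finset.mem_sort]

lemma leader_le {m : Fin n} (hm : m ∈ fleaders n σ) : ∀ x ∈ fcl n σ m, m ≤ x := by
  intro x hx
  obtain ⟨i, hi, rfl⟩ := (mem_fcl_iff n σ).mp hx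
  exact ((mem_fleaders_iff n σ).mp hm) i (lt_of_lt_of_le hi (fper_le n σ m))

lemma fcl_back {m x : Fin n} (hx : x ∈ fcl n σ m) : ∃ t, (σ ^ t) x = m := by
  obtain ⟨j, hj, rfl⟩ := (mem_fcl_iff n σ).mp hx
  refine ⟨fper n σ m - j, ?_⟩
  rw [← Equiv.Perm.mul_apply, ← pow_add, show fper n σ m - j + j = fper n σ m from by omega]
  exact pow_fper n σ m

lemma fcl_disjoint {a b : Fin n} (ha : a ∈ fleaders n σ) (hb : b ∈ fleaders n σ)
    (hab : a ≠ b) : List.Disjoint (fcl n σ a) (fcl n σ b) := by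
  intro x hxa hxb
  apply hab
  have h1 : a ≤ b := by
    obtain ⟨t, ht⟩ := fcl_back n σ hxb
    obtain ⟨i, hi, rfl⟩ := (mem_fcl_iff n σ).mp hxa
    have hb' : (σ ^ (t + i)) a = b := by rw [pow_add, Equiv.Perm.mul_apply]; exact ht
    rw [← hb']
    exact leader_le n σ ha _ (pow_mem_fcl n σ a (t + i))
  have h2 : b ≤ a := by
    obtain ⟨t, ht⟩ := fcl_back n σ hxa
    obtain ⟨i, hi, rfl⟩ := (mem_fcl_iff n σ).mp hxb
    have ha' : (σ ^ (t + i)) b = a := by rw [pow_add, Equiv.Perm.mul_apply]; exact ht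
    rw [← ha']
    exact leader_le n σ hb _ (pow_mem_fcl n σ b (t + i))
  exact le_antisymm h1 h2

lemma exists_leader (k : Fin n) : ∃ m ∈ fleaders n σ, k ∈ fcl n σ m := by
  classical
  obtain ⟨O, hO⟩ : ∃ O : Finset (Fin n),
      O = Finset.image (fun i => (σ ^ i) k) (Finset.range (fper n σ k)) := ⟨_, rfl⟩
  have hOne : O.Nonempty := by
    rw [hO]
    exact ⟨k, Finset.mem_image.mpr ⟨0, Finset.mem_range.mpr (fper_pos n σ k), by simp⟩⟩
  obtain ⟨a, ha, ham⟩ : ∃ a, a ∈ Finset.range (fper n σ k) ∧ (σ ^ a) k = O.min' hOne := by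
    have hsub : O ⊆ Finset.image (fun i => (σ ^ i) k) (Finset.range (fper n σ k)) := by
      rw [hO]
    obtain ⟨a, ha, ham⟩ := Finset.mem_image.mp (hsub (O.min'_mem hOne))
    exact ⟨a, ha, ham⟩
  have ha' : a < fper n σ k := Finset.mem_range.mp ha
  have horb : ∀ t, (σ ^ t) (O.min' hOne) ∈ O := by
    intro t
    rw [← ham, ← Equiv.Perm.mul_apply, ← pow_add, hO]
    exact Finset.mem_image.mpr ⟨(t + a) % fper n σ k,
      Finset.mem_range.mpr (Nat.mod_lt _ (fper_pos n σ k)), pow_apply_mod n σ k (t + a)⟩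
  have hml : O.min' hOne ∈ fleaders n σ :=
    (mem_fleaders_iff n σ).mpr (fun i _ => O.min'_le _ (horb i))
  have hk : (σ ^ (fper n σ k - a)) (O.min' hOne) = k := by
    rw [← ham, ← Equiv.Perm.mul_apply, ← pow_add,
      show fper n σ k - a + a = fper n σ k from by omega]
    exact pow_fper n σ k
  exact ⟨O.min' hOne, hml, hk ▸ pow_mem_fcl n σ _ (fper n σ k - a)⟩

lemma dedup_helper {β : Type*} [DecidableEq β] {v u : List β} (hv : v.Nodup)
    (hu : ∀ x ∈ u, x ∈ v) : ((v ++ u).reverse.dedup).reverse = v := by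
  rw [List.reverse_append]
  have aux : ∀ a : List β, (∀ x ∈ a, x ∈ v.reverse) → (a ++ v.reverse).dedup = v.reverse := by
    intro a
    induction a with
    | nil =>
      intro _
      simpa using (List.nodup_reverse.mpr hv).dedup
    | cons x t iht =>
      intro hmem
      rw [List.cons_append, List.dedup_cons_of_mem
        (List.mem_append.mpr (Or.inr (hmem x (List.mem_cons_self)))),
        iht (fun y hy => hmem y (List.mem_cons_of_mem _ hy))]
  rw [aux u.reverse (fun x hx => List.mem_reverse.mpr (hu x (List.mem_reverse.mp hx))),
    List.reverse_reverse]

lemma fcyc_eq (m : Fin n) :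
    (((List.range n).map (fun i => (σ ^ i) m)).reverse.dedup).reverse = fcl n σ m := by
  have hsplit : List.range n
      = List.range (fper n σ m) ++ (List.range (n - fper n σ m)).map (fper n σ m + ·) := by
    rw [← List.range_add]
    congr 1
    have := fper_le n σ m
    omega
  rw [hsplit, List.map_append]
  apply dedup_helper (fcl_nodup n σ m)
  intro x hx
  simp only [List.map_map, List.mem_map, List.mem_range, Function.comp] at hx
  obtain ⟨i, _, rfl⟩ := hx
  exact pow_mem_fcl n σ m (fper n σ m + i)

lemma foataWord_eq : foataWord n σ = ((fleaders n σ).map (fcl n σ)).flatten := by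
  rw [foataWord, List.flatMap_def]
  congr 1
  exact List.map_congr_left (fun m _ => fcyc_eq n σ m)

lemma mem_word (k : Fin n) : k ∈ foataWord n σ := by
  rw [foataWord_eq, List.mem_flatten]
  obtain ⟨m, hm, hk⟩ := exists_leader n σ k
  exact ⟨fcl n σ m, List.mem_map_of_mem hm, hk⟩

lemma fleaders_sorted : List.Pairwise (fun a b => b < a) (fleaders n σ) := by
  rw [fleaders, List.pairwise_reverse]
  exact (Finset.sortedLT_sort _).pairwise

lemma nodup_word : (foataWord n σ).Nodup := by
  rw [foataWord_eq, List.nodup_flatten]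
  constructor
  · intro l hl
    obtain ⟨m, _, rfl⟩ := List.mem_map.mp hl
    exact fcl_nodup n σ m
  · rw [List.pairwise_map]
    exact (fleaders_sorted n σ).imp_of_mem
      (fun ha hb hlt => fcl_disjoint n σ ha hb hlt.ne')

lemma length_word : (foataWord n σ).length = n := by
  have h1 : (foataWord n σ).toFinset = Finset.univ :=
    Finset.eq_univ_iff_forall.mpr (fun k => List.mem_toFinset.mpr (mem_word n σ k))
  have h2 := List.toFinset_card_of_nodup (nodup_word n σ)
  rw [h1, Finset.card_univ, Fintype.card_fin] at h2
  exact h2.symm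

lemma word_master : ∀ i (hi : i < (foataWord n σ).length),
    (∀ h : i + 1 < (foataWord n σ).length,
        ¬ ((foataWord n σ)[i+1]'h
            < ((foataWord n σ).take i).foldr min ((foataWord n σ)[i]'hi)) →
        σ ((foataWord n σ)[i]'hi) = (foataWord n σ)[i+1]'h)
    ∧ ((i + 1 = (foataWord n σ).length ∨ ∃ h : i + 1 < (foataWord n σ).length,
          (foataWord n σ)[i+1]'h
            < ((foataWord n σ).take i).foldr min ((foataWord n σ)[i]'hi)) →
        σ ((foataWord n σ)[i]'hi)
          = ((foataWord n σ).take i).foldr min ((foataWord n σ)[i]'hi)) := by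
  refine master_lemma (⇑σ) ((fleaders n σ).map (fcl n σ)) ?_ ?_ ?_ ?_ ?_ _ (foataWord_eq n σ)
  · intro b hb
    obtain ⟨m, _, rfl⟩ := List.mem_map.mp hb
    exact fcl_ne n σ m
  · intro b hb
    obtain ⟨m, _, rfl⟩ := List.mem_map.mp hb
    exact chain_fcl n σ m
  · intro b hb h
    obtain ⟨m, _, rfl⟩ := List.mem_map.mp hb
    exact last_fcl n σ m h
  · intro b hb h x hx
    obtain ⟨m, hm, rfl⟩ := List.mem_map.mp hb
    rw [head_fcl n σ m h]
    exact leader_le n σ hm x hx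
  · rw [List.pairwise_map]
    refine (fleaders_sorted n σ).imp_of_mem ?_
    intro a b ha hb hlt hb' x hx
    rw [head_fcl n σ b hb']
    exact lt_of_lt_of_le hlt (leader_le n σ ha x hx)

end Foata

section Foata2
variable (n : ℕ) [NeZero n] (σ : Equiv.Perm (Fin n))

lemma indexOf_lt (k : Fin n) : (foataWord n σ).idxOf k < (foataWord n σ).length :=
  List.idxOf_lt_length_iff.mpr (mem_word n σ k)

lemma indexOf_lt_n (k : Fin n) : (foataWord n σ).idxOf k < n := by
  have := indexOf_lt n σ k
  rwa [length_word] at this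

lemma word_get_indexOf (k : Fin n) (h : (foataWord n σ).idxOf k < (foataWord n σ).length) :
    (foataWord n σ)[(foataWord n σ).idxOf k]'h = k :=
  List.idxOf_get h

lemma indexOf_getElem (i : ℕ) (h : i < (foataWord n σ).length) :
    (foataWord n σ).idxOf ((foataWord n σ)[i]'h) = i := by
  simpa using List.get_idxOf (nodup_word n σ) ⟨i, h⟩

lemma step_forward {k : Fin n} (hk : k < σ k) :
    (foataWord n σ).idxOf (σ k) = (foataWord n σ).idxOf k + 1 := by
  classical
  have hi : (foataWord n σ).idxOf k < (foataWord n σ).length := indexOf_lt n σ k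
  obtain ⟨m1, m2⟩ := word_master n σ ((foataWord n σ).idxOf k) hi
  have hwk := word_get_indexOf n σ k hi
  by_cases hc : (foataWord n σ).idxOf k + 1 = (foataWord n σ).length ∨
      ∃ h : (foataWord n σ).idxOf k + 1 < (foataWord n σ).length,
        (foataWord n σ)[(foataWord n σ).idxOf k + 1]'h
          < ((foataWord n σ).take ((foataWord n σ).idxOf k)).foldr min
              ((foataWord n σ)[(foataWord n σ).idxOf k]'hi)
  · exfalso
    have h2 := m2 hc
    rw [hwk] at h2
    have hle : σ k ≤ k := by rw [h2]; exact foldr_min_le _ _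
    exact absurd hk (not_lt.mpr hle)
  · push_neg at hc
    obtain ⟨hc1, hc2⟩ := hc
    have h : (foataWord n σ).idxOf k + 1 < (foataWord n σ).length := by omega
    have h1 := m1 h (not_lt.mpr (hc2 h))
    rw [hwk] at h1
    rw [h1]
    exact indexOf_getElem n σ _ h

lemma step_backward {k k' : Fin n} (hlt : k < k')
    (hidx : (foataWord n σ).idxOf k' = (foataWord n σ).idxOf k + 1) : σ k = k' := by
  have hi : (foataWord n σ).idxOf k < (foataWord n σ).length := indexOf_lt n σ k
  have h : (foataWord n σ).idxOf k + 1 < (foataWord n σ).length := by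
    rw [← hidx]; exact indexOf_lt n σ k'
  have e' : (foataWord n σ)[(foataWord n σ).idxOf k + 1]'h = k' := by
    have h2 := word_get_indexOf n σ k' (indexOf_lt n σ k')
    simp only [hidx] at h2
    exact h2
  have hwk := word_get_indexOf n σ k hi
  have m1 := (word_master n σ ((foataWord n σ).idxOf k) hi).1
  have h1 := m1 h (by
    rw [e', hwk]
    exact not_lt.mpr (le_trans (foldr_min_le _ _) hlt.le))
  rw [hwk, e'] at h1
  exact h1

lemma word_inj {σ' : Equiv.Perm (Fin n)} (hW : foataWord n σ = foataWord n σ') : σ = σ' := by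
  classical
  apply Equiv.ext
  intro k
  have hi : (foataWord n σ).idxOf k < (foataWord n σ).length := indexOf_lt n σ k
  obtain ⟨m1, m2⟩ := word_master n σ ((foataWord n σ).idxOf k) hi
  obtain ⟨m1', m2'⟩ := word_master n σ' ((foataWord n σ).idxOf k) (by rw [← hW]; exact hi)
  simp only [← hW] at m1' m2'
  have hwk := word_get_indexOf n σ k hi
  by_cases hc : (foataWord n σ).idxOf k + 1 = (foataWord n σ).length ∨
      ∃ h : (foataWord n σ).idxOf k + 1 < (foataWord n σ).length,
        (foataWord n σ)[(foataWord n σ).idxOf k + 1]'h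
          < ((foataWord n σ).take ((foataWord n σ).idxOf k)).foldr min
              ((foataWord n σ)[(foataWord n σ).idxOf k]'hi)
  · have a := m2 hc
    have b := m2' hc
    rw [hwk] at a b
    rw [a, b]
  · push_neg at hc
    obtain ⟨hc1, hc2⟩ := hc
    have h : (foataWord n σ).idxOf k + 1 < (foataWord n σ).length := by omega
    have a := m1 h (not_lt.mpr (hc2 h))
    have b := m1' h (not_lt.mpr (hc2 h))
    rw [hwk] at a b
    rw [a, b]

lemma fhi_val (k : Fin n) : ((foataHatInv n σ k : Fin n) : ℕ) = (foataWord n σ).idxOf k :=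
  (Fin.val_ofNat n _).trans (Nat.mod_eq_of_lt (indexOf_lt_n n σ k))

lemma fhi_bij : Function.Bijective (foataHatInv n σ) := by
  rw [← Finite.injective_iff_bijective]
  intro a b hab
  have h : (foataWord n σ).idxOf a = (foataWord n σ).idxOf b := by
    rw [← fhi_val n σ a, ← fhi_val n σ b, hab]
  calc a = (foataWord n σ)[(foataWord n σ).idxOf a]'(indexOf_lt n σ a) :=
        (word_get_indexOf n σ a (indexOf_lt n σ a)).symm
    _ = (foataWord n σ)[(foataWord n σ).idxOf b]'(indexOf_lt n σ b) := by simp only [h]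
    _ = b := word_get_indexOf n σ b (indexOf_lt n σ b)

lemma fhi_inj {σ' : Equiv.Perm (Fin n)} (h : foataHatInv n σ = foataHatInv n σ') : σ = σ' := by
  apply word_inj
  apply List.ext_getElem (by rw [length_word, length_word])
  intro i h1 h2
  have hidx : ∀ x : Fin n, (foataWord n σ).idxOf x = (foataWord n σ').idxOf x := by
    intro x
    rw [← fhi_val n σ x, ← fhi_val n σ' x, h]
  have hx := indexOf_getElem n σ i h1
  rw [hidx] at hx
  have h3 := word_get_indexOf n σ' ((foataWord n σ)[i]'h1) (indexOf_lt n σ' _)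
  simp only [hx] at h3
  exact h3.symm

end Foata2

/-- The map `π ↦ (ρπ)̂⁻¹`, where `ρ(i) = i+1 mod n` and `̂` is Foata's fundamental
bijection, is a bijection of `S_n` to itself that, for every `A ⊆ [n-1]`, maps the set of
permutations whose set of fixed points within `[n-1]` equals `A` onto the set of
permutations `σ` with `{k ∈ [n-1] : σ(k+1) = σ(k)+1} = A`. -/
theorem stmt7 (n : ℕ) [NeZero n] :
    (∀ π : Equiv.Perm (Fin n),
        Function.Bijective (foataHatInv n (Equiv.addRight (1 : Fin n) * π)))
    ∧ Function.Injective (fun π : Equiv.Perm (Fin n) =>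
        foataHatInv n (Equiv.addRight (1 : Fin n) * π))
    ∧ (∀ f : Fin n → Fin n, Function.Bijective f →
        ∃ π : Equiv.Perm (Fin n), foataHatInv n (Equiv.addRight (1 : Fin n) * π) = f)
    ∧ (∀ A : Set (Fin n), A ⊆ {k : Fin n | (k : ℕ) + 1 < n} →
        (fun π : Equiv.Perm (Fin n) => foataHatInv n (Equiv.addRight (1 : Fin n) * π)) ''
            {π : Equiv.Perm (Fin n) | {k : Fin n | (k : ℕ) + 1 < n ∧ π k = k} = A}
          = {f : Fin n → Fin n | Function.Bijective f ∧
              {k : Fin n | (k : ℕ) + 1 < n ∧ ((f (cyclicSucc k) : ℕ) = (f k : ℕ) + 1)} = A}) := by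
  classical
  have hbij : ∀ π : Equiv.Perm (Fin n),
      Function.Bijective (foataHatInv n (Equiv.addRight (1 : Fin n) * π)) :=
    fun π => fhi_bij n _
  have hinj : Function.Injective (fun π : Equiv.Perm (Fin n) =>
      foataHatInv n (Equiv.addRight (1 : Fin n) * π)) := by
    intro a b hab
    exact mul_left_cancel (fhi_inj n _ hab)
  have key : ∀ (π : Equiv.Perm (Fin n)) (k : Fin n), (k : ℕ) + 1 < n →
      (π k = k ↔ ((foataHatInv n (Equiv.addRight (1 : Fin n) * π) (cyclicSucc k) : ℕ)
        = (foataHatInv n (Equiv.addRight (1 : Fin n) * π) k : ℕ) + 1)) := by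
    intro π k hk
    set σ := Equiv.addRight (1 : Fin n) * π with hσ
    have hn1 : 1 < n := by omega
    have hvalsucc : ((k + 1 : Fin n) : ℕ) = (k : ℕ) + 1 := by
      rw [Fin.val_add, Fin.val_one', Nat.mod_eq_of_lt hn1, Nat.mod_eq_of_lt hk]
    have hsucc : cyclicSucc k = k + 1 := by
      apply Fin.ext
      rw [hvalsucc]
      show ((k : ℕ) + 1) % n = (k : ℕ) + 1
      exact Nat.mod_eq_of_lt hk
    have hklt : k < k + 1 := by
      rw [Fin.lt_def, hvalsucc]
      omega
    have hσk : σ k = π k + 1 := rfl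
    constructor
    · intro hfix
      have hs : σ k = k + 1 := by rw [hσk, hfix]
      have hlt : k < σ k := by rw [hs]; exact hklt
      have hstep := step_forward n σ hlt
      rw [hs] at hstep
      rw [hsucc, fhi_val, fhi_val]
      exact hstep
    · intro hval
      rw [hsucc, fhi_val, fhi_val] at hval
      have hs := step_backward n σ hklt hval
      rw [hσk] at hs
      exact add_right_cancel hs
  have hsurj : ∀ f : Fin n → Fin n, Function.Bijective f →
      ∃ π : Equiv.Perm (Fin n), foataHatInv n (Equiv.addRight (1 : Fin n) * π) = f := by
    intro f hf
    let T : Equiv.Perm (Fin n) → {g : Fin n → Fin n // Function.Bijective g} :=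
      fun π => ⟨foataHatInv n (Equiv.addRight (1 : Fin n) * π), hbij π⟩
    have hTinj : Function.Injective T := by
      intro a b hab
      exact hinj (congrArg Subtype.val hab)
    have hcard : Fintype.card (Equiv.Perm (Fin n))
        = Fintype.card {g : Fin n → Fin n // Function.Bijective g} := by
      refine Fintype.card_congr ⟨fun π => ⟨⇑π, π.bijective⟩,
        fun g => Equiv.ofBijective g.1 g.2, ?_, ?_⟩
      · intro π
        apply Equiv.ext
        intro x
        rfl
      · intro g
        apply Subtype.ext
        rfl
    have hTbij : Function.Bijective T :=
      (Fintype.bijective_iff_injective_and_card T).mpr ⟨hTinj, hcard⟩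
    obtain ⟨π, hπ⟩ := hTbij.2 ⟨f, hf⟩
    exact ⟨π, congrArg Subtype.val hπ⟩
  refine ⟨hbij, hinj, hsurj, ?_⟩
  intro A hA
  ext f
  constructor
  · rintro ⟨π, hπ, rfl⟩
    refine ⟨hbij π, ?_⟩
    rw [← hπ]
    ext k
    simp only [Set.mem_setOf_eq]
    constructor
    · rintro ⟨h1, h2⟩
      exact ⟨h1, (key π k h1).mpr h2⟩
    · rintro ⟨h1, h2⟩
      exact ⟨h1, (key π k h1).mp h2⟩
  · rintro ⟨hf, hadj⟩
    obtain ⟨π, hπ⟩ := hsurj f hf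
    refine ⟨π, ?_, hπ⟩
    rw [← hadj]
    ext k
    simp only [Set.mem_setOf_eq]
    constructor
    · rintro ⟨h1, h2⟩
      refine ⟨h1, ?_⟩
      rw [← hπ]
      exact (key π k h1).mp h2
    · rintro ⟨h1, h2⟩
      rw [← hπ] at h2
      exact ⟨h1, (key π k h1).mpr h2⟩
end

section
/- For 1 ≤ h < n and a uniformly random permutation Π of [n], the probability that #{k ∈ [n-h] : Π(k+h) = Π(k)+1} = m equals Σ_{ℓ=m}^{m+h} ((1/ℓ!) Σ_{k=0}^{n-ℓ} (-1)^k/k!) · C(n-h, m)·C(h, ℓ-m)/C(n, ℓ), for 0 ≤ m ≤ n-h. -/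
open Finset



private lemma val_succAbove {N : ℕ} (v : Fin (N+1)) (x : Fin N) :
    (v.succAbove x : ℕ) = if (x : ℕ) < (v : ℕ) then (x : ℕ) else (x : ℕ) + 1 := by
  rcases lt_or_ge ((x : ℕ)) ((v : ℕ)) with hlt | hle
  · rw [Fin.succAbove_of_castSucc_lt _ _ (by rwa [Fin.lt_def, Fin.coe_castSucc])]
    simp [hlt]
  · rw [Fin.succAbove_of_le_castSucc _ _ (by rwa [Fin.le_def, Fin.coe_castSucc])]
    simp [Fin.val_succ, Nat.not_lt.mpr hle]

private lemma succAbove_consec₁ {N : ℕ} {v : Fin (N+1)} {y z : Fin N}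
    (hzy : (v.succAbove z : ℕ) = (v.succAbove y : ℕ) + 1) : (z : ℕ) = (y : ℕ) + 1 := by
  have h1 := val_succAbove v y
  have h2 := val_succAbove v z
  split_ifs at h1 h2 <;> omega

private lemma succAbove_consec₂ {N : ℕ} {v : Fin (N+1)} {y z : Fin N}
    (hzy : (z : ℕ) = (y : ℕ) + 1) (hv : (v : ℕ) ≠ (y : ℕ) + 1) :
    (v.succAbove z : ℕ) = (v.succAbove y : ℕ) + 1 := by
  have h1 := val_succAbove v y
  have h2 := val_succAbove v z
  have hyN := y.isLt
  have hzN := z.isLt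
  split_ifs at h1 h2 <;> omega

private def fwdPerm {N : ℕ} (p : Fin (N+1)) (π : Equiv.Perm (Fin (N+1))) : Equiv.Perm (Fin N) :=
  Equiv.removeNone ((finSuccEquiv' p).symm.trans (π.trans (finSuccEquiv' (π p))))

private def bwdPerm {N : ℕ} (p v : Fin (N+1)) (σ : Equiv.Perm (Fin N)) : Equiv.Perm (Fin (N+1)) :=
  (finSuccEquiv' p).trans (σ.optionCongr.trans (finSuccEquiv' v).symm)

private lemma fwdPerm_eval {N : ℕ} (p : Fin (N+1)) (π : Equiv.Perm (Fin (N+1))) (x : Fin N) :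
    (π p).succAbove (fwdPerm p π x) = π (p.succAbove x) := by
  have hne : π (p.succAbove x) ≠ π p := fun hc => Fin.succAbove_ne p x (π.injective hc)
  obtain ⟨u, hu⟩ := Fin.exists_succAbove_eq hne
  have he : ((finSuccEquiv' p).symm.trans (π.trans (finSuccEquiv' (π p)))) (some x) = some u := by
    simp only [Equiv.trans_apply, finSuccEquiv'_symm_some, ← hu, finSuccEquiv'_succAbove]
  have h2 := Equiv.removeNone_some _ ⟨u, he⟩
  rw [he] at h2
  have : fwdPerm p π x = u := Option.some_injective _ h2
  rw [this, hu]

private lemma bwdPerm_at_p {N : ℕ} (p v : Fin (N+1)) (σ : Equiv.Perm (Fin N)) :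
    bwdPerm p v σ p = v := by
  simp [bwdPerm]

private lemma bwdPerm_eval {N : ℕ} (p v : Fin (N+1)) (σ : Equiv.Perm (Fin N)) (x : Fin N) :
    bwdPerm p v σ (p.succAbove x) = v.succAbove (σ x) := by
  simp [bwdPerm]

private lemma fwd_bwd {N : ℕ} (p v : Fin (N+1)) (σ : Equiv.Perm (Fin N)) :
    fwdPerm p (bwdPerm p v σ) = σ := by
  apply Equiv.ext
  intro x
  have h1 := fwdPerm_eval p (bwdPerm p v σ) x
  rw [bwdPerm_eval] at h1
  rw [bwdPerm_at_p] at h1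
  exact Fin.succAbove_right_injective h1

private lemma bwd_fwd {N : ℕ} (p v : Fin (N+1)) (π : Equiv.Perm (Fin (N+1))) (hv : v = π p) :
    bwdPerm p v (fwdPerm p π) = π := by
  apply Equiv.ext
  intro i
  rcases eq_or_ne i p with rfl | hne
  · rw [bwdPerm_at_p, hv]
  · obtain ⟨x, rfl⟩ := Fin.exists_succAbove_eq hne
    rw [bwdPerm_eval, hv, fwdPerm_eval]

private lemma count_sat (h : ℕ) (hh : 1 ≤ h) :
    ∀ (j n : ℕ) (S : Finset ℕ), S.card = j → (∀ k ∈ S, k + h < n) →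
    (Finset.univ.filter (fun π : Equiv.Perm (Fin n) =>
        ∀ k ∈ S, ∀ (hkh : k + h < n) (hk : k < n),
          (π ⟨k + h, hkh⟩ : ℕ) = (π ⟨k, hk⟩ : ℕ) + 1)).card = (n - j).factorial := by
  intro j
  induction j with
  | zero =>
    intro n S hcard _
    rw [Finset.card_eq_zero] at hcard
    subst hcard
    rw [Finset.filter_true_of_mem (fun π _ => by simp)]
    simp [Finset.card_univ, Fintype.card_perm]
  | succ j IH =>
    intro n S hcard hS
    have hne : S.Nonempty := Finset.card_pos.mp (by omega)
    set k₀ := S.max' hne with hk₀def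
    have hk₀S : k₀ ∈ S := S.max'_mem hne
    have hph : k₀ + h < n := hS _ hk₀S
    obtain ⟨N, rfl⟩ : ∃ N, n = N + 1 := ⟨n - 1, by omega⟩
    have hk₀N : k₀ < N := by omega
    set p : Fin (N+1) := ⟨k₀ + h, hph⟩ with hp
    set k₀' : Fin N := ⟨k₀, hk₀N⟩ with hk₀'
    set S' := S.erase k₀ with hS'def
    have hcard' : S'.card = j := by
      rw [hS'def, Finset.card_erase_of_mem hk₀S, hcard]
      omega
    have hS'lt : ∀ k ∈ S', k < k₀ := fun k hk =>
      lt_of_le_of_ne (S.le_max' k (Finset.mem_of_mem_erase hk)) (Finset.ne_of_mem_erase hk)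
    have hS'h : ∀ k ∈ S', k + h < N := fun k hk => by have := hS'lt k hk; omega
    have hIH := IH N S' hcard' hS'h
    have hgoal : N + 1 - (j + 1) = N - j := by omega
    rw [hgoal, ← hIH]
    -- positions below p are preserved by succAbove
    have pos_eq : ∀ (k : ℕ) (hk : k < N) (hkp : k < k₀ + h),
        p.succAbove ⟨k, hk⟩ = ⟨k, by omega⟩ := by
      intro k hk hkp
      apply Fin.ext
      rw [val_succAbove]
      simp only [hp]
      exact if_pos hkp
    apply Finset.card_bij' (fun π _ => fwdPerm p π)
      (fun σ _ => bwdPerm p ((σ k₀').succ) σ)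
    · -- forward membership
      intro π hπ
      simp only [Finset.mem_filter, Finset.mem_univ, true_and] at hπ ⊢
      intro k hkS' hkh hk
      have hkk₀ := hS'lt k hkS'
      apply succAbove_consec₁ (v := π p)
      have e1 := fwdPerm_eval p π ⟨k + h, hkh⟩
      have e2 := fwdPerm_eval p π ⟨k, hk⟩
      rw [pos_eq (k + h) hkh (by omega)] at e1
      rw [pos_eq k hk (by omega)] at e2
      rw [e1, e2]
      exact hπ k (Finset.mem_of_mem_erase hkS') (by omega) (by omega)
    · -- backward membership
      intro σ hσ
      simp only [Finset.mem_filter, Finset.mem_univ, true_and] at hσ ⊢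
      intro k hkS hkh hk
      set v : Fin (N+1) := (σ k₀').succ with hv
      rcases eq_or_ne k k₀ with rfl | hkne
      · have h1 : (⟨k₀ + h, hkh⟩ : Fin (N+1)) = p := rfl
        have h2 : (⟨k₀, hk⟩ : Fin (N+1)) = p.succAbove k₀' := (pos_eq k₀ hk₀N (by omega)).symm
        rw [h1, h2, bwdPerm_at_p, bwdPerm_eval]
        have : ((σ k₀').castSucc : ℕ) < (v : ℕ) := by simp [hv, Fin.val_succ]
        rw [val_succAbove, hv]
        simp [Fin.val_succ]
      · have hkk₀ : k < k₀ := lt_of_le_of_ne (S.le_max' k hkS) hkne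
        have hkN : k < N := by omega
        have hkhN : k + h < N := by omega
        have h1 : (⟨k + h, hkh⟩ : Fin (N+1)) = p.succAbove ⟨k + h, hkhN⟩ :=
          (pos_eq (k + h) hkhN (by omega)).symm
        have h2 : (⟨k, hk⟩ : Fin (N+1)) = p.succAbove ⟨k, hkN⟩ :=
          (pos_eq k hkN (by omega)).symm
        rw [h1, h2, bwdPerm_eval, bwdPerm_eval]
        apply succAbove_consec₂
        · exact hσ k (Finset.mem_erase.mpr ⟨hkne, hkS⟩) hkhN hkN
        · intro hc
          rw [hv] at hc
          simp only [Fin.val_succ] at hc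
          have : σ k₀' = σ ⟨k, hkN⟩ := Fin.val_injective (by omega)
          have : k₀' = ⟨k, hkN⟩ := σ.injective this
          have : k₀ = k := congrArg Fin.val this
          omega
    · -- left inverse
      intro π hπ
      simp only [Finset.mem_filter, Finset.mem_univ, true_and] at hπ
      apply bwd_fwd
      have e := fwdPerm_eval p π k₀'
      rw [pos_eq k₀ hk₀N (by omega)] at e
      have hsat : (π p : ℕ) = (π ⟨k₀, by omega⟩ : ℕ) + 1 := hπ k₀ hk₀S hph (by omega)
      have ev := congrArg Fin.val e
      rw [val_succAbove] at ev
      split_ifs at ev with hc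
      · apply Fin.ext
        rw [Fin.val_succ]
        omega
      · exfalso
        omega
    · -- right inverse
      intro σ hσ
      exact fwd_bwd p _ σ


private def Dq (r : ℕ) : ℚ := ∑ k ∈ range (r+1), (-1 : ℚ)^k * ((r.factorial : ℚ) / (k.factorial : ℚ))

-- alternating choose sum in ℚ
private lemma altQ (c : ℕ) :
    ∑ i ∈ range (c+1), (-1 : ℚ)^i * (c.choose i : ℚ) = if c = 0 then 1 else 0 := by
  have h1 := @Int.alternating_sum_range_choose c
  have h2 : ((∑ i ∈ range (c + 1), (-1 : ℤ) ^ i * (c.choose i : ℤ) : ℤ) : ℚ)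
      = ∑ i ∈ range (c+1), (-1 : ℚ)^i * (c.choose i : ℚ) := by push_cast; rfl
  rw [← h2, h1]
  split_ifs <;> simp

private lemma alt_sum (a m : ℕ) :
    ∑ j ∈ range (a+1), (a.choose j : ℚ) * ((-1 : ℚ)^j * (j.choose m : ℚ))
      = (-1 : ℚ)^m * (if a = m then 1 else 0) := by
  rcases lt_or_ge a m with ham | ham
  · rw [Finset.sum_eq_zero, if_neg (by omega), mul_zero]
    intro j hj
    rw [mem_range] at hj
    rw [Nat.choose_eq_zero_of_lt (by omega : j < m)]
    simp
  · have hsplit : range (a+1) = Finset.Ico 0 m ∪ Finset.Ico m (a+1) := by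
      rw [Finset.range_eq_Ico, ← Finset.Ico_union_Ico_eq_Ico (show 0 ≤ m by omega) (show m ≤ a + 1 by omega)]
    rw [hsplit, Finset.sum_union (by
      simp [Finset.disjoint_left]
      intro x h1 h2; omega)]
    have hz : ∑ j ∈ Finset.Ico 0 m, (a.choose j : ℚ) * ((-1 : ℚ)^j * (j.choose m : ℚ)) = 0 := by
      apply Finset.sum_eq_zero
      intro j hj
      rw [Finset.mem_Ico] at hj
      rw [Nat.choose_eq_zero_of_lt (by omega : j < m)]
      simp
    rw [hz, zero_add, Finset.sum_Ico_eq_sum_range]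
    have hterm : ∀ i ∈ range (a + 1 - m), (a.choose (m+i) : ℚ) * ((-1 : ℚ)^(m+i) * ((m+i).choose m : ℚ))
        = (-1 : ℚ)^m * (a.choose m : ℚ) * ((-1 : ℚ)^i * ((a-m).choose i : ℚ)) := by
      intro i hi
      rw [mem_range] at hi
      have hchoose : a.choose (m+i) * (m+i).choose m = a.choose m * (a-m).choose i := by
        have := Nat.choose_mul (n := a) (show m ≤ m + i by omega)
        simpa using this
      have hc : (a.choose (m+i) : ℚ) * ((m+i).choose m : ℚ) = (a.choose m : ℚ) * ((a-m).choose i : ℚ) := by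
        exact_mod_cast congrArg (fun t : ℕ => (t : ℚ)) hchoose
      rw [pow_add]
      calc (a.choose (m+i) : ℚ) * ((-1:ℚ)^m * (-1:ℚ)^i * ((m+i).choose m : ℚ))
          = ((-1:ℚ)^m * (-1:ℚ)^i) * ((a.choose (m+i) : ℚ) * ((m+i).choose m : ℚ)) := by ring
        _ = ((-1:ℚ)^m * (-1:ℚ)^i) * ((a.choose m : ℚ) * ((a-m).choose i : ℚ)) := by rw [hc]
        _ = (-1:ℚ)^m * (a.choose m : ℚ) * ((-1:ℚ)^i * ((a-m).choose i : ℚ)) := by ring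
    rw [Finset.sum_congr rfl hterm, ← Finset.mul_sum]
    have : a + 1 - m = (a - m) + 1 := by omega
    rw [this, altQ]
    rcases eq_or_ne a m with rfl | hne
    · simp
    · rw [if_neg (by omega), if_neg hne]
      ring

-- core identity
private lemma Lrec (a c : ℕ) :
    ∑ i ∈ range (c+1), (-1 : ℚ)^i * (c.choose i : ℚ) * ((a + 1 + c - i).factorial : ℚ)
    = (∑ i ∈ range (c+1+1), (-1 : ℚ)^i * ((c+1).choose i : ℚ) * ((a + (c+1) - i).factorial : ℚ))
      + ∑ i ∈ range (c+1), (-1 : ℚ)^i * (c.choose i : ℚ) * ((a + c - i).factorial : ℚ) := by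
  have e1 := Finset.sum_range_succ'
    (fun i => (-1 : ℚ)^i * ((c+1).choose i : ℚ) * ((a + (c+1) - i).factorial : ℚ)) (c+1)
  have e2 : ∀ i ∈ range (c+1),
      (-1 : ℚ)^(i+1) * ((c+1).choose (i+1) : ℚ) * ((a + (c+1) - (i+1)).factorial : ℚ)
      = -((-1:ℚ)^i * (c.choose i : ℚ) * ((a+c-i).factorial : ℚ))
        - (-1:ℚ)^i * (c.choose (i+1) : ℚ) * ((a+c-i).factorial : ℚ) := by
    intro i hi
    have harg : a + (c+1) - (i+1) = a + c - i := by omega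
    rw [harg, Nat.choose_succ_succ, pow_succ]
    push_cast
    ring
  have e3 := Finset.sum_range_succ'
    (fun i => (-1 : ℚ)^i * (c.choose i : ℚ) * ((a + 1 + c - i).factorial : ℚ)) c
  have e4 : ∀ i ∈ range c,
      (-1 : ℚ)^(i+1) * (c.choose (i+1) : ℚ) * ((a + 1 + c - (i+1)).factorial : ℚ)
      = -((-1:ℚ)^i * (c.choose (i+1) : ℚ) * ((a+c-i).factorial : ℚ)) := by
    intro i hi
    have harg : a + 1 + c - (i+1) = a + c - i := by omega
    rw [harg, pow_succ]
    ring
  have e5 := Finset.sum_range_succ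
    (fun i => (-1 : ℚ)^i * (c.choose (i+1) : ℚ) * ((a+c-i).factorial : ℚ)) c
  rw [Finset.sum_congr rfl e2] at e1
  rw [Finset.sum_congr rfl e4] at e3
  rw [Finset.sum_sub_distrib, Finset.sum_neg_distrib] at e1
  rw [Finset.sum_neg_distrib] at e3
  rw [Nat.choose_succ_self] at e5
  simp only [Nat.cast_zero, zero_mul, mul_zero, add_zero] at e5
  rw [e1, e3, ← e5]
  simp only [Nat.sub_zero, Nat.choose_zero_right, Nat.cast_one, one_mul]
  have h6 : a + (c+1) = a + 1 + c := by omega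
  rw [h6]
  ring

private lemma coreId (a : ℕ) : ∀ c : ℕ,
    ∑ i ∈ range (c+1), (-1 : ℚ)^i * (c.choose i : ℚ) * (((a + c - i).factorial : ℚ))
      = ∑ s ∈ range (a+1), (a.choose s : ℚ) * Dq (a + c - s) := by
  induction a with
  | zero =>
    intro c
    simp only [Nat.zero_add, range_one, Finset.sum_singleton, Nat.choose_self, Nat.cast_one,
      one_mul, Nat.choose_zero_right]
    rw [Dq]
    apply Finset.sum_congr rfl
    intro i hi
    rw [mem_range] at hi
    have hfac : (c.choose i : ℚ) * ((c - i).factorial : ℚ) = (c.factorial : ℚ) / (i.factorial : ℚ) := by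
      have h1 : c.choose i * i.factorial * (c - i).factorial = c.factorial :=
        Nat.choose_mul_factorial_mul_factorial (by omega)
      have h2 : (c.choose i : ℚ) * (i.factorial : ℚ) * ((c - i).factorial : ℚ) = (c.factorial : ℚ) := by
        exact_mod_cast congrArg (fun t : ℕ => (t : ℚ)) h1
      have h3 : (i.factorial : ℚ) ≠ 0 := Nat.cast_ne_zero.mpr (Nat.factorial_ne_zero i)
      field_simp
      linarith [h2]
    rw [mul_assoc, hfac]
    norm_num
  | succ a IHa =>
    intro c
    rw [Lrec, IHa (c+1), IHa c]
    -- now: RHS(a,c+1) + RHS(a,c) = RHS(a+1,c)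
    have e1 := Finset.sum_range_succ'
      (fun s => ((a+1).choose s : ℚ) * Dq (a + 1 + c - s)) (a+1)
    have e2 : ∀ s ∈ range (a+1),
        (((a+1).choose (s+1) : ℚ)) * Dq (a + 1 + c - (s+1))
        = (a.choose s : ℚ) * Dq (a + c - s) + (a.choose (s+1) : ℚ) * Dq (a + c - s) := by
      intro s hs
      have harg : a + 1 + c - (s+1) = a + c - s := by omega
      rw [harg, Nat.choose_succ_succ]
      push_cast
      ring
    have e3 := Finset.sum_range_succ'
      (fun s => (a.choose s : ℚ) * Dq (a + (c+1) - s)) a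
    have e4 : ∀ s ∈ range a,
        (a.choose (s+1) : ℚ) * Dq (a + (c+1) - (s+1))
        = (a.choose (s+1) : ℚ) * Dq (a + c - s) := by
      intro s hs
      have harg : a + (c+1) - (s+1) = a + c - s := by omega
      rw [harg]
    have e5 := Finset.sum_range_succ
      (fun s => (a.choose (s+1) : ℚ) * Dq (a + c - s)) a
    rw [Finset.sum_congr rfl e2, Finset.sum_add_distrib] at e1
    rw [Finset.sum_congr rfl e4] at e3
    rw [Nat.choose_succ_self] at e5
    simp only [Nat.cast_zero, zero_mul, add_zero] at e5
    rw [e1, e3, ← e5]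
    simp only [Nat.sub_zero, Nat.choose_zero_right, Nat.cast_one, one_mul]
    have h6 : a + (c+1) = a + 1 + c := by omega
    rw [h6]
    ring


private lemma DqInner (r : ℕ) :
    Dq r = (r.factorial : ℚ) * ∑ k ∈ range (r + 1), (-1 : ℚ)^k / (k.factorial : ℚ) := by
  rw [Dq, Finset.mul_sum]
  exact Finset.sum_congr rfl fun k _ => by ring

private lemma jsum (n h m : ℕ) (hh : 1 ≤ h) (hn : h < n) (hm : m ≤ n - h) :
    (-1:ℚ)^m * ∑ j ∈ range ((n-h)+1),
        ((n-h).choose j : ℚ) * ((-1:ℚ)^j * (j.choose m : ℚ) * ((n - j).factorial : ℚ))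
    = (n.factorial : ℚ) * ∑ ℓ ∈ Finset.Icc m (m + h),
        ((1 / (ℓ.factorial : ℚ)) * ∑ k ∈ range (n - ℓ + 1), (-1:ℚ)^k / (k.factorial : ℚ))
          * (((n-h).choose m : ℚ) * ((h.choose (ℓ-m) : ℚ)) / ((n.choose ℓ : ℚ))) := by
  set w := n - h with hw
  have hwh : n = w + h := by omega
  -- LHS transformation
  have hsplit : range (w+1) = Finset.Ico 0 m ∪ Finset.Ico m (w+1) := by
    rw [Finset.range_eq_Ico, ← Finset.Ico_union_Ico_eq_Ico (show 0 ≤ m by omega)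
      (show m ≤ w + 1 by omega)]
  have hz : ∑ j ∈ Finset.Ico 0 m,
      (w.choose j : ℚ) * ((-1:ℚ)^j * (j.choose m : ℚ) * ((n - j).factorial : ℚ)) = 0 := by
    apply Finset.sum_eq_zero
    intro j hj
    rw [Finset.mem_Ico] at hj
    rw [Nat.choose_eq_zero_of_lt (by omega : j < m)]
    simp
  have hL : (-1:ℚ)^m * ∑ j ∈ range (w+1),
      (w.choose j : ℚ) * ((-1:ℚ)^j * (j.choose m : ℚ) * ((n - j).factorial : ℚ))
      = (w.choose m : ℚ) * ∑ i ∈ range ((w-m)+1),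
          (-1:ℚ)^i * ((w-m).choose i : ℚ) * (((h + (w-m) - i).factorial : ℚ)) := by
    rw [hsplit, Finset.sum_union (by
      simp only [Finset.disjoint_left, Finset.mem_Ico]
      intro x h1 h2; omega), hz, zero_add, Finset.sum_Ico_eq_sum_range]
    have hidx : w + 1 - m = (w - m) + 1 := by omega
    rw [hidx, Finset.mul_sum, Finset.mul_sum]
    apply Finset.sum_congr rfl
    intro i hi
    rw [mem_range] at hi
    have hchoose : w.choose (m+i) * (m+i).choose m = w.choose m * (w-m).choose i := by
      have := Nat.choose_mul (n := w) (show m ≤ m + i by omega)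
      simpa using this
    have hc : (w.choose (m+i) : ℚ) * ((m+i).choose m : ℚ)
        = (w.choose m : ℚ) * ((w-m).choose i : ℚ) := by exact_mod_cast hchoose
    have harg : n - (m + i) = h + (w - m) - i := by omega
    rw [harg, pow_add]
    calc (-1:ℚ)^m * ((w.choose (m+i) : ℚ) * ((-1:ℚ)^m * (-1:ℚ)^i * ((m+i).choose m : ℚ)
            * ((h + (w-m) - i).factorial : ℚ)))
        = ((-1:ℚ)^m * (-1:ℚ)^m) * ((w.choose (m+i) : ℚ) * ((m+i).choose m : ℚ))
            * ((-1:ℚ)^i * ((h + (w-m) - i).factorial : ℚ)) := by ring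
      _ = ((-1:ℚ)^m * (-1:ℚ)^m) * ((w.choose m : ℚ) * ((w-m).choose i : ℚ))
            * ((-1:ℚ)^i * ((h + (w-m) - i).factorial : ℚ)) := by rw [hc]
      _ = (w.choose m : ℚ) * ((-1:ℚ)^i * ((w-m).choose i : ℚ) * ((h + (w-m) - i).factorial : ℚ)) := by
            rw [← pow_add]
            have : Even (m + m) := ⟨m, by omega⟩
            rw [this.neg_one_pow]
            ring
  rw [hL, coreId h (w - m)]
  -- RHS transformation
  have hIcc : Finset.Icc m (m + h) = Finset.Ico m (m + h + 1) := by
    rw [Finset.Ico_add_one_right_eq_Icc]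
  rw [hIcc, Finset.sum_Ico_eq_sum_range]
  have hidx2 : m + h + 1 - m = h + 1 := by omega
  rw [hidx2, Finset.mul_sum, Finset.mul_sum]
  apply Finset.sum_congr rfl
  intro s hs
  rw [mem_range] at hs
  have hln : m + s ≤ n := by omega
  have hfac : (n.choose (m+s)) * (m+s).factorial * (n - (m+s)).factorial = n.factorial :=
    Nat.choose_mul_factorial_mul_factorial hln
  have hfacQ : ((n.choose (m+s)) : ℚ) * ((m+s).factorial : ℚ) * ((n - (m+s)).factorial : ℚ)
      = (n.factorial : ℚ) := by exact_mod_cast hfac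
  have h1 : ((m+s).factorial : ℚ) ≠ 0 := Nat.cast_ne_zero.mpr (Nat.factorial_ne_zero _)
  have h2 : ((n.choose (m+s)) : ℚ) ≠ 0 :=
    Nat.cast_ne_zero.mpr (Nat.ne_of_gt (Nat.choose_pos hln))
  have harg : h + (w - m) - s = n - (m + s) := by omega
  have hsm : m + s - m = s := by omega
  rw [harg, hsm, DqInner]
  rw [show n - (m+s) = n - m - s from by omega] at hfacQ
  rw [show n - (m+s) = n - m - s from by omega]
  rw [← hfacQ]
  field_simp


private lemma ind_eq {α : Type*} [DecidableEq α] (V A : Finset α) (hAV : A ⊆ V) (m : ℕ) :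
    (if A.card = m then (1:ℚ) else 0)
      = (-1:ℚ)^m * ∑ T ∈ V.powerset,
          (-1:ℚ)^T.card * (T.card.choose m : ℚ) * (if T ⊆ A then 1 else 0) := by
  have hp : V.powerset.filter (fun T => T ⊆ A) = A.powerset := by
    ext T
    simp only [Finset.mem_filter, Finset.mem_powerset]
    exact ⟨fun hx => hx.2, fun hx => ⟨hx.trans hAV, hx⟩⟩
  have h1 : ∑ T ∈ V.powerset, (-1:ℚ)^T.card * (T.card.choose m : ℚ) * (if T ⊆ A then 1 else 0)
      = ∑ T ∈ A.powerset, (-1:ℚ)^T.card * (T.card.choose m : ℚ) := by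
    rw [← hp, Finset.sum_filter]
    apply Finset.sum_congr rfl
    intro T _
    split_ifs <;> simp
  rw [h1, Finset.sum_powerset_apply_card (f := fun j => (-1:ℚ)^j * (j.choose m : ℚ))]
  have h2 : ∑ j ∈ range (A.card+1), (A.card.choose j) • ((-1:ℚ)^j * (j.choose m : ℚ))
      = ∑ j ∈ range (A.card+1), (A.card.choose j : ℚ) * ((-1:ℚ)^j * (j.choose m : ℚ)) := by
    apply Finset.sum_congr rfl
    intro j _
    rw [nsmul_eq_mul]
  rw [h2, alt_sum, ← mul_assoc, ← pow_add]
  have he : Even (m + m) := ⟨m, rfl⟩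
  rw [he.neg_one_pow, one_mul]

private lemma count_main (n h m : ℕ) (hh : 1 ≤ h) (hn : h < n) (hm : m ≤ n - h) :
    ((Finset.univ.filter (fun π : Equiv.Perm (Fin n) =>
        (Finset.univ.filter (fun k : Fin n =>
          (k : ℕ) + h < n ∧ ((π (k + ⟨h, hn⟩) : ℕ) = (π k : ℕ) + 1))).card = m)).card : ℚ)
    = (n.factorial : ℚ) * ∑ ℓ ∈ Finset.Icc m (m + h),
        ((1 / (ℓ.factorial : ℚ)) * ∑ k ∈ range (n - ℓ + 1), (-1:ℚ)^k / (k.factorial : ℚ))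
          * (((n-h).choose m : ℚ) * ((h.choose (ℓ-m) : ℚ)) / ((n.choose ℓ : ℚ))) := by
  classical
  rw [← jsum n h m hh hn hm]
  have hAV : ∀ π : Equiv.Perm (Fin n),
      (Finset.univ.filter (fun k : Fin n =>
        (k : ℕ) + h < n ∧ ((π (k + ⟨h, hn⟩) : ℕ) = (π k : ℕ) + 1)))
      ⊆ (Finset.univ.filter (fun k : Fin n => (k : ℕ) + h < n)) := by
    intro π k hk
    rw [Finset.mem_filter] at hk ⊢
    exact ⟨hk.1, hk.2.1⟩
  have hVcard : (Finset.univ.filter (fun k : Fin n => (k : ℕ) + h < n)).card = n - h := by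
    have hlt : n - h < n := by omega
    have : (Finset.univ.filter (fun k : Fin n => (k : ℕ) + h < n))
        = Finset.Iio (⟨n - h, hlt⟩ : Fin n) := by
      ext k
      simp only [Finset.mem_filter, Finset.mem_univ, true_and, Finset.mem_Iio, Fin.lt_def]
      omega
    rw [this, Fin.card_Iio]
  have hcount : ∀ T ∈ (Finset.univ.filter (fun k : Fin n => (k : ℕ) + h < n)).powerset,
      (Finset.univ.filter (fun π : Equiv.Perm (Fin n) =>
        T ⊆ Finset.univ.filter (fun k : Fin n =>
          (k : ℕ) + h < n ∧ ((π (k + ⟨h, hn⟩) : ℕ) = (π k : ℕ) + 1)))).card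
      = (n - T.card).factorial := by
    intro T hT
    rw [Finset.mem_powerset] at hT
    have hTV : ∀ k ∈ T, (k : ℕ) + h < n := by
      intro k hk
      have := hT hk
      rw [Finset.mem_filter] at this
      exact this.2
    have himg : ∀ kv ∈ T.image Fin.val, kv + h < n := by
      intro kv hkv
      obtain ⟨k, hk, rfl⟩ := Finset.mem_image.mp hkv
      exact hTV k hk
    have hcardT : (T.image Fin.val).card = T.card :=
      Finset.card_image_of_injective _ Fin.val_injective
    have hkey := count_sat h hh T.card n (T.image Fin.val) hcardT himg
    rw [← hkey]
    congr 1
    apply Finset.filter_congr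
    intro π _
    constructor
    · intro hsub kv hkv hkh hk
      obtain ⟨k, hkT, rfl⟩ := Finset.mem_image.mp hkv
      have hmem := hsub hkT
      rw [Finset.mem_filter] at hmem
      have heq := hmem.2.2
      have hfin : (k + (⟨h, hn⟩ : Fin n)) = ⟨(k : ℕ) + h, hkh⟩ := by
        apply Fin.ext
        rw [Fin.add_def]
        exact Nat.mod_eq_of_lt hkh
      have hketa : (⟨(k : ℕ), hk⟩ : Fin n) = k := Fin.eta k hk
      rw [hketa, ← hfin]
      exact heq
    · intro hall k hkT
      rw [Finset.mem_filter]
      refine ⟨Finset.mem_univ _, hTV k hkT, ?_⟩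
      have := hall (k : ℕ) (Finset.mem_image_of_mem _ hkT) (hTV k hkT) k.isLt
      have hfin : (k + (⟨h, hn⟩ : Fin n)) = ⟨(k : ℕ) + h, hTV k hkT⟩ := by
        apply Fin.ext
        rw [Fin.add_def]
        exact Nat.mod_eq_of_lt (hTV k hkT)
      have hketa : (⟨(k : ℕ), k.isLt⟩ : Fin n) = k := Fin.eta k k.isLt
      rw [hketa] at this
      rw [hfin]
      exact this
  calc ((Finset.univ.filter (fun π : Equiv.Perm (Fin n) =>
        (Finset.univ.filter (fun k : Fin n =>
          (k : ℕ) + h < n ∧ ((π (k + ⟨h, hn⟩) : ℕ) = (π k : ℕ) + 1))).card = m)).card : ℚ)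
      = ∑ π : Equiv.Perm (Fin n),
          (if (Finset.univ.filter (fun k : Fin n =>
            (k : ℕ) + h < n ∧ ((π (k + ⟨h, hn⟩) : ℕ) = (π k : ℕ) + 1))).card = m
           then (1:ℚ) else 0) := (Finset.sum_boole _ _).symm
    _ = ∑ π : Equiv.Perm (Fin n), (-1:ℚ)^m *
          ∑ T ∈ (Finset.univ.filter (fun k : Fin n => (k : ℕ) + h < n)).powerset,
            (-1:ℚ)^T.card * (T.card.choose m : ℚ) *
              (if T ⊆ Finset.univ.filter (fun k : Fin n =>
                (k : ℕ) + h < n ∧ ((π (k + ⟨h, hn⟩) : ℕ) = (π k : ℕ) + 1)) then (1:ℚ) else 0) :=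
        Finset.sum_congr rfl (fun π _ => ind_eq _ _ (hAV π) m)
    _ = (-1:ℚ)^m * ∑ T ∈ (Finset.univ.filter (fun k : Fin n => (k : ℕ) + h < n)).powerset,
          (-1:ℚ)^T.card * (T.card.choose m : ℚ) *
          ((Finset.univ.filter (fun π : Equiv.Perm (Fin n) =>
            T ⊆ Finset.univ.filter (fun k : Fin n =>
              (k : ℕ) + h < n ∧ ((π (k + ⟨h, hn⟩) : ℕ) = (π k : ℕ) + 1)))).card : ℚ) := by
        rw [← Finset.mul_sum]
        congr 1
        rw [Finset.sum_comm]
        apply Finset.sum_congr rfl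
        intro T _
        rw [← Finset.mul_sum, Finset.sum_boole]
    _ = (-1:ℚ)^m * ∑ T ∈ (Finset.univ.filter (fun k : Fin n => (k : ℕ) + h < n)).powerset,
          (-1:ℚ)^T.card * (T.card.choose m : ℚ) * (((n - T.card).factorial : ℚ)) := by
        congr 1
        apply Finset.sum_congr rfl
        intro T hT
        rw [hcount T hT]
    _ = (-1:ℚ)^m * ∑ j ∈ range ((n-h)+1),
          ((n-h).choose j : ℚ) * ((-1:ℚ)^j * (j.choose m : ℚ) * ((n - j).factorial : ℚ)) := by
        congr 1
        rw [Finset.sum_powerset_apply_card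
          (f := fun j => (-1:ℚ)^j * (j.choose m : ℚ) * ((n - j).factorial : ℚ)), hVcard]
        apply Finset.sum_congr rfl
        intro j _
        rw [nsmul_eq_mul]


/-- For `1 ≤ h < n` and a uniformly random permutation `Π` of `[n]`, the probability that
`#{k ∈ [n-h] : Π(k+h) = Π(k)+1} = m` equals
`Σ_{ℓ=m}^{m+h} ((1/ℓ!) Σ_{k=0}^{n-ℓ} (-1)^k/k!) · C(n-h,m)·C(h,ℓ-m)/C(n,ℓ)`
for `0 ≤ m ≤ n-h`. -/
theorem stmt8 (n h m : ℕ) (hh : 1 ≤ h) (hn : h < n) (hm : m ≤ n - h) :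
    ((Finset.univ.filter (fun π : Equiv.Perm (Fin n) =>
        (Finset.univ.filter (fun k : Fin n =>
          (k : ℕ) + h < n ∧ ((π (k + ⟨h, hn⟩) : ℕ) = (π k : ℕ) + 1))).card = m)).card : ℚ)
      / (Nat.factorial n : ℚ)
    =
    ∑ ℓ ∈ Finset.Icc m (m + h),
      ((1 / (Nat.factorial ℓ : ℚ)) *
          ∑ k ∈ Finset.range (n - ℓ + 1), (-1 : ℚ) ^ k / (Nat.factorial k : ℚ))
        * (((n - h).choose m : ℚ) * ((h.choose (ℓ - m) : ℚ)) / ((n.choose ℓ : ℚ))) := by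
  rw [div_eq_iff (show (n.factorial : ℚ) ≠ 0 from Nat.cast_ne_zero.mpr (Nat.factorial_ne_zero n))]
  rw [count_main n h m hh hn hm, mul_comm]
end

section
/- The random set U_n = {k ∈ [n] : Π(k+1 mod n) = Π(k)+1 mod n}, for Π uniform on S_n, is exchangeable: its distribution is invariant under every permutation of the index set [n]. Equivalently, P{U_n = A} depends only on #A. -/
namespace S11
variable {n : ℕ}

lemma cyclicSucc_eq (j : Fin (n+1)) : cyclicSucc j = j + 1 := by
  apply Fin.ext
  rw [Fin.val_add, Fin.val_one']
  show (j.val + 1) % (n+1) = _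
  rcases Nat.eq_zero_or_pos n with h | h
  · subst h; omega
  · rw [Nat.one_mod_eq_one.mpr (by omega)]

def U (π : Equiv.Perm (Fin (n+1))) : Finset (Fin (n+1)) :=
  Finset.univ.filter (fun k => π (k + 1) = π k + 1)

lemma mem_U {π : Equiv.Perm (Fin (n+1))} {k : Fin (n+1)} :
    k ∈ U π ↔ π (k + 1) = π k + 1 := by simp [U]

def N (A : Finset (Fin (n+1))) : ℕ :=
  (Finset.univ.filter (fun π : Equiv.Perm (Fin (n+1)) => U π = A)).card
def M (A : Finset (Fin (n+1))) : ℕ :=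
  (Finset.univ.filter (fun π : Equiv.Perm (Fin (n+1)) => A ⊆ U π)).card

lemma Msum (A : Finset (Fin (n+1))) :
    M A = ∑ B ∈ Finset.univ.powerset.filter (fun B => A ⊆ B), N B := by
  rw [M, Finset.card_eq_sum_card_fiberwise (f := U)
    (t := Finset.univ.powerset.filter (fun B => A ⊆ B))]
  · apply Finset.sum_congr rfl
    intro B hB
    simp only [Finset.mem_filter, Finset.mem_powerset] at hB
    rw [N]
    congr 1
    ext π
    simp only [Finset.mem_filter, Finset.mem_univ, true_and]
    constructor
    · rintro ⟨-, h⟩; exact h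
    · rintro rfl; exact ⟨hB.2, rfl⟩
  · intro π hπ
    simp only [Finset.mem_coe, Finset.mem_filter, Finset.mem_univ, true_and] at hπ ⊢
    simp only [Finset.mem_powerset]
    exact ⟨Finset.subset_univ _, hπ⟩


lemma Msum' (A : Finset (Fin (n+1))) :
    M A = N A + ∑ B ∈ Finset.univ.powerset.filter (fun B => A ⊂ B), N B := by
  rw [Msum]
  have : Finset.univ.powerset.filter (fun B => A ⊆ B)
      = insert A (Finset.univ.powerset.filter (fun B => A ⊂ B)) := by
    ext B
    simp only [Finset.mem_filter, Finset.mem_powerset, Finset.mem_insert,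
      Finset.subset_univ, true_and]
    constructor
    · intro h
      rcases eq_or_ne B A with rfl | hne
      · exact Or.inl rfl
      · exact Or.inr (Finset.ssubset_iff_subset_ne.mpr ⟨h, fun hEq => hne hEq.symm⟩)
    · rintro (rfl | h)
      · exact Finset.Subset.refl _
      · exact h.subset
  rw [this, Finset.sum_insert (by simp [Finset.ssubset_iff_subset_ne])]

lemma img_rtrip (σ : Equiv.Perm (Fin (n+1))) (B : Finset (Fin (n+1))) :
    (B.image σ.symm).image σ = B := by
  ext x; simp

lemma img_ssub {σ : Equiv.Perm (Fin (n+1))} {A B : Finset (Fin (n+1))} :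
    A.image σ ⊂ B ↔ A ⊂ B.image σ.symm := by
  conv_lhs => rw [← img_rtrip σ B]
  exact Finset.image_ssubset_image σ.injective

lemma compl_card_lt {A B : Finset (Fin (n+1))} (h : A ⊂ B) : Bᶜ.card < Aᶜ.card := by
  have h1 : Aᶜ.card = Fintype.card (Fin (n+1)) - A.card := by
    rw [Finset.card_compl]
  have h2 : Bᶜ.card = Fintype.card (Fin (n+1)) - B.card := by
    rw [Finset.card_compl]
  have := Finset.card_lt_card h
  have hB := Finset.card_le_univ B
  simp [Fintype.card_fin] at *
  omega

lemma Ninv (Minv : ∀ (σ : Equiv.Perm (Fin (n+1))) (A : Finset (Fin (n+1))),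
      M (A.image σ) = M A) :
    ∀ (k : ℕ) (A : Finset (Fin (n+1))) (σ : Equiv.Perm (Fin (n+1))),
      Aᶜ.card ≤ k → N (A.image σ) = N A := by
  intro k
  induction k with
  | zero =>
    intro A σ hA
    have : Aᶜ = ∅ := Finset.card_eq_zero.mp (Nat.le_zero.mp hA)
    have hA : A = Finset.univ := by
      rwa [Finset.compl_eq_empty_iff] at this
    subst hA
    rw [Finset.image_univ_equiv]
  | succ k ih =>
    intro A σ hA
    have h1 := Msum' (A.image σ)
    have h2 := Msum' (n := n) A
    have h3 : ∑ B ∈ Finset.univ.powerset.filter (fun B => A.image σ ⊂ B), N B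
        = ∑ B ∈ Finset.univ.powerset.filter (fun B => A ⊂ B), N B := by
      apply Finset.sum_nbij' (i := fun B => B.image σ.symm) (j := fun B => B.image σ)
      · intro B hB
        simp only [Finset.mem_filter, Finset.mem_powerset, Finset.subset_univ,
          true_and] at hB ⊢
        exact img_ssub.mp hB
      · intro B hB
        simp only [Finset.mem_filter, Finset.mem_powerset, Finset.subset_univ,
          true_and] at hB ⊢
        exact img_ssub.mpr (by rwa [show (B.image σ).image σ.symm = B by ext x; simp])
      · intro B _
        ext x; simp [Finset.mem_image]
      · intro B _
        ext x; simp [Finset.mem_image]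
      · intro B hB
        simp only [Finset.mem_filter, Finset.mem_powerset, Finset.subset_univ,
          true_and] at hB
        have hlt : (B.image σ.symm)ᶜ.card ≤ k := by
          have := compl_card_lt (img_ssub.mp hB)
          omega
        have := ih (B.image σ.symm) σ hlt
        rw [show (B.image σ.symm).image σ = B by ext x; simp [Finset.mem_image]] at this
        rw [this]
    have hM := Minv σ A
    omega


def Fm (β ξ ν p : ℕ) : ℕ :=
  if p ≤ β then p else if p ≤ β + (ν + 1 - ξ) then p + (ξ - (β+1))
  else if p ≤ ν then p - (ν + 1 - ξ) else p

def Gm (β ξ ν q : ℕ) : ℕ :=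
  if q ≤ β then q else if q < ξ then q + (ν + 1 - ξ)
  else if q ≤ ν then q - (ξ - (β+1)) else q

section FG
variable {n β ξ ν : ℕ} (hβ : β < ξ) (hξ : ξ ≤ ν) (hν : ν ≤ n)
include hβ hξ hν

lemma Fm_le {p : ℕ} (hp : p ≤ n) : Fm β ξ ν p ≤ n := by
  unfold Fm; split_ifs <;> omega

lemma Gm_le {q : ℕ} (hq : q ≤ n) : Gm β ξ ν q ≤ n := by
  unfold Gm; split_ifs <;> omega

lemma Gm_Fm {p : ℕ} (hp : p ≤ n) : Gm β ξ ν (Fm β ξ ν p) = p := by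
  unfold Fm Gm; split_ifs <;> omega

lemma Fm_Gm {q : ℕ} (hq : q ≤ n) : Fm β ξ ν (Gm β ξ ν q) = q := by
  unfold Fm Gm; split_ifs <;> omega

lemma Fm_succ {p : ℕ} (hp : p < n) (h1 : p ≠ β) (h2 : p ≠ β + (ν + 1 - ξ))
    (h3 : β + 1 = ξ ∨ p ≠ ν) : Fm β ξ ν (p+1) = Fm β ξ ν p + 1 ∧ Fm β ξ ν p < n := by
  unfold Fm; split_ifs <;> omega

lemma Gm_succ {p : ℕ} (hp : p < n) (h1 : p ≠ β) (h2 : p + 1 ≠ ξ) (h3 : p ≠ ν) :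
    Gm β ξ ν (p+1) = Gm β ξ ν p + 1 ∧ Gm β ξ ν p < n := by
  unfold Gm; split_ifs <;> omega

end FG

def theta (n : ℕ) {β ξ ν : ℕ} (hβ : β < ξ) (hξ : ξ ≤ ν) (hν : ν ≤ n) :
    Equiv.Perm (Fin (n+1)) where
  toFun p := ⟨Fm β ξ ν p.val, by
    have := Fm_le hβ hξ hν (Nat.lt_succ_iff.mp p.isLt); omega⟩
  invFun q := ⟨Gm β ξ ν q.val, by
    have := Gm_le hβ hξ hν (Nat.lt_succ_iff.mp q.isLt); omega⟩
  left_inv p := Fin.ext (Gm_Fm hβ hξ hν (Nat.lt_succ_iff.mp p.isLt))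
  right_inv q := Fin.ext (Fm_Gm hβ hξ hν (Nat.lt_succ_iff.mp q.isLt))


@[simp] lemma theta_val {n β ξ ν : ℕ} (hβ : β < ξ) (hξ : ξ ≤ ν) (hν : ν ≤ n)
    (p : Fin (n+1)) : (theta n hβ hξ hν p).val = Fm β ξ ν p.val := rfl

@[simp] lemma theta_symm_val {n β ξ ν : ℕ} (hβ : β < ξ) (hξ : ξ ≤ ν) (hν : ν ≤ n)
    (q : Fin (n+1)) : ((theta n hβ hξ hν).symm q).val = Gm β ξ ν q.val := rfl



lemma lt_last_of_ne {a : Fin (n+1)} (h : a ≠ Fin.last n) : a < Fin.last n :=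
  lt_of_le_of_ne (Fin.le_last a) h

lemma val_lt_of_ne {a : Fin (n+1)} (h : a ≠ Fin.last n) : a.val < n :=
  lt_last_of_ne h

lemma val_succ_of_ne {a : Fin (n+1)} (h : a ≠ Fin.last n) : (a + 1).val = a.val + 1 :=
  Fin.val_add_one_of_lt (lt_last_of_ne h)

lemma last_add_one : (Fin.last n) + 1 = 0 := by
  apply Fin.ext
  rw [Fin.val_add, Fin.val_last, Fin.val_one', Fin.val_zero]
  rcases Nat.eq_zero_or_pos n with h | h
  · subst h; rfl
  · rw [Nat.one_mod_eq_one.mpr (by omega), Nat.mod_self]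

lemma eq_last_of_add_one_eq_zero {a : Fin (n+1)} (h : a + 1 = 0) : a = Fin.last n := by
  by_contra hne
  have := val_succ_of_ne hne
  rw [h] at this
  simp at this

lemma ne_last_of_add_one_ne_zero {a : Fin (n+1)} (h : a + 1 ≠ 0) : a ≠ Fin.last n := by
  intro hEq; exact h (hEq ▸ last_add_one)


lemma mem_MS {A : Finset (Fin (n+1))} {π : Equiv.Perm (Fin (n+1))} :
    π ∈ Finset.univ.filter (fun π : Equiv.Perm (Fin (n+1)) => A ⊆ U π) ↔
      ∀ k ∈ A, π (k + 1) = π k + 1 := by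
  simp only [Finset.mem_filter, Finset.mem_univ, true_and, Finset.subset_iff, mem_U]


lemma fiber_card (A : Finset (Fin (n+1))) (b0 bx nx : Fin (n+1))
    (hb0B : b0 ∈ Aᶜ) (hb0min : ∀ c ∈ Aᶜ, b0 ≤ c)
    (hlastB : Fin.last n ∈ Aᶜ)
    (hbxB : bx ∈ Aᶜ) (hbxlast : bx ≠ Fin.last n)
    (hnxB : nx ∈ Aᶜ) (hxnx : bx + 1 ≤ nx) :
    ∃ Ahat : Finset (Fin (n+1)), Ahatᶜ.card + 1 = Aᶜ.card ∧ Fin.last n ∉ Ahat ∧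
      ((Finset.univ.filter (fun π : Equiv.Perm (Fin (n+1)) => A ⊆ U π)).filter
        (fun π => π.symm (π b0 + 1) = bx + 1)).card = M Ahat := by
  have hb0bx : b0 ≤ bx := hb0min bx hbxB
  have hvx : (bx + 1).val = bx.val + 1 := val_succ_of_ne hbxlast
  have hβ : b0.val < (bx + 1).val := by
    rw [hvx]; exact Nat.lt_succ_of_le hb0bx
  have hξ : (bx + 1).val ≤ nx.val := hxnx
  have hν : nx.val ≤ n := Nat.lt_succ_iff.mp nx.isLt
  set θ := theta n hβ hξ hν with hθdef
  set Bhat := ((Aᶜ).image (fun b => θ.symm b)).erase b0 with hBhatdef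
  have hb0last : b0 ≠ Fin.last n := by
    intro h
    exact hbxlast (le_antisymm (Fin.le_last bx) (h ▸ hb0bx))
  have e1 : θ.symm b0 = b0 := by
    apply Fin.ext
    rw [theta_symm_val]
    unfold Gm; split_ifs <;> omega
  have e2 : b0 ∈ (Aᶜ).image (fun b => θ.symm b) :=
    Finset.mem_image.mpr ⟨b0, hb0B, e1⟩
  have hθlast : θ (Fin.last n) ∈ Aᶜ := by
    rcases lt_or_eq_of_le hν with hlt | hEq
    · have h : θ (Fin.last n) = Fin.last n := by
        apply Fin.ext
        rw [theta_val, Fin.val_last]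
        unfold Fm; split_ifs <;> omega
      rw [h]; exact hlastB
    · by_cases hb : b0.val + 1 = (bx + 1).val
      · have h : θ (Fin.last n) = Fin.last n := by
          apply Fin.ext
          rw [theta_val, Fin.val_last]
          unfold Fm; split_ifs <;> omega
        rw [h]; exact hlastB
      · have h : θ (Fin.last n) = bx := by
          apply Fin.ext
          rw [theta_val, Fin.val_last]
          unfold Fm; split_ifs <;> omega
        rw [h]; exact hbxB
  have hlastBhat : Fin.last n ∈ Bhat :=
    Finset.mem_erase.mpr ⟨Ne.symm hb0last,
      Finset.mem_image.mpr ⟨θ (Fin.last n), hθlast, Equiv.symm_apply_apply _ _⟩⟩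
  have hb0Ahat : b0 ∈ Bhatᶜ :=
    Finset.mem_compl.mpr (Finset.notMem_erase _ _)
  have hb0Ahatcons : b0 ∉ Bhat := Finset.notMem_erase _ _
  refine ⟨Bhatᶜ, ?_, ?_, ?_⟩
  · rw [compl_compl]
    have hc1 : ((Aᶜ).image (fun b => θ.symm b)).card = (Aᶜ).card :=
      Finset.card_image_of_injective _ (Equiv.injective _)
    have hc2 : Bhat.card = ((Aᶜ).image (fun b => θ.symm b)).card - 1 :=
      Finset.card_erase_of_mem e2
    have hpos : 0 < (Aᶜ).card := Finset.card_pos.mpr ⟨b0, hb0B⟩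
    omega
  · intro h
    exact (Finset.mem_compl.mp h) hlastBhat
  · rw [M]
    apply Finset.card_nbij' (i := fun π => θ.trans π) (j := fun ψ => θ.symm.trans ψ)
    · -- forward membership
      intro π hπ
      rw [Finset.mem_coe, Finset.mem_filter] at hπ
      obtain ⟨hπS, hlab⟩ := hπ
      have hcons := mem_MS.mp hπS
      have hxv : π (bx + 1) = π b0 + 1 :=
        ((Equiv.symm_apply_eq π).mp hlab).symm
      rw [Finset.mem_coe, mem_MS]
      intro k hk
      have hkB : k ∉ Bhat := Finset.mem_compl.mp hk
      have hklast : k ≠ Fin.last n := by rintro rfl; exact hkB hlastBhat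
      have hkval : k.val < n := val_lt_of_ne hklast
      simp only [Equiv.trans_apply]
      by_cases hkb0 : k = b0
      · subst hkb0
        have h1 : θ k = k := by
          apply Fin.ext
          rw [theta_val]
          unfold Fm; split_ifs <;> omega
        have h2 : θ (k + 1) = bx + 1 := by
          apply Fin.ext
          rw [theta_val, val_succ_of_ne hb0last, hvx]
          unfold Fm; split_ifs <;> omega
        rw [h1, h2, hxv]
      · have hθkA : θ k ∈ A := by
          by_contra hno
          exact hkB (Finset.mem_erase.mpr ⟨hkb0,
            Finset.mem_image.mpr ⟨θ k, Finset.mem_compl.mpr hno,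
              Equiv.symm_apply_apply _ _⟩⟩)
        have hkβ : k.val ≠ b0.val := fun h => hkb0 (Fin.ext h)
        have hkβd : k.val ≠ b0.val + (nx.val + 1 - (bx + 1).val) := by
          intro hEq
          apply hkB
          have h : θ.symm nx = k := by
            apply Fin.ext
            rw [theta_symm_val]
            unfold Gm; split_ifs <;> omega
          exact Finset.mem_erase.mpr ⟨hkb0, Finset.mem_image.mpr ⟨nx, hnxB, h⟩⟩
        have hkν : b0.val + 1 = (bx + 1).val ∨ k.val ≠ nx.val := by
          by_cases hb : b0.val + 1 = (bx + 1).val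
          · exact Or.inl hb
          · refine Or.inr (fun hEq => ?_)
            apply hkB
            have h : θ.symm bx = k := by
              apply Fin.ext
              rw [theta_symm_val]
              unfold Gm; split_ifs <;> omega
            exact Finset.mem_erase.mpr ⟨hkb0, Finset.mem_image.mpr ⟨bx, hbxB, h⟩⟩
        obtain ⟨hFs, hFlt⟩ := Fm_succ hβ hξ hν hkval hkβ hkβd hkν
        have hθk_ne : θ k ≠ Fin.last n := by
          intro hEq
          have h := congrArg Fin.val hEq
          rw [theta_val, Fin.val_last] at h
          omega
        have h1 : θ (k + 1) = θ k + 1 := by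
          apply Fin.ext
          rw [val_succ_of_ne hθk_ne, theta_val, theta_val, val_succ_of_ne hklast]
          exact hFs
        rw [h1, hcons (θ k) hθkA]
    · -- backward membership
      intro ψ hψ
      have hconsHat := mem_MS.mp hψ
      rw [Finset.mem_coe, Finset.mem_filter]
      constructor
      · rw [mem_MS]
        intro j hjA
        have hjB : j ∉ Aᶜ := fun h => (Finset.mem_compl.mp h) hjA
        have hjb0 : j ≠ b0 := fun h => hjB (h ▸ hb0B)
        have hjbx : j ≠ bx := fun h => hjB (h ▸ hbxB)
        have hjnx : j ≠ nx := fun h => hjB (h ▸ hnxB)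
        have hjlast : j ≠ Fin.last n := fun h => hjB (h ▸ hlastB)
        have hjval : j.val < n := val_lt_of_ne hjlast
        have h1 : j.val ≠ b0.val := fun h => hjb0 (Fin.ext h)
        have h2 : j.val + 1 ≠ (bx + 1).val := by
          rw [hvx]
          intro h
          exact hjbx (Fin.ext (by omega))
        have h3 : j.val ≠ nx.val := fun h => hjnx (Fin.ext h)
        obtain ⟨hGs, hGlt⟩ := Gm_succ hβ hξ hν hjval h1 h2 h3
        have hsym_ne : θ.symm j ≠ Fin.last n := by
          intro hEq
          have h := congrArg Fin.val hEq
          rw [theta_symm_val, Fin.val_last] at h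
          omega
        have h4 : θ.symm (j + 1) = θ.symm j + 1 := by
          apply Fin.ext
          rw [val_succ_of_ne hsym_ne, theta_symm_val, theta_symm_val,
            val_succ_of_ne hjlast]
          exact hGs
        have h5 : θ.symm j ∈ Bhatᶜ := by
          rw [Finset.mem_compl]
          intro hmem
          obtain ⟨b, hbB, hbe⟩ := Finset.mem_image.mp (Finset.mem_erase.mp hmem).2
          exact hjB ((θ.symm.injective hbe) ▸ hbB)
        simp only [Equiv.trans_apply]
        rw [h4]
        exact hconsHat _ h5
      · show (θ.symm.trans ψ).symm ((θ.symm.trans ψ) b0 + 1) = bx + 1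
        rw [Equiv.symm_apply_eq]
        simp only [Equiv.trans_apply]
        have hA : θ.symm (bx + 1) = b0 + 1 := by
          apply Fin.ext
          rw [val_succ_of_ne hb0last, theta_symm_val]
          unfold Gm; split_ifs <;> omega
        rw [e1, hA]
        exact (hconsHat b0 hb0Ahat).symm
    · intro π _
      exact Equiv.ext (fun k => by simp [Equiv.trans_apply])
    · intro ψ _
      exact Equiv.ext (fun k => by simp [Equiv.trans_apply])


lemma chain {A : Finset (Fin (n+1))} {π : Equiv.Perm (Fin (n+1))}
    (hcons : ∀ k ∈ A, π (k + 1) = π k + 1) :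
    ∀ (j : ℕ) (hj : j < n+1), (∀ t (ht : t < j), (⟨t, by omega⟩ : Fin (n+1)) ∈ A) →
      π ⟨j, hj⟩ = π 0 + ⟨j, hj⟩ := by
  intro j
  induction j with
  | zero =>
    intro hj _
    have h0 : (⟨0, hj⟩ : Fin (n+1)) = 0 := rfl
    rw [h0, add_zero]
  | succ t ih =>
    intro hj hmem
    have htj : t < n + 1 := by omega
    have htne : (⟨t, htj⟩ : Fin (n+1)) ≠ Fin.last n := by
      intro h
      have := congrArg Fin.val h
      rw [Fin.val_last] at this
      simp at this; omega
    have hstep : (⟨t, htj⟩ : Fin (n+1)) + 1 = ⟨t+1, hj⟩ := by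
      apply Fin.ext
      rw [val_succ_of_ne htne]
    calc π ⟨t+1, hj⟩ = π ((⟨t, htj⟩ : Fin (n+1)) + 1) := by rw [hstep]
      _ = π ⟨t, htj⟩ + 1 := hcons _ (hmem t (Nat.lt_succ_self t))
      _ = (π 0 + ⟨t, htj⟩) + 1 := by
            rw [ih htj (fun s hs => hmem s (by omega))]
      _ = π 0 + ((⟨t, htj⟩ : Fin (n+1)) + 1) := add_assoc _ _ _
      _ = π 0 + ⟨t+1, hj⟩ := by rw [hstep]

lemma core_base (A : Finset (Fin (n+1))) (hA : Aᶜ = {Fin.last n}) : M A = n + 1 := by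
  have hmemA : ∀ x : Fin (n+1), x ∈ A ↔ x ≠ Fin.last n := by
    intro x
    constructor
    · intro hx hEq
      have : x ∈ Aᶜ := by rw [hA]; simp [hEq]
      exact (Finset.mem_compl.mp this) hx
    · intro hne
      by_contra hx
      have : x ∈ Aᶜ := Finset.mem_compl.mpr hx
      rw [hA, Finset.mem_singleton] at this
      exact hne this
  have h : (Finset.univ.filter (fun π : Equiv.Perm (Fin (n+1)) => A ⊆ U π)).card
      = (Finset.univ : Finset (Fin (n+1))).card := by
    apply Finset.card_nbij' (i := fun π => π 0)
      (j := fun c => (Equiv.addRight c : Equiv.Perm (Fin (n+1))))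
    · intro π _; exact Finset.mem_univ _
    · intro c _
      rw [Finset.mem_coe, mem_MS]
      intro k _
      simp only [Equiv.coe_addRight]
      exact (add_right_comm k c 1).symm
    · intro π hπ
      have hcons := mem_MS.mp hπ
      apply Equiv.ext
      intro k
      simp only [Equiv.coe_addRight]
      have hch := chain hcons k.val k.isLt (fun t ht => by
        apply (hmemA _).mpr
        intro hEq
        have := congrArg Fin.val hEq
        rw [Fin.val_last] at this
        simp at this
        have := k.isLt
        omega)
      rw [Fin.eta] at hch
      rw [hch]
      exact add_comm _ _
    · intro c _
      simp only [Equiv.coe_addRight]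
      exact zero_add c
  rw [M, h, Finset.card_univ, Fintype.card_fin]

lemma core : ∀ (m : ℕ) (A : Finset (Fin (n+1))), Fin.last n ∈ Aᶜ → Aᶜ.card = m →
    M A = (n + 1) * Nat.factorial (m - 1) := by
  intro m
  induction m using Nat.strong_induction_on with
  | _ m ih =>
  intro A hlastB hcard
  rcases Nat.lt_or_ge m 2 with hm | hm
  · have hpos : 0 < Aᶜ.card := Finset.card_pos.mpr ⟨_, hlastB⟩
    have hm1 : m = 1 := by omega
    subst hm1
    obtain ⟨a, ha⟩ := Finset.card_eq_one.mp hcard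
    have haLast : a = Fin.last n := by
      have := hlastB
      rw [ha, Finset.mem_singleton] at this
      exact this.symm
    rw [core_base A (by rw [ha, haLast]), Nat.sub_self, Nat.factorial_zero, mul_one]
  · have hne : (Aᶜ).Nonempty := ⟨_, hlastB⟩
    have hb0B : (Aᶜ).min' hne ∈ Aᶜ := Finset.min'_mem _ hne
    set b0 := (Aᶜ).min' hne with hb0def
    have hb0min : ∀ c ∈ Aᶜ, b0 ≤ c := fun c hc => Finset.min'_le _ c hc
    set X := ((Aᶜ).image (fun c => c + 1)).erase (0 : Fin (n+1)) with hXdef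
    have hfib : (Finset.univ.filter (fun π : Equiv.Perm (Fin (n+1)) => A ⊆ U π)).card
        = ∑ x ∈ X, ((Finset.univ.filter (fun π : Equiv.Perm (Fin (n+1)) => A ⊆ U π)).filter
            (fun π => π.symm (π b0 + 1) = x)).card := by
      apply Finset.card_eq_sum_card_fiberwise
      intro π hπ
      have hcons := mem_MS.mp hπ
      have hxv : π (π.symm (π b0 + 1)) = π b0 + 1 := Equiv.apply_symm_apply π _
      set x := π.symm (π b0 + 1) with hxdef
      have hx0 : x ≠ 0 := by
        intro h0
        rw [h0] at hxv
        have hch := chain hcons b0.val b0.isLt (fun t ht => by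
          by_contra hnA
          have htB : (⟨t, by omega⟩ : Fin (n+1)) ∈ Aᶜ := Finset.mem_compl.mpr hnA
          have := hb0min _ htB
          rw [Fin.le_def] at this
          simp at this
          omega)
        rw [Fin.eta] at hch
        rw [hch, add_assoc] at hxv
        have h1 : b0 + 1 = 0 := left_eq_add.mp hxv
        have h2 : b0 = Fin.last n := eq_last_of_add_one_eq_zero h1
        have hle1 : (Aᶜ).card ≤ 1 := by
          apply Finset.card_le_one.mpr
          intro a ha b hb
          have h3 : a = Fin.last n := le_antisymm (Fin.le_last a) (h2 ▸ hb0min a ha)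
          have h4 : b = Fin.last n := le_antisymm (Fin.le_last b) (h2 ▸ hb0min b hb)
          rw [h3, h4]
        omega
      have hxv' : x.val ≠ 0 := fun h => hx0 (Fin.ext h)
      have hxB : ∃ b ∈ Aᶜ, b + 1 = x := by
        refine ⟨⟨x.val - 1, by omega⟩, ?_, ?_⟩
        · by_contra hnB
          have hbA : (⟨x.val - 1, by omega⟩ : Fin (n+1)) ∈ A := by
            by_contra h
            exact hnB (Finset.mem_compl.mpr h)
          have hb1 : (⟨x.val - 1, by omega⟩ : Fin (n+1)) + 1 = x := by
            apply Fin.ext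
            rw [val_succ_of_ne (by
              intro h
              have := congrArg Fin.val h
              rw [Fin.val_last] at this
              simp at this
              have := x.isLt
              omega)]
            simp
            omega
          have := hcons _ hbA
          rw [hb1, hxv] at this
          have heq : π (⟨x.val - 1, by omega⟩ : Fin (n+1)) = π b0 :=
            add_right_cancel this.symm
          have : (⟨x.val - 1, by omega⟩ : Fin (n+1)) = b0 := π.injective heq
          rw [← this] at hb0B
          exact hnB hb0B
        · apply Fin.ext
          rw [val_succ_of_ne (by
            intro h
            have := congrArg Fin.val h
            rw [Fin.val_last] at this
            simp at this
            have := x.isLt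
            omega)]
          simp
          omega
      rw [hXdef, Finset.mem_coe]
      apply Finset.mem_erase.mpr
      refine ⟨hx0, ?_⟩
      obtain ⟨b, hbB, hb1⟩ := hxB
      exact Finset.mem_image.mpr ⟨b, hbB, hb1⟩
    have hfibval : ∀ x ∈ X,
        ((Finset.univ.filter (fun π : Equiv.Perm (Fin (n+1)) => A ⊆ U π)).filter
            (fun π => π.symm (π b0 + 1) = x)).card = (n+1) * Nat.factorial (m - 2) := by
      intro x hx
      rw [hXdef] at hx
      have hx0 : x ≠ 0 := (Finset.mem_erase.mp hx).1
      obtain ⟨b, hbB, hb1⟩ := Finset.mem_image.mp (Finset.mem_erase.mp hx).2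
      have hbxlast : b ≠ Fin.last n := by
        intro h
        rw [h, last_add_one] at hb1
        exact hx0 hb1.symm
      have hnxmem : Fin.last n ∈ (Aᶜ).filter (fun c => b + 1 ≤ c) :=
        Finset.mem_filter.mpr ⟨hlastB, Fin.le_last _⟩
      set nx := ((Aᶜ).filter (fun c => b + 1 ≤ c)).min' ⟨_, hnxmem⟩ with hnxdef
      have hnxB : nx ∈ Aᶜ := (Finset.mem_filter.mp (Finset.min'_mem _ _)).1
      have hxnx : b + 1 ≤ nx := (Finset.mem_filter.mp (Finset.min'_mem _ _)).2
      obtain ⟨Ahat, hc, hl, he⟩ :=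
        fiber_card A b0 b nx hb0B hb0min hlastB hbB hbxlast hnxB hxnx
      rw [← hb1, he]
      have hAcard : Ahatᶜ.card = m - 1 := by omega
      have := ih (m-1) (by omega) Ahat (Finset.mem_compl.mpr hl) hAcard
      rw [this]
      congr 2
    have hXcard : X.card = m - 1 := by
      have h0 : (0 : Fin (n+1)) ∈ (Aᶜ).image (fun c => c + 1) :=
        Finset.mem_image.mpr ⟨Fin.last n, hlastB, last_add_one⟩
      rw [hXdef, Finset.card_erase_of_mem h0,
        Finset.card_image_of_injective _ (add_left_injective 1), hcard]
    rw [M, hfib, Finset.sum_congr rfl hfibval, Finset.sum_const, hXcard, smul_eq_mul]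
    have hfac : Nat.factorial (m-1) = (m-1) * Nat.factorial (m-2) := by
      have h : m - 1 = (m - 2) + 1 := by omega
      have h2 : m - 2 + 1 = m - 1 := by omega
      rw [h, Nat.factorial_succ, h2]
    rw [hfac]
    ring

lemma Mrot (c : Fin (n+1)) (A : Finset (Fin (n+1))) :
    M (A.image (fun k => k + c)) = M A := by
  rw [M, M]
  apply Finset.card_nbij' (i := fun π => (Equiv.addRight c).trans π)
    (j := fun ψ => (Equiv.addRight c).symm.trans ψ)
  · intro π hπ
    have hcons := mem_MS.mp hπ
    rw [Finset.mem_coe, mem_MS]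
    intro k hk
    simp only [Equiv.trans_apply, Equiv.coe_addRight]
    have h1 : (k + 1) + c = (k + c) + 1 := add_right_comm k 1 c
    rw [h1]
    exact hcons _ (Finset.mem_image.mpr ⟨k, hk, rfl⟩)
  · intro ψ hψ
    have hcons := mem_MS.mp hψ
    rw [Finset.mem_coe, mem_MS]
    intro j hj
    obtain ⟨k, hk, rfl⟩ := Finset.mem_image.mp hj
    simp only [Equiv.trans_apply, Equiv.symm_apply_eq, Equiv.coe_addRight]
    have h1 : (Equiv.addRight c).symm (k + c) = k := by
      simp [Equiv.symm_apply_eq]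
    have h2 : (Equiv.addRight c).symm ((k + c) + 1) = k + 1 := by
      rw [← add_right_comm k 1 c]
      simp [Equiv.symm_apply_eq]
    rw [h1, h2]
    exact hcons _ hk
  · intro π _
    exact Equiv.ext (fun k => by simp)
  · intro ψ _
    exact Equiv.ext (fun k => by simp)

lemma Mval (A : Finset (Fin (n+1))) (hA : A ≠ Finset.univ) :
    M A = (n + 1) * Nat.factorial (Aᶜ.card - 1) := by
  have hex : ∃ b, b ∈ Aᶜ := by
    by_contra h
    push_neg at h
    apply hA
    apply Finset.eq_univ_iff_forall.mpr
    intro x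
    by_contra hx
    exact h x (Finset.mem_compl.mpr hx)
  obtain ⟨b, hb⟩ := hex
  set c := Fin.last n - b with hcdef
  have hbc : b + c = Fin.last n := by rw [hcdef, add_sub_cancel]
  have h2 : Fin.last n ∈ (A.image (fun k => k + c))ᶜ := by
    rw [Finset.mem_compl]
    intro hmem
    obtain ⟨a, haA, hac⟩ := Finset.mem_image.mp hmem
    have : a = b := by
      have : a + c = b + c := by rw [hac, hbc]
      exact add_right_cancel this
    rw [this] at haA
    exact (Finset.mem_compl.mp hb) haA
  have h3 : (A.image (fun k => k + c))ᶜ.card = Aᶜ.card := by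
    rw [Finset.card_compl, Finset.card_compl,
      Finset.card_image_of_injective _ (add_left_injective c)]
  rw [← Mrot c A, core ((A.image (fun k => k + c))ᶜ.card) _ h2 rfl, h3]

lemma Minv (σ : Equiv.Perm (Fin (n+1))) (A : Finset (Fin (n+1))) :
    M (A.image σ) = M A := by
  by_cases hA : A = Finset.univ
  · subst hA
    rw [Finset.image_univ_equiv]
  · have hA2 : A.image σ ≠ Finset.univ := by
      intro h
      apply hA
      apply Finset.eq_univ_of_card
      rw [← Finset.card_image_of_injective A σ.injective, h, Finset.card_univ]
    rw [Mval _ hA, Mval _ hA2, Finset.card_compl, Finset.card_compl,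
      Finset.card_image_of_injective A σ.injective]

end S11

/-- The random set `U_n = {k ∈ [n] : Π(k+1 mod n) = Π(k)+1 mod n}`, for `Π` uniform on
`S_n`, is exchangeable: for every bijection `σ` of `[n]` and every `A ⊆ [n]`,
`P{U_n = σ(A)} = P{U_n = A}` (stated as the equivalent counting identity). -/
theorem stmt11 (n : ℕ) (σ : Equiv.Perm (Fin n)) (A : Finset (Fin n)) :
    (Finset.univ.filter (fun π : Equiv.Perm (Fin n) =>
      Finset.univ.filter (fun k : Fin n => π (cyclicSucc k) = cyclicSucc (π k))
        = A.image σ)).card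
    =
    (Finset.univ.filter (fun π : Equiv.Perm (Fin n) =>
      Finset.univ.filter (fun k : Fin n => π (cyclicSucc k) = cyclicSucc (π k))
        = A)).card := by
  cases n with
  | zero =>
    have hA : A = ∅ := Finset.eq_empty_of_isEmpty A
    have h2 : A.image σ = A := by rw [hA]; simp
    rw [h2]
  | succ n =>
    simp only [S11.cyclicSucc_eq]
    show S11.N (A.image σ) = S11.N A
    exact S11.Ninv (fun σ A => S11.Minv σ A) (Aᶜ.card) A σ le_rfl
end

section
/- Let C_n denote the set of n-cycles in S_n and, for an n-cycle σ, let Θ_n(σ) = {j ∈ [n] : σ(j) = j+1 mod n}. Then for any subset {k_1,...,k_m} ⊆ [n], #{τ ∈ C_n : Θ_n(τ) = {k_1,...,k_m}} = #{σ ∈ C_{n-m} : Θ_{n-m}(σ) = ∅}. -/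
/-- `σ` consists of a single cycle through all of `Fin n` (an `n`-cycle). -/
def IsFullCycle {n : ℕ} (σ : Equiv.Perm (Fin n)) : Prop :=
  ∀ x y : Fin n, ∃ i : ℕ, (σ ^ i) x = y

open Fin.NatCast Fin.CommRing

lemma cyclicSucc_eq {n : ℕ} [NeZero n] (j : Fin n) : cyclicSucc j = j + 1 := by
  apply Fin.ext
  simp [cyclicSucc, Fin.add_def, Fin.val_one', Nat.add_mod_mod]

section
variable {n : ℕ} [NeZero n] (K : Finset (Fin n))

lemma exE (hK : ∃ y : Fin n, y ∉ K) (z : Fin n) : ∃ t : ℕ, z + (t : Fin n) ∉ K := by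
  obtain ⟨y, hy⟩ := hK
  exact ⟨(y - z).val, by rwa [Fin.cast_val_eq_self, show z + (y - z) = y by ring]⟩

noncomputable def rE (hK : ∃ y : Fin n, y ∉ K) (z : Fin n) : Fin n :=
  z + (Nat.find (exE K hK z) : Fin n)

lemma rE_notMem (hK : ∃ y : Fin n, y ∉ K) (z : Fin n) : rE K hK z ∉ K := Nat.find_spec (exE K hK z)

lemma mem_of_lt_find_rE (hK : ∃ y : Fin n, y ∉ K) {z : Fin n} {i : ℕ} (h : i < Nat.find (exE K hK z)) :
    z + (i : Fin n) ∈ K := by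
  have := Nat.find_min (exE K hK z) h; simpa using this

lemma find_rE_eq (hK : ∃ y : Fin n, y ∉ K) {z : Fin n} {t : ℕ} (h1 : ∀ i < t, z + (i : Fin n) ∈ K)
    (h2 : z + (t : Fin n) ∉ K) : Nat.find (exE K hK z) = t := by
  refine le_antisymm (Nat.find_le h2) (le_of_not_gt fun h => ?_)
  exact Nat.find_spec (exE K hK z) (h1 _ h)

lemma rE_eq (hK : ∃ y : Fin n, y ∉ K) {z : Fin n} {t : ℕ} (h1 : ∀ i < t, z + (i : Fin n) ∈ K)
    (h2 : z + (t : Fin n) ∉ K) : rE K hK z = z + (t : Fin n) := by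
  rw [rE, find_rE_eq K hK h1 h2]

lemma rE_self (hK : ∃ y : Fin n, y ∉ K) {z : Fin n} (hz : z ∉ K) : rE K hK z = z := by
  have := rE_eq K hK (t := 0) (by omega) (by simpa using hz)
  simpa using this

lemma exS (hK : ∃ y : Fin n, y ∉ K) (z : Fin n) : ∃ s : ℕ, z - ((s + 1 : ℕ) : Fin n) ∉ K := by
  obtain ⟨y, hy⟩ := hK
  refine ⟨(z - y - 1).val, ?_⟩
  have : (((z - y - 1).val + 1 : ℕ) : Fin n) = z - y := by
    push_cast [Fin.cast_val_eq_self]; ring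
  rwa [this, show z - (z - y) = y by ring]

noncomputable def rS (hK : ∃ y : Fin n, y ∉ K) (z : Fin n) : Fin n := z - (Nat.find (exS K hK z) : Fin n)

lemma rS_sub_one_notMem (hK : ∃ y : Fin n, y ∉ K) (z : Fin n) : rS K hK z - 1 ∉ K := by
  have h := Nat.find_spec (exS K hK z)
  rw [rS]
  convert h using 2
  push_cast; ring

lemma mem_of_lt_find_rS (hK : ∃ y : Fin n, y ∉ K) {z : Fin n} {i : ℕ} (h : i < Nat.find (exS K hK z)) :
    z - ((i + 1 : ℕ) : Fin n) ∈ K := by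
  have := Nat.find_min (exS K hK z) h; simpa using this

lemma find_rS_eq (hK : ∃ y : Fin n, y ∉ K) {z : Fin n} {s : ℕ} (h1 : ∀ i < s, z - ((i + 1 : ℕ) : Fin n) ∈ K)
    (h2 : z - ((s + 1 : ℕ) : Fin n) ∉ K) : Nat.find (exS K hK z) = s := by
  refine le_antisymm (Nat.find_le h2) (le_of_not_gt fun h => ?_)
  exact Nat.find_spec (exS K hK z) (h1 _ h)

lemma rS_eq (hK : ∃ y : Fin n, y ∉ K) {z : Fin n} {s : ℕ} (h1 : ∀ i < s, z - ((i + 1 : ℕ) : Fin n) ∈ K)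
    (h2 : z - ((s + 1 : ℕ) : Fin n) ∉ K) : rS K hK z = z - (s : Fin n) := by
  rw [rS, find_rS_eq K hK h1 h2]

lemma rS_rE (hK : ∃ y : Fin n, y ∉ K) {z : Fin n} (hz : z - 1 ∉ K) : rS K hK (rE K hK z) = z := by
  set T := Nat.find (exE K hK z) with hT
  have hre : rE K hK z = z + (T : Fin n) := rfl
  have h1 : ∀ i < T, (z + (T : Fin n)) - ((i + 1 : ℕ) : Fin n) ∈ K := by
    intro i hi
    have hc : ((T - (i + 1) : ℕ) : Fin n) = (T : Fin n) - ((i + 1 : ℕ) : Fin n) :=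
      Nat.cast_sub (by omega)
    have := mem_of_lt_find_rE K hK (z := z) (i := T - (i + 1)) (by omega)
    rwa [hc, show z + ((T : Fin n) - ((i + 1 : ℕ) : Fin n)) = z + (T : Fin n) - ((i + 1 : ℕ) : Fin n) by ring] at this
  have h2 : (z + (T : Fin n)) - ((T + 1 : ℕ) : Fin n) ∉ K := by
    have : (z + (T : Fin n)) - ((T + 1 : ℕ) : Fin n) = z - 1 := by push_cast; ring
    rwa [this]
  rw [hre, rS_eq K hK h1 h2]; ring

lemma rE_rS (hK : ∃ y : Fin n, y ∉ K) {z : Fin n} (hz : z ∉ K) : rE K hK (rS K hK z) = z := by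
  set S := Nat.find (exS K hK z) with hS
  have hrs : rS K hK z = z - (S : Fin n) := rfl
  have h1 : ∀ i < S, (z - (S : Fin n)) + (i : Fin n) ∈ K := by
    intro i hi
    have := mem_of_lt_find_rS K hK (z := z) (i := S - i - 1) (by omega)
    have hc : ((S - i - 1 + 1 : ℕ) : Fin n) = (S : Fin n) - (i : Fin n) := by
      rw [show S - i - 1 + 1 = S - i by omega, Nat.cast_sub (by omega)]
    rwa [hc, show z - ((S : Fin n) - (i : Fin n)) = z - (S : Fin n) + (i : Fin n) by ring] at this
  have h2 : (z - (S : Fin n)) + (S : Fin n) ∉ K := by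
    rwa [show z - (S : Fin n) + (S : Fin n) = z by ring]
  rw [hrs, rE_eq K hK h1 h2]; ring

lemma rE_succ (hK : ∃ y : Fin n, y ∉ K) {z : Fin n} (hz : z ∈ K) : rE K hK (z + 1) = rE K hK z := by
  set T := Nat.find (exE K hK z) with hT
  have hTpos : 0 < T := by
    rcases Nat.eq_zero_or_pos T with h | h
    · exfalso
      have := Nat.find_spec (exE K hK z)
      rw [← hT, h] at this
      simp at this
      exact this hz
    · exact h
  have h1 : ∀ i < T - 1, (z + 1) + (i : Fin n) ∈ K := by
    intro i hi
    have := mem_of_lt_find_rE K hK (z := z) (i := i + 1) (by omega)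
    rwa [show z + ((i + 1 : ℕ) : Fin n) = z + 1 + (i : Fin n) by push_cast; ring] at this
  have h2 : (z + 1) + ((T - 1 : ℕ) : Fin n) ∉ K := by
    have hc : ((T - 1 : ℕ) : Fin n) = (T : Fin n) - 1 := by
      rw [Nat.cast_sub (by omega)]; norm_num
    rw [hc, show z + 1 + ((T : Fin n) - 1) = z + (T : Fin n) by ring]
    exact Nat.find_spec (exE K hK z)
  rw [rE_eq K hK h1 h2]
  have hc : ((T - 1 : ℕ) : Fin n) = (T : Fin n) - 1 := by
    rw [Nat.cast_sub (by omega)]; norm_num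
  rw [rE, ← hT, hc]; ring

lemma val_add_cast (x : Fin n) (i : ℕ) : (x + (i : Fin n)).val = (x.val + i) % n := by
  rw [Fin.add_def, Fin.val_natCast, Nat.add_mod x.val i, Nat.mod_eq_of_lt x.isLt]

lemma pow_eq_of_mem (τ : Equiv.Perm (Fin n)) (hτ : ∀ k ∈ K, τ k = k + 1) {z : Fin n} {t : ℕ}
    (h1 : ∀ i < t, z + (i : Fin n) ∈ K) : (τ ^ t) z = z + (t : Fin n) := by
  induction t with
  | zero => simp
  | succ t ih =>
    rw [pow_succ', Equiv.Perm.mul_apply, ih (fun i hi => h1 i (by omega)),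
      hτ _ (h1 t (by omega))]
    push_cast; ring

lemma pow_find_rE (hK : ∃ y : Fin n, y ∉ K) (τ : Equiv.Perm (Fin n))
    (hτ : ∀ k ∈ K, τ k = k + 1) (z : Fin n) :
    (τ ^ (Nat.find (exE K hK z))) z = rE K hK z :=
  pow_eq_of_mem K τ hτ (fun _ hi => mem_of_lt_find_rE K hK hi)

noncomputable def eIso : Fin Kᶜ.card ≃o {x // x ∈ Kᶜ} := Kᶜ.orderIsoOfFin rfl

lemma eIso_coe_notMem (a : Fin Kᶜ.card) : (eIso K a : Fin n) ∉ K :=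
  Finset.mem_compl.mp (eIso K a).2

lemma eIso_cyclicSucc (hK : ∃ y : Fin n, y ∉ K) (a : Fin Kᶜ.card) :
    rE K hK ((eIso K a : Fin n) + 1) = (eIso K (cyclicSucc a) : Fin n) := by
  set x : Fin n := (eIso K a : Fin n) with hx
  set y : Fin n := (eIso K (cyclicSucc a) : Fin n) with hy
  have hyK : y ∉ K := eIso_coe_notMem K _
  have hxK : x ∉ K := eIso_coe_notMem K _
  have key : ∀ z : Fin n, z ∉ K → ∃ b : Fin Kᶜ.card, (eIso K b : Fin n) = z := by
    intro z hz
    exact ⟨(eIso K).symm ⟨z, Finset.mem_compl.mpr hz⟩, by simp⟩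
  by_cases ha : a.val + 1 < Kᶜ.card
  · have hsv : (cyclicSucc a).val = a.val + 1 := by
      simp [cyclicSucc, Nat.mod_eq_of_lt ha]
    have haa : a < cyclicSucc a := by
      rw [Fin.lt_iff_val_lt_val, hsv]; omega
    have hxy : x < y := by
      rw [hx, hy, Subtype.coe_lt_coe]
      exact (eIso K).lt_iff_lt.mpr haa
    have hxyv : x.val < y.val := hxy
    set t := y.val - x.val - 1 with ht
    have h2 : x + 1 + (t : Fin n) = y := by
      have : x + 1 + (t : Fin n) = x + ((t + 1 : ℕ) : Fin n) := by push_cast; ring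
      rw [this]
      apply Fin.ext
      rw [val_add_cast]
      have : x.val + (t + 1) = y.val := by omega
      rw [this, Nat.mod_eq_of_lt y.isLt]
    have h1 : ∀ i < t, (x + 1) + (i : Fin n) ∈ K := by
      intro i hi
      by_contra hzK
      set z : Fin n := x + 1 + (i : Fin n) with hz
      have hzval : z.val = x.val + i + 1 := by
        have : z = x + ((i + 1 : ℕ) : Fin n) := by rw [hz]; push_cast; ring
        rw [this, val_add_cast, Nat.mod_eq_of_lt (by omega)]
        omega
      obtain ⟨b, hb⟩ := key z hzK
      have h3 : a < b := by
        have : x < z := by rw [Fin.lt_iff_val_lt_val, hzval]; omega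
        rw [← hb] at this
        exact (eIso K).lt_iff_lt.mp (Subtype.coe_lt_coe.mp this)
      have h4 : b < cyclicSucc a := by
        have : z < y := by rw [Fin.lt_iff_val_lt_val, hzval]; omega
        rw [← hb] at this
        exact (eIso K).lt_iff_lt.mp (Subtype.coe_lt_coe.mp this)
      rw [Fin.lt_iff_val_lt_val] at h3 h4
      omega
    rw [rE_eq K hK h1 (by rw [h2]; exact hyK), h2]
  · have hac : a.val + 1 = Kᶜ.card := by have := a.isLt; omega
    have hsv : (cyclicSucc a).val = 0 := by
      simp [cyclicSucc, hac]
    have hmax : ∀ z : Fin n, z ∉ K → z.val ≤ x.val := by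
      intro z hz
      obtain ⟨b, hb⟩ := key z hz
      have hba : b ≤ a := by
        rw [Fin.le_iff_val_le_val]; have := b.isLt; omega
      have := (eIso K).le_iff_le.mpr hba
      rw [← hb, hx]
      exact Subtype.coe_le_coe.mpr this
    have hmin : ∀ z : Fin n, z ∉ K → y.val ≤ z.val := by
      intro z hz
      obtain ⟨b, hb⟩ := key z hz
      have hba : cyclicSucc a ≤ b := by
        rw [Fin.le_iff_val_le_val, hsv]; omega
      have := (eIso K).le_iff_le.mpr hba
      rw [← hb, hy]
      exact Subtype.coe_le_coe.mpr this
    have hyx : y.val ≤ x.val := hmax y hyK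
    set t := y.val + n - x.val - 1 with ht
    have hxn := x.isLt
    have hyn := y.isLt
    have h2 : x + 1 + (t : Fin n) = y := by
      have : x + 1 + (t : Fin n) = x + ((t + 1 : ℕ) : Fin n) := by push_cast; ring
      rw [this]
      apply Fin.ext
      rw [val_add_cast]
      have h5 : x.val + (t + 1) = y.val + n := by omega
      rw [h5, Nat.add_mod_right, Nat.mod_eq_of_lt hyn]
    have h1 : ∀ i < t, (x + 1) + (i : Fin n) ∈ K := by
      intro i hi
      by_contra hzK
      set z : Fin n := x + 1 + (i : Fin n) with hz
      have hzval : z.val = (x.val + i + 1) % n := by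
        have : z = x + ((i + 1 : ℕ) : Fin n) := by rw [hz]; push_cast; ring
        rw [this, val_add_cast]
        congr 1 <;> omega
      have hle := hmax z hzK
      have hge := hmin z hzK
      by_cases hcase : x.val + i + 1 < n
      · rw [Nat.mod_eq_of_lt hcase] at hzval
        omega
      · have h6 : (x.val + i + 1) % n = x.val + i + 1 - n := by
          rw [Nat.mod_eq_sub_mod (by omega), Nat.mod_eq_of_lt (by omega)]
        rw [h6] at hzval
        omega
    rw [rE_eq K hK h1 (by rw [h2]; exact hyK), h2]

section Forward

variable (hK : ∃ y : Fin n, y ∉ K) (τ : Equiv.Perm (Fin n))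

lemma sub_one_notMem (hΘ : ∀ j : Fin n, τ j = j + 1 ↔ j ∈ K) {x : Fin n} (hx : x ∉ K) :
    τ x - 1 ∉ K := by
  intro h
  have h2 : τ (τ x - 1) = τ x := by rw [(hΘ _).mpr h]; ring
  have := τ.injective h2
  rw [← this] at hx
  exact hx h

noncomputable def fwdFun : Fin Kᶜ.card → Fin Kᶜ.card := fun a =>
  (eIso K).symm ⟨rE K hK (τ ((eIso K a : Fin n))), Finset.mem_compl.mpr (rE_notMem K hK _)⟩

lemma fwdFun_coe (a : Fin Kᶜ.card) :
    (eIso K (fwdFun K hK τ a) : Fin n) = rE K hK (τ ((eIso K a : Fin n))) := by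
  simp [fwdFun]

lemma fwdFun_injective (hΘ : ∀ j : Fin n, τ j = j + 1 ↔ j ∈ K) :
    Function.Injective (fwdFun K hK τ) := by
  intro a b h
  have h2 : rE K hK (τ ((eIso K a : Fin n))) = rE K hK (τ ((eIso K b : Fin n))) := by
    rw [← fwdFun_coe K hK τ a, ← fwdFun_coe K hK τ b, h]
  have h3 := congrArg (rS K hK) h2
  rw [rS_rE K hK (sub_one_notMem K τ hΘ (eIso_coe_notMem K a)),
    rS_rE K hK (sub_one_notMem K τ hΘ (eIso_coe_notMem K b))] at h3
  have h4 := τ.injective h3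
  exact (eIso K).injective (Subtype.ext h4)

noncomputable def fwd (hΘ : ∀ j : Fin n, τ j = j + 1 ↔ j ∈ K) : Equiv.Perm (Fin Kᶜ.card) :=
  Equiv.ofBijective _ (Finite.injective_iff_bijective.mp (fwdFun_injective K hK τ hΘ))

lemma fwd_apply (hΘ : ∀ j : Fin n, τ j = j + 1 ↔ j ∈ K) (a : Fin Kᶜ.card) :
    fwd K hK τ hΘ a = fwdFun K hK τ a := rfl

lemma fwd_no_succ (hΘ : ∀ j : Fin n, τ j = j + 1 ↔ j ∈ K) (a : Fin Kᶜ.card) :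
    fwd K hK τ hΘ a ≠ cyclicSucc a := by
  intro h
  have h2 : rE K hK (τ ((eIso K a : Fin n))) = rE K hK ((eIso K a : Fin n) + 1) := by
    rw [← fwdFun_coe K hK τ a, ← fwd_apply K hK τ hΘ, h, eIso_cyclicSucc K hK a]
  have h3 := congrArg (rS K hK) h2
  rw [rS_rE K hK (sub_one_notMem K τ hΘ (eIso_coe_notMem K a)),
    rS_rE K hK (by rw [add_sub_cancel_right]; exact eIso_coe_notMem K a)] at h3
  exact eIso_coe_notMem K a ((hΘ _).mp h3)

lemma fwd_pow_coe (hΘ : ∀ j : Fin n, τ j = j + 1 ↔ j ∈ K) (i : ℕ) (a : Fin Kᶜ.card) :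
    (eIso K (((fwd K hK τ hΘ) ^ i) a) : Fin n)
      = (fun z => rE K hK (τ z))^[i] ((eIso K a : Fin n)) := by
  induction i with
  | zero => simp
  | succ i ih =>
    rw [pow_succ', Equiv.Perm.mul_apply, fwd_apply, fwdFun_coe,
      Function.iterate_succ_apply', ← ih]

lemma reach (hΘ : ∀ j : Fin n, τ j = j + 1 ↔ j ∈ K) {x : Fin n} (hx : x ∉ K) (i : ℕ) :
    ∃ j, (fun z => rE K hK (τ z))^[j] x = rE K hK ((τ ^ i) x) := by
  induction i with
  | zero => exact ⟨0, by simp [rE_self K hK hx]⟩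
  | succ i ih =>
    obtain ⟨j, hj⟩ := ih
    rw [pow_succ', Equiv.Perm.mul_apply]
    by_cases hz : (τ ^ i) x ∈ K
    · refine ⟨j, ?_⟩
      rw [(hΘ _).mpr hz, rE_succ K hK hz, hj]
    · refine ⟨j + 1, ?_⟩
      rw [Function.iterate_succ_apply', hj, rE_self K hK hz]

lemma fwd_full (hΘ : ∀ j : Fin n, τ j = j + 1 ↔ j ∈ K) (hfull : IsFullCycle τ) :
    IsFullCycle (fwd K hK τ hΘ) := by
  intro a b
  obtain ⟨i, hi⟩ := hfull ((eIso K a : Fin n)) ((eIso K b : Fin n))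
  obtain ⟨j, hj⟩ := reach K hK τ hΘ (eIso_coe_notMem K a) i
  refine ⟨j, ?_⟩
  rw [hi, rE_self K hK (eIso_coe_notMem K b)] at hj
  have := (fwd_pow_coe K hK τ hΘ j a).trans hj
  exact (eIso K).injective (Subtype.ext this)

end Forward

section Backward

variable (hK : ∃ y : Fin n, y ∉ K) (σ : Equiv.Perm (Fin Kᶜ.card))

noncomputable def Gfun : Fin n → Fin n := fun z =>
  if h : z ∈ K then z else (eIso K (σ ((eIso K).symm ⟨z, Finset.mem_compl.mpr h⟩)) : Fin n)

lemma Gfun_notMem {z : Fin n} (hz : z ∉ K) : Gfun K σ z ∉ K := by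
  rw [Gfun, dif_neg hz]
  exact eIso_coe_notMem K _

lemma Gfun_coe (a : Fin Kᶜ.card) : Gfun K σ ((eIso K a : Fin n)) = (eIso K (σ a) : Fin n) := by
  rw [Gfun, dif_neg (eIso_coe_notMem K a)]
  congr 2
  exact congrArg σ ((eIso K).symm_apply_apply a)

noncomputable def bwdFun : Fin n → Fin n := fun z =>
  if z ∈ K then z + 1 else rS K hK (Gfun K σ z)

noncomputable def bwdInv : Fin n → Fin n := fun y =>
  if y - 1 ∈ K then y - 1
  else (eIso K (σ.symm ((eIso K).symm ⟨rE K hK y, Finset.mem_compl.mpr (rE_notMem K hK y)⟩)) : Fin n)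

lemma bwd_left_inv : Function.LeftInverse (bwdInv K hK σ) (bwdFun K hK σ) := by
  intro z
  by_cases hz : z ∈ K
  · rw [bwdFun, if_pos hz, bwdInv, if_pos (by rwa [add_sub_cancel_right])]
    ring
  · have hG : Gfun K σ z ∉ K := Gfun_notMem K σ hz
    rw [bwdFun, if_neg hz, bwdInv, if_neg (rS_sub_one_notMem K hK _)]
    have h1 : rE K hK (rS K hK (Gfun K σ z)) = Gfun K σ z := rE_rS K hK hG
    have h2 : (⟨rE K hK (rS K hK (Gfun K σ z)), Finset.mem_compl.mpr (rE_notMem K hK _)⟩ :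
        {x // x ∈ Kᶜ}) = ⟨Gfun K σ z, Finset.mem_compl.mpr hG⟩ := Subtype.ext h1
    rw [h2]
    have h3 : (⟨Gfun K σ z, Finset.mem_compl.mpr hG⟩ : {x // x ∈ Kᶜ})
        = eIso K (σ ((eIso K).symm ⟨z, Finset.mem_compl.mpr hz⟩)) := by
      apply Subtype.ext
      simp only [Gfun, dif_neg hz]
    rw [h3]
    simp

lemma bwd_right_inv : Function.RightInverse (bwdInv K hK σ) (bwdFun K hK σ) := by
  intro y
  by_cases hy : y - 1 ∈ K
  · rw [bwdInv, if_pos hy, bwdFun, if_pos hy]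
    ring
  · rw [bwdInv, if_neg hy]
    set b := σ.symm ((eIso K).symm ⟨rE K hK y, Finset.mem_compl.mpr (rE_notMem K hK y)⟩) with hb
    rw [bwdFun, if_neg (eIso_coe_notMem K b), Gfun_coe, hb]
    simp only [Equiv.apply_symm_apply, OrderIso.apply_symm_apply]
    exact rS_rE K hK hy

noncomputable def bwd : Equiv.Perm (Fin n) :=
  ⟨bwdFun K hK σ, bwdInv K hK σ, bwd_left_inv K hK σ, bwd_right_inv K hK σ⟩

lemma bwd_mem {k : Fin n} (hk : k ∈ K) : bwd K hK σ k = k + 1 := by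
  show bwdFun K hK σ k = k + 1
  rw [bwdFun, if_pos hk]

lemma bwd_notMem {z : Fin n} (hz : z ∉ K) : bwd K hK σ z = rS K hK (Gfun K σ z) := by
  show bwdFun K hK σ z = _
  rw [bwdFun, if_neg hz]

lemma bwd_theta (hσ : ∀ a : Fin Kᶜ.card, σ a ≠ cyclicSucc a) (z : Fin n) :
    bwd K hK σ z = z + 1 ↔ z ∈ K := by
  constructor
  · intro h
    by_contra hz
    set a := (eIso K).symm ⟨z, Finset.mem_compl.mpr hz⟩ with ha
    have hza : (eIso K a : Fin n) = z := by rw [ha]; simp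
    rw [bwd_notMem K hK σ hz] at h
    have h2 := congrArg (rE K hK) h
    rw [rE_rS K hK (Gfun_notMem K σ hz)] at h2
    rw [← hza, Gfun_coe, eIso_cyclicSucc K hK a] at h2
    exact hσ a ((eIso K).injective (Subtype.ext h2))
  · exact fun h => bwd_mem K hK σ h

lemma mem_of_lt_find_rS' (hK : ∃ y : Fin n, y ∉ K) {z : Fin n} {i : ℕ}
    (hi : i < Nat.find (exS K hK z)) : rS K hK z + (i : Fin n) ∈ K := by
  set S := Nat.find (exS K hK z) with hS
  have := mem_of_lt_find_rS K hK (z := z) (i := S - i - 1) (by omega)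
  have hc : ((S - i - 1 + 1 : ℕ) : Fin n) = (S : Fin n) - (i : Fin n) := by
    rw [show S - i - 1 + 1 = S - i by omega, Nat.cast_sub (by omega)]
  rwa [hc, show z - ((S : Fin n) - (i : Fin n)) = z - (S : Fin n) + (i : Fin n) by ring] at this

lemma rS_add_find (hK : ∃ y : Fin n, y ∉ K) (z : Fin n) :
    rS K hK z + ((Nat.find (exS K hK z) : ℕ) : Fin n) = z := by
  rw [rS]; ring

lemma bwd_pow_rS (z : Fin n) :
    ((bwd K hK σ) ^ (Nat.find (exS K hK z))) (rS K hK z) = z := by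
  have := pow_eq_of_mem K (bwd K hK σ) (fun k hk => bwd_mem K hK σ hk)
    (z := rS K hK z) (t := Nat.find (exS K hK z))
    (fun i hi => mem_of_lt_find_rS' K hK hi)
  rw [this, rS_add_find]

lemma bwd_step {z : Fin n} (hz : z ∉ K) :
    ∃ r, ((bwd K hK σ) ^ r) z = Gfun K σ z := by
  refine ⟨Nat.find (exS K hK (Gfun K σ z)) + 1, ?_⟩
  rw [pow_succ, Equiv.Perm.mul_apply]
  have h1 : (bwd K hK σ) z = rS K hK (Gfun K σ z) := bwd_notMem K hK σ hz
  rw [h1, bwd_pow_rS]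

lemma Gfun_iter_notMem {z : Fin n} (hz : z ∉ K) (j : ℕ) : (Gfun K σ)^[j] z ∉ K := by
  induction j with
  | zero => simpa
  | succ j ih => rw [Function.iterate_succ_apply']; exact Gfun_notMem K σ ih

lemma bwd_iter {z : Fin n} (hz : z ∉ K) (j : ℕ) :
    ∃ r, ((bwd K hK σ) ^ r) z = (Gfun K σ)^[j] z := by
  induction j with
  | zero => exact ⟨0, by simp⟩
  | succ j ih =>
    obtain ⟨r, hr⟩ := ih
    obtain ⟨r2, hr2⟩ := bwd_step K hK σ (Gfun_iter_notMem K σ hz j)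
    refine ⟨r2 + r, ?_⟩
    rw [pow_add, Equiv.Perm.mul_apply, hr, Function.iterate_succ_apply', hr2]

lemma Gfun_pow_coe (j : ℕ) (a : Fin Kᶜ.card) :
    (Gfun K σ)^[j] ((eIso K a : Fin n)) = (eIso K ((σ ^ j) a) : Fin n) := by
  induction j with
  | zero => simp
  | succ j ih =>
    rw [Function.iterate_succ_apply', ih, Gfun_coe, pow_succ', Equiv.Perm.mul_apply]

lemma bwd_full (hσfull : IsFullCycle σ) : IsFullCycle (bwd K hK σ) := by
  intro x y
  have hTx := pow_find_rE K hK (bwd K hK σ) (fun k hk => bwd_mem K hK σ hk) x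
  have hrEx : rE K hK x ∉ K := rE_notMem K hK x
  set s0 := rS K hK y with hs0
  have hSy : ((bwd K hK σ) ^ (Nat.find (exS K hK y))) s0 = y := bwd_pow_rS K hK σ y
  set b0 := σ.symm ((eIso K).symm ⟨rE K hK s0, Finset.mem_compl.mpr (rE_notMem K hK s0)⟩) with hb0
  set w : Fin n := (eIso K b0 : Fin n) with hw
  have hwK : w ∉ K := eIso_coe_notMem K b0
  have hbw : (bwd K hK σ) w = s0 := by
    rw [bwd_notMem K hK σ hwK, hw, Gfun_coe, hb0]
    simp only [Equiv.apply_symm_apply, OrderIso.apply_symm_apply]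
    exact rS_rE K hK (rS_sub_one_notMem K hK y)
  set a0 := (eIso K).symm ⟨rE K hK x, Finset.mem_compl.mpr hrEx⟩ with ha0
  obtain ⟨j, hj⟩ := hσfull a0 b0
  have hGj : (Gfun K σ)^[j] (rE K hK x) = w := by
    have hcoe : (eIso K a0 : Fin n) = rE K hK x := by rw [ha0]; simp
    rw [← hcoe, Gfun_pow_coe, hj]
  obtain ⟨r, hr⟩ := bwd_iter K hK σ hrEx j
  refine ⟨Nat.find (exS K hK y) + 1 + r + Nat.find (exE K hK x), ?_⟩
  rw [pow_add, Equiv.Perm.mul_apply, hTx, pow_add, Equiv.Perm.mul_apply, hr, hGj,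
    pow_add, Equiv.Perm.mul_apply, pow_one, hbw, hSy]

end Backward

section Inverse

variable (hK : ∃ y : Fin n, y ∉ K)

lemma bwd_fwd_s12 (τ : Equiv.Perm (Fin n)) (hΘ : ∀ j : Fin n, τ j = j + 1 ↔ j ∈ K) :
    bwd K hK (fwd K hK τ hΘ) = τ := by
  apply Equiv.ext
  intro z
  by_cases hz : z ∈ K
  · rw [bwd_mem K hK _ hz, (hΘ z).mpr hz]
  · set a := (eIso K).symm ⟨z, Finset.mem_compl.mpr hz⟩ with ha
    have hza : (eIso K a : Fin n) = z := by rw [ha]; simp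
    rw [bwd_notMem K hK _ hz, ← hza, Gfun_coe, fwd_apply, fwdFun_coe, hza]
    exact rS_rE K hK (sub_one_notMem K τ hΘ hz)

lemma fwd_bwd_s12 (σ : Equiv.Perm (Fin Kᶜ.card)) (hσ : ∀ a : Fin Kᶜ.card, σ a ≠ cyclicSucc a) :
    fwd K hK (bwd K hK σ) (fun j => bwd_theta K hK σ hσ j) = σ := by
  apply Equiv.ext
  intro a
  have hX : rE K hK ((bwd K hK σ) ((eIso K a : Fin n))) = (eIso K (σ a) : Fin n) := by
    rw [bwd_notMem K hK σ (eIso_coe_notMem K a), Gfun_coe,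
      rE_rS K hK (eIso_coe_notMem K (σ a))]
  rw [fwd_apply, fwdFun]
  have h2 : (⟨rE K hK ((bwd K hK σ) ((eIso K a : Fin n))),
      Finset.mem_compl.mpr (rE_notMem K hK _)⟩ : {x // x ∈ Kᶜ}) = eIso K (σ a) :=
    Subtype.ext hX
  rw [h2]
  simp

lemma theta_iff (τ : Equiv.Perm (Fin n)) :
    ({j : Fin n | τ j = cyclicSucc j} = (K : Set (Fin n))) ↔ ∀ j : Fin n, τ j = j + 1 ↔ j ∈ K := by
  rw [Set.ext_iff]
  apply forall_congr'
  intro j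
  simp [cyclicSucc_eq]

lemma theta_empty_iff {c : ℕ} (σ : Equiv.Perm (Fin c)) :
    ({j : Fin c | σ j = cyclicSucc j} = (∅ : Set (Fin c))) ↔ ∀ a : Fin c, σ a ≠ cyclicSucc a := by
  rw [Set.eq_empty_iff_forall_notMem]
  rfl

include hK in
theorem main_count :
    Set.ncard {τ : Equiv.Perm (Fin n) | IsFullCycle τ ∧
        {j : Fin n | τ j = cyclicSucc j} = (K : Set (Fin n))}
    = Set.ncard {σ : Equiv.Perm (Fin Kᶜ.card) | IsFullCycle σ ∧
        {j : Fin Kᶜ.card | σ j = cyclicSucc j} = (∅ : Set (Fin Kᶜ.card))} := by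
  rw [← Nat.card_coe_set_eq, ← Nat.card_coe_set_eq]
  refine Nat.card_congr ?_
  refine
    { toFun := fun t => ⟨fwd K hK t.1 ((theta_iff K t.1).mp t.2.2),
        fwd_full K hK t.1 ((theta_iff K t.1).mp t.2.2) t.2.1,
        (theta_empty_iff _).mpr (fwd_no_succ K hK t.1 ((theta_iff K t.1).mp t.2.2))⟩
      invFun := fun s => ⟨bwd K hK s.1,
        bwd_full K hK s.1 s.2.1,
        (theta_iff K _).mpr (fun j => bwd_theta K hK s.1 ((theta_empty_iff _).mp s.2.2) j)⟩
      left_inv := fun t => Subtype.ext (bwd_fwd_s12 K hK t.1 ((theta_iff K t.1).mp t.2.2))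
      right_inv := fun s => Subtype.ext (fwd_bwd_s12 K hK s.1 ((theta_empty_iff _).mp s.2.2)) }

end Inverse

end

lemma addRight_one_pow {n : ℕ} [NeZero n] (i : ℕ) (x : Fin n) :
    ((Equiv.addRight (1 : Fin n)) ^ i) x = x + (i : Fin n) := by
  induction i with
  | zero => simp
  | succ i ih =>
    rw [pow_succ', Equiv.Perm.mul_apply, ih]
    show (x + (i : Fin n)) + 1 = x + ((i + 1 : ℕ) : Fin n)
    push_cast; ring

/-- Let `C_n` be the set of `n`-cycles in `S_n` and, for `σ ∈ C_n`, let
`Θ_n(σ) = {j ∈ [n] : σ(j) = j+1 mod n}`.  Then for any `m`-element subset `K ⊆ [n]`,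
`#{τ ∈ C_n : Θ_n(τ) = K} = #{σ ∈ C_{n-m} : Θ_{n-m}(σ) = ∅}`. -/
theorem stmt12 (n m : ℕ) (hm : m ≤ n) (K : Finset (Fin n)) (hcard : K.card = m) :
    Set.ncard {τ : Equiv.Perm (Fin n) | IsFullCycle τ ∧
        {j : Fin n | τ j = cyclicSucc j} = (K : Set (Fin n))}
    =
    Set.ncard {σ : Equiv.Perm (Fin (n - m)) | IsFullCycle σ ∧
        {j : Fin (n - m) | σ j = cyclicSucc j} = ∅} := by
  rcases Nat.eq_zero_or_pos n with hn | hn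
  · subst hn
    have hm0 : m = 0 := by omega
    subst hm0
    have hKe : (K : Set (Fin 0)) = ∅ := by ext x; exact x.elim0
    rw [hKe]
  · haveI : NeZero n := ⟨hn.ne'⟩
    by_cases hmn : m = n
    · subst hmn
      have hKu : K = Finset.univ :=
        Finset.eq_univ_of_card K (by rw [hcard, Fintype.card_fin])
      subst hKu
      have hLHS : {τ : Equiv.Perm (Fin m) | IsFullCycle τ ∧
          {j : Fin m | τ j = cyclicSucc j} = ((Finset.univ : Finset (Fin m)) : Set (Fin m))}
          = {Equiv.addRight (1 : Fin m)} := by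
        ext τ
        simp only [Set.mem_setOf_eq, Set.mem_singleton_iff]
        constructor
        · rintro ⟨-, hΘ⟩
          apply Equiv.ext
          intro j
          exact ((theta_iff Finset.univ τ).mp hΘ j).mpr (Finset.mem_univ j)
        · rintro rfl
          refine ⟨fun x y => ⟨(y - x).val, ?_⟩, ?_⟩
          · rw [addRight_one_pow, Fin.cast_val_eq_self]; ring
          · exact (theta_iff Finset.univ _).mpr
              (fun j => ⟨fun _ => Finset.mem_univ j, fun _ => rfl⟩)
      rw [hLHS, Set.ncard_singleton, Nat.sub_self]
      have hset : {σ : Equiv.Perm (Fin 0) | IsFullCycle σ ∧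
          {j : Fin 0 | σ j = cyclicSucc j} = ∅} = Set.univ := by
        ext σ
        simp only [Set.mem_setOf_eq, Set.mem_univ, iff_true]
        exact ⟨fun x y => x.elim0, Set.eq_empty_of_isEmpty _⟩
      rw [hset, Set.ncard_univ]
      simp [Nat.card_eq_fintype_card]
    · have hcc : Kᶜ.card = n - m := by
        rw [Finset.card_compl, hcard, Fintype.card_fin]
      have hKne : ∃ y : Fin n, y ∉ K := by
        have h : Kᶜ.Nonempty := Finset.card_pos.mp (by rw [hcc]; omega)
        obtain ⟨y, hy⟩ := h
        exact ⟨y, Finset.mem_compl.mp hy⟩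
      rw [← hcc]
      exact main_count K hKne
end
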